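/- arXiv:2206.13149 — 11 statements merged into one kernel-verified Lean document; each statement's English description precedes it below -/
import Mathlib

section
/- Along the system, the squared modulus of C satisfies (d/dt)|C(t)|² = −(3/8 + c²/2)·B·|C(t)|²/(A(t)B − |C(t)|²) for all t ∈ [0,T); in particular t ↦ |C(t)|² is nonincreasing and |C(t)| ≤ |C(0)| for every t ∈ [0,T). -/
open Complex Filter
open scoped ENNReal

/-- Along the pluriclosed-flow ODE system
`A′ = (3/4)(1 + |C|²/(AB − |C|²))`,
`C′ = −(3/16 + c²/4 + i·c/4)·B·C/(AB − |C|²)`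
on `[0,T)` (with `0 < T ≤ ∞`), the squared modulus of `C` satisfies
`(d/dt)|C(t)|² = −(3/8 + c²/2)·B·|C(t)|²/(A(t)B − |C(t)|²)`;
in particular `t ↦ |C(t)|²` is nonincreasing and `|C(t)| ≤ |C(0)|` on `[0,T)`. -/
theorem stmt_0 (B c : ℝ) (hB : 0 < B) (T : ℝ≥0∞) (hT : 0 < T)
    (A : ℝ → ℝ) (C : ℝ → ℂ)
    (S : Set ℝ) (hSdef : S = {t : ℝ | 0 ≤ t ∧ ENNReal.ofReal t < T})
    (hpos : ∀ t ∈ S, 0 < A t * B - ‖C t‖ ^ 2)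
    (hA : ∀ t ∈ S, HasDerivWithinAt A
      ((3 / 4) * (1 + ‖C t‖ ^ 2 / (A t * B - ‖C t‖ ^ 2))) S t)
    (hC : ∀ t ∈ S, HasDerivWithinAt C
      (-(3 / 16 + (c : ℂ) ^ 2 / 4 + Complex.I * (c : ℂ) / 4) * (B : ℂ) * C t /
        ((A t * B - ‖C t‖ ^ 2 : ℝ) : ℂ)) S t) :
    (∀ t ∈ S, HasDerivWithinAt (fun u => ‖C u‖ ^ 2)
      (-(3 / 8 + c ^ 2 / 2) * B * ‖C t‖ ^ 2 /
        (A t * B - ‖C t‖ ^ 2)) S t) ∧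
    (∀ t₁ ∈ S, ∀ t₂ ∈ S, t₁ ≤ t₂ → ‖C t₂‖ ^ 2 ≤ ‖C t₁‖ ^ 2) ∧
    (∀ t ∈ S, ‖C t‖ ≤ ‖C 0‖) := by
  -- derivative of |C|²
  have hderiv : ∀ t ∈ S, HasDerivWithinAt (fun u => ‖C u‖ ^ 2)
      (-(3 / 8 + c ^ 2 / 2) * B * ‖C t‖ ^ 2 /
        (A t * B - ‖C t‖ ^ 2)) S t := by
    intro t ht
    set D : ℝ := A t * B - ‖C t‖ ^ 2 with hDdef
    have hD : 0 < D := hpos t ht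
    set w : ℂ := -(3 / 16 + (c : ℂ) ^ 2 / 4 + Complex.I * (c : ℂ) / 4) * (B : ℂ) * C t /
        ((D : ℝ) : ℂ) with hw
    have hC' : HasDerivWithinAt C w S t := hC t ht
    have hre : HasDerivWithinAt (fun u => (C u).re) w.re S t :=
      Complex.reCLM.hasFDerivAt.comp_hasDerivWithinAt t hC'
    have him : HasDerivWithinAt (fun u => (C u).im) w.im S t :=
      Complex.imCLM.hasFDerivAt.comp_hasDerivWithinAt t hC'
    have hsum : HasDerivWithinAt (fun u => (C u).re ^ 2 + (C u).im ^ 2)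
        ((2 : ℕ) * (C t).re ^ 1 * w.re + (2 : ℕ) * (C t).im ^ 1 * w.im) S t :=
      (hre.pow 2).add (him.pow 2)
    have heq : ∀ u, (C u).re ^ 2 + (C u).im ^ 2 = ‖C u‖ ^ 2 := by
      intro u
      rw [Complex.sq_norm, Complex.normSq_apply]; ring
    have hfun : (fun u => (C u).re ^ 2 + (C u).im ^ 2) = fun u => ‖C u‖ ^ 2 := by
      funext u; exact heq u
    rw [hfun] at hsum
    convert hsum using 1
    have hD0 : D ≠ 0 := hD.ne'
    rw [Complex.sq_norm, Complex.normSq_apply, hw]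
    simp [Complex.div_re, Complex.div_im, Complex.normSq_apply, Complex.normSq_ofReal,
      ← Complex.ofReal_pow]
    field_simp
    ring
  refine ⟨hderiv, ?_⟩
  -- convexity of S
  have hconv : Convex ℝ S := by
    rw [convex_iff_ordConnected]
    constructor
    intro x hx y hy z hz
    rw [hSdef] at hx hy ⊢
    exact ⟨hx.1.trans hz.1, lt_of_le_of_lt (ENNReal.ofReal_le_ofReal hz.2) hy.2⟩
  have hanti : AntitoneOn (fun u => ‖C u‖ ^ 2) S := by
    apply antitoneOn_of_hasDerivWithinAt_nonpos hconv
      (f' := fun t => -(3 / 8 + c ^ 2 / 2) * B * ‖C t‖ ^ 2 /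
        (A t * B - ‖C t‖ ^ 2))
    · intro t ht
      exact (hderiv t ht).continuousWithinAt
    · intro t ht
      exact (hderiv t (interior_subset ht)).mono interior_subset
    · intro t ht
      have ht' := interior_subset ht
      have hD := hpos t ht'
      have h1 : 0 ≤ (3 / 8 + c ^ 2 / 2) * B * ‖C t‖ ^ 2 := by positivity
      have : -(3 / 8 + c ^ 2 / 2) * B * ‖C t‖ ^ 2 ≤ 0 := by nlinarith
      exact div_nonpos_of_nonpos_of_nonneg this hD.le
  have h0S : (0 : ℝ) ∈ S := by
    rw [hSdef]; exact ⟨le_refl 0, by simpa using hT⟩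
  refine ⟨fun t₁ h₁ t₂ h₂ h12 => hanti h₁ h₂ h12, fun t ht => ?_⟩
  have hle : ‖C t‖ ^ 2 ≤ ‖C 0‖ ^ 2 := by
    have h0t : (0 : ℝ) ≤ t := by rw [hSdef] at ht; exact ht.1
    exact hanti h0S ht h0t
  nlinarith [norm_nonneg (C t), norm_nonneg (C 0)]
end

section
/- The function u(t) := A(t)B − |C(t)|² satisfies u′(t) = (3/4)·B + (9/8 + c²/2)·B·|C(t)|²/u(t) for all t ∈ [0,T); in particular u′(t) ≥ (3/4)B, u is nondecreasing, and u(t) ≥ u(0) + (3/4)·B·t for all t ∈ [0,T). -/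
open Complex Filter
open scoped ENNReal

/-- Along the pluriclosed-flow ODE system on `[0,T)`, the function
`u(t) := A(t)B − |C(t)|²` satisfies `u′(t) = (3/4)B + (9/8 + c²/2)·B·|C(t)|²/u(t)`;
in particular `u′(t) ≥ (3/4)B`, `u` is nondecreasing, and
`u(t) ≥ u(0) + (3/4)·B·t` on `[0,T)`. -/
theorem stmt_1 (B c : ℝ) (hB : 0 < B) (T : ℝ≥0∞) (hT : 0 < T)
    (A : ℝ → ℝ) (C : ℝ → ℂ)
    (S : Set ℝ) (hSdef : S = {t : ℝ | 0 ≤ t ∧ ENNReal.ofReal t < T})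
    (hpos : ∀ t ∈ S, 0 < A t * B - ‖C t‖ ^ 2)
    (hA : ∀ t ∈ S, HasDerivWithinAt A
      ((3 / 4) * (1 + ‖C t‖ ^ 2 / (A t * B - ‖C t‖ ^ 2))) S t)
    (hC : ∀ t ∈ S, HasDerivWithinAt C
      (-(3 / 16 + (c : ℂ) ^ 2 / 4 + Complex.I * (c : ℂ) / 4) * (B : ℂ) * C t /
        ((A t * B - ‖C t‖ ^ 2 : ℝ) : ℂ)) S t) :
    (∀ t ∈ S, HasDerivWithinAt (fun u => A u * B - ‖C u‖ ^ 2)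
      ((3 / 4) * B + (9 / 8 + c ^ 2 / 2) * B * ‖C t‖ ^ 2 /
        (A t * B - ‖C t‖ ^ 2)) S t) ∧
    (∀ t ∈ S, (3 / 4) * B ≤
      (3 / 4) * B + (9 / 8 + c ^ 2 / 2) * B * ‖C t‖ ^ 2 /
        (A t * B - ‖C t‖ ^ 2)) ∧
    (∀ t₁ ∈ S, ∀ t₂ ∈ S, t₁ ≤ t₂ →
      A t₁ * B - ‖C t₁‖ ^ 2 ≤ A t₂ * B - ‖C t₂‖ ^ 2) ∧
    (∀ t ∈ S, A 0 * B - ‖C 0‖ ^ 2 + (3 / 4) * B * t ≤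
      A t * B - ‖C t‖ ^ 2) := by
  -- Part 1: the derivative computation.
  have hderiv : ∀ t ∈ S, HasDerivWithinAt (fun u => A u * B - ‖C u‖ ^ 2)
      ((3 / 4) * B + (9 / 8 + c ^ 2 / 2) * B * ‖C t‖ ^ 2 /
        (A t * B - ‖C t‖ ^ 2)) S t := by
    intro t ht
    have hC := hC t ht
    have hA := hA t ht
    set D := -(3 / 16 + (c : ℂ) ^ 2 / 4 + Complex.I * (c : ℂ) / 4) * (B : ℂ) * C t /
          ((A t * B - ‖C t‖ ^ 2 : ℝ) : ℂ) with hD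
    have hre : HasDerivWithinAt (fun s => (C s).re) D.re S t :=
      Complex.reCLM.hasFDerivAt.comp_hasDerivWithinAt t hC
    have him : HasDerivWithinAt (fun s => (C s).im) D.im S t :=
      Complex.imCLM.hasFDerivAt.comp_hasDerivWithinAt t hC
    have habs : ∀ s, ‖C s‖ ^ 2 = (C s).re * (C s).re + (C s).im * (C s).im := by
      intro s; rw [Complex.sq_norm, Complex.normSq_apply]
    have hsq : HasDerivWithinAt (fun s => ‖C s‖ ^ 2)
        (2 * (C t).re * D.re + 2 * (C t).im * D.im) S t := by
      have := ((hre.mul hre).add (him.mul him))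
      simp only [habs]
      exact this.congr_deriv (by ring)
    have := (hA.mul_const B).sub hsq
    refine this.congr_deriv ?_
    set u := A t * B - ‖C t‖ ^ 2 with hu
    have hu0 : u ≠ 0 := ne_of_gt (hpos t ht)
    have hq : ‖C t‖ ^ 2 = (C t).re * (C t).re + (C t).im * (C t).im := habs t
    have hDre : D.re = (-(3/16 + c^2/4) * B * (C t).re + (c/4) * B * (C t).im) / u := by
      rw [hD]
      simp [Complex.div_ofReal_re, ← Complex.ofReal_pow, Complex.mul_re, Complex.mul_im]
      try ring_nf
    have hDim : D.im = (-(3/16 + c^2/4) * B * (C t).im - (c/4) * B * (C t).re) / u := by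
      rw [hD]
      simp [Complex.div_ofReal_im, ← Complex.ofReal_pow, Complex.mul_re, Complex.mul_im]
      try ring_nf
    rw [hDre, hDim, hq]
    field_simp
    ring
  -- Part 2: the lower bound on the derivative.
  have hge : ∀ t ∈ S, (3 / 4) * B ≤
      (3 / 4) * B + (9 / 8 + c ^ 2 / 2) * B * ‖C t‖ ^ 2 /
        (A t * B - ‖C t‖ ^ 2) := by
    intro t ht
    have h1 : (0:ℝ) ≤ (9 / 8 + c ^ 2 / 2) * B * ‖C t‖ ^ 2 /
        (A t * B - ‖C t‖ ^ 2) := by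
      apply div_nonneg
      · positivity
      · exact (hpos t ht).le
    linarith
  have hSconv : Convex ℝ S := by
    rw [convex_iff_ordConnected]
    constructor
    intro x hx z hz y hy
    rw [hSdef] at hx hz ⊢
    exact ⟨le_trans hx.1 hy.1, lt_of_le_of_lt (ENNReal.ofReal_le_ofReal hy.2) hz.2⟩
  -- A general monotonicity helper for functions with nonneg derivative on S.
  have key : ∀ (f f' : ℝ → ℝ), (∀ t ∈ S, HasDerivWithinAt f (f' t) S t) →
      (∀ t ∈ S, 0 ≤ f' t) → MonotoneOn f S := by
    intro f f' hf hf0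
    apply monotoneOn_of_hasDerivWithinAt_nonneg hSconv
    · intro x hx
      exact (hf x hx).continuousWithinAt
    · intro x hx
      exact (hf x (interior_subset hx)).mono interior_subset
    · intro x hx
      exact hf0 x (interior_subset hx)
  have hmono : MonotoneOn (fun u => A u * B - ‖C u‖ ^ 2) S :=
    key _ _ hderiv (fun t ht => le_trans (by positivity) (hge t ht))
  have h0S : (0:ℝ) ∈ S := by
    rw [hSdef]; exact ⟨le_refl 0, by simpa using hT⟩
  refine ⟨hderiv, hge, fun t₁ h₁ t₂ h₂ h12 => hmono h₁ h₂ h12, ?_⟩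
  -- Part 4: linear lower-bound growth, via g t = u t - (3/4) B t monotone.
  have hmono2 : MonotoneOn (fun u => (A u * B - ‖C u‖ ^ 2) - (3/4) * B * u) S := by
    apply key _ (fun t => ((3 / 4) * B + (9 / 8 + c ^ 2 / 2) * B * ‖C t‖ ^ 2 /
        (A t * B - ‖C t‖ ^ 2)) - (3/4) * B)
    · intro t ht
      exact (hderiv t ht).sub (((hasDerivWithinAt_id t S).const_mul ((3/4)*B)).congr_deriv
        (by ring))
    · intro t ht
      linarith [hge t ht]
  intro t ht
  have ht0 : 0 ≤ t := by rw [hSdef] at ht; exact ht.1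
  have := hmono2 h0S ht ht0
  simp only at this
  linarith
end

section
/- For every t ∈ [0,T) one has A′(t) ≤ (3/4)·(1 + |C(0)|²/u(0)), where u(0) = A(0)B − |C(0)|²; consequently A(t) ≤ A(0) + (3/4)·(1 + |C(0)|²/u(0))·t for all t ∈ [0,T). (This a priori bound is what yields long-time existence of the flow.) -/
open Complex Filter
open scoped ENNReal

/-- Along the pluriclosed-flow ODE system on `[0,T)`, the right-hand side of
the equation for `A` is bounded: `A′(t) ≤ (3/4)·(1 + |C(0)|²/u(0))` with
`u(0) = A(0)B − |C(0)|²`; consequently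
`A(t) ≤ A(0) + (3/4)·(1 + |C(0)|²/u(0))·t` for all `t ∈ [0,T)`. -/
theorem stmt_2 (B c : ℝ) (hB : 0 < B) (T : ℝ≥0∞) (hT : 0 < T)
    (A : ℝ → ℝ) (C : ℝ → ℂ)
    (S : Set ℝ) (hSdef : S = {t : ℝ | 0 ≤ t ∧ ENNReal.ofReal t < T})
    (hpos : ∀ t ∈ S, 0 < A t * B - ‖C t‖ ^ 2)
    (hA : ∀ t ∈ S, HasDerivWithinAt A
      ((3 / 4) * (1 + ‖C t‖ ^ 2 / (A t * B - ‖C t‖ ^ 2))) S t)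
    (hC : ∀ t ∈ S, HasDerivWithinAt C
      (-(3 / 16 + (c : ℂ) ^ 2 / 4 + Complex.I * (c : ℂ) / 4) * (B : ℂ) * C t /
        ((A t * B - ‖C t‖ ^ 2 : ℝ) : ℂ)) S t) :
    (∀ t ∈ S, (3 / 4) * (1 + ‖C t‖ ^ 2 / (A t * B - ‖C t‖ ^ 2)) ≤
      (3 / 4) * (1 + ‖C 0‖ ^ 2 / (A 0 * B - ‖C 0‖ ^ 2))) ∧
    (∀ t ∈ S, A t ≤ A 0 +
      (3 / 4) * (1 + ‖C 0‖ ^ 2 / (A 0 * B - ‖C 0‖ ^ 2)) * t) := by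
  -- Notation
  set N : ℝ → ℝ := fun t => ‖C t‖ ^ 2 with hNdef
  set u : ℝ → ℝ := fun t => A t * B - N t with hudef
  have hNnonneg : ∀ t, 0 ≤ N t := fun t => by positivity
  have hupos : ∀ t ∈ S, 0 < u t := hpos
  -- S is convex
  have hSconv : Convex ℝ S := by
    rw [hSdef]
    apply Set.OrdConnected.convex
    constructor
    rintro x ⟨hx0, hxT⟩ y ⟨hy0, hyT⟩ z hz
    exact ⟨le_trans hx0 hz.1, lt_of_le_of_lt (ENNReal.ofReal_le_ofReal hz.2) hyT⟩
  have h0S : (0 : ℝ) ∈ S := by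
    rw [hSdef]; exact ⟨le_refl 0, by simpa using hT⟩
  -- derivative of N
  have hN : ∀ t ∈ S, HasDerivWithinAt N (-((3 / 8 + c ^ 2 / 2) * B * N t / u t)) S t := by
    intro t ht
    have hCt := hC t ht
    have hre : HasDerivWithinAt (fun s => (C s).re)
        ((-(3 / 16 + (c : ℂ) ^ 2 / 4 + Complex.I * (c : ℂ) / 4) * (B : ℂ) * C t /
          ((u t : ℝ) : ℂ)).re) S t :=
      Complex.reCLM.hasFDerivAt.comp_hasDerivWithinAt t hCt
    have him : HasDerivWithinAt (fun s => (C s).im)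
        ((-(3 / 16 + (c : ℂ) ^ 2 / 4 + Complex.I * (c : ℂ) / 4) * (B : ℂ) * C t /
          ((u t : ℝ) : ℂ)).im) S t :=
      Complex.imCLM.hasFDerivAt.comp_hasDerivWithinAt t hCt
    have hsum := (hre.pow 2).add (him.pow 2)
    have hfun : (fun s => (C s).re ^ 2 + (C s).im ^ 2) = N := by
      funext s
      show _ = ‖C s‖ ^ 2
      rw [← Complex.normSq_eq_norm_sq, Complex.normSq_apply]; ring
    rw [show ((fun s => (C s).re) ^ 2 + (fun s => (C s).im) ^ 2) = N from hfun] at hsum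
    refine hsum.congr_deriv ?_
    have hu0 : u t ≠ 0 := (hupos t ht).ne'
    have hNt : N t = (C t).re ^ 2 + (C t).im ^ 2 := by
      show ‖C t‖ ^ 2 = _
      rw [← Complex.normSq_eq_norm_sq, Complex.normSq_apply]; ring
    rw [hNt]
    simp only [Complex.div_re, Complex.div_im, Complex.mul_re, Complex.mul_im,
      Complex.neg_re, Complex.neg_im, Complex.add_re, Complex.add_im, Complex.I_re,
      Complex.I_im, ← Complex.ofReal_pow, Complex.ofReal_re, Complex.ofReal_im,
      Complex.normSq_apply, Complex.div_ofNat_re, Complex.div_ofNat_im]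
    norm_num
    field_simp
    ring
  -- A' is nonneg on S
  have hA'nonneg : ∀ t ∈ S, 0 ≤ (3 / 4) * (1 + N t / u t) := by
    intro t ht
    have := hNnonneg t
    have := hupos t ht
    positivity
  -- u is monotone on S
  have hu' : ∀ t ∈ S, HasDerivWithinAt u
      ((3 / 4) * (1 + N t / u t) * B - -((3 / 8 + c ^ 2 / 2) * B * N t / u t)) S t := by
    intro t ht
    exact ((hA t ht).mul_const B).sub (hN t ht)
  have huMono : MonotoneOn u S := by
    apply monotoneOn_of_hasDerivWithinAt_nonneg hSconv
    · exact fun t ht => (hu' t ht).continuousWithinAt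
    · exact fun t ht => ((hu' t (interior_subset ht)).mono interior_subset)
    · intro t ht
      have htS := interior_subset ht
      have h1 := hA'nonneg t htS
      have h2 : 0 ≤ (3 / 8 + c ^ 2 / 2) * B * N t / u t := by
        have := hNnonneg t; have := hupos t htS; positivity
      have h3 : 0 ≤ (3 / 4) * (1 + N t / u t) * B := mul_nonneg h1 hB.le
      linarith
  -- N is antitone on S
  have hNAnti : AntitoneOn N S := by
    apply antitoneOn_of_hasDerivWithinAt_nonpos hSconv
    · exact fun t ht => (hN t ht).continuousWithinAt
    · exact fun t ht => ((hN t (interior_subset ht)).mono interior_subset)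
    · intro t ht
      have htS := interior_subset ht
      have h2 : 0 ≤ (3 / 8 + c ^ 2 / 2) * B * N t / u t := by
        have := hNnonneg t; have := hupos t htS; positivity
      linarith
  -- the key ratio bound
  have key : ∀ t ∈ S, N t / u t ≤ N 0 / u 0 := by
    intro t ht
    have ht0 : (0 : ℝ) ≤ t := by rw [hSdef] at ht; exact ht.1
    exact div_le_div₀ (hNnonneg 0) (hNAnti h0S ht ht0) (hupos 0 h0S) (huMono h0S ht ht0)
  have first : ∀ t ∈ S, (3 / 4) * (1 + N t / u t) ≤ (3 / 4) * (1 + N 0 / u 0) := by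
    intro t ht
    have := key t ht
    linarith
  refine ⟨first, ?_⟩
  -- the linear bound
  set K : ℝ := (3 / 4) * (1 + N 0 / u 0) with hK
  have hg : ∀ t ∈ S, HasDerivWithinAt (fun s => A 0 + K * s - A s)
      (K - (3 / 4) * (1 + N t / u t)) S t := by
    intro t ht
    have h1 : HasDerivWithinAt (fun s : ℝ => A 0 + K * s) (K * 1) S t :=
      ((hasDerivWithinAt_id t S).const_mul K).const_add (A 0)
    exact (h1.sub (hA t ht)).congr_deriv (by rw [mul_one])
  have hgMono : MonotoneOn (fun s => A 0 + K * s - A s) S := by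
    apply monotoneOn_of_hasDerivWithinAt_nonneg hSconv
    · exact fun t ht => (hg t ht).continuousWithinAt
    · exact fun t ht => ((hg t (interior_subset ht)).mono interior_subset)
    · intro t ht
      have := first t (interior_subset ht)
      linarith
  intro t ht
  have ht0 : (0 : ℝ) ≤ t := by rw [hSdef] at ht; exact ht.1
  have := hgMono h0S ht ht0
  simp only at this
  linarith
end

section
/- For every A₀ ∈ ℝ and C₀ ∈ ℂ with A₀·B − |C₀|² > 0 there exists a unique pair of differentiable functions A : [0,∞) → ℝ and C : [0,∞) → ℂ with A(0) = A₀ and C(0) = C₀, satisfying A(t)·B − |C(t)|² > 0 for all t ≥ 0 and solving the ODE system on all of [0,∞). (The pluriclosed flow starting from a left-invariant pluriclosed metric on an Oeljeklaus-Toma manifold has a long-time solution.) -/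
open Complex Filter Set
namespace OT3

noncomputable def T (p q a k s : ℝ) : ℝ :=
  p / a * (Real.exp (a * s) - 1) + q / k * (Real.exp (-k * s) - 1)

noncomputable def Td (p q a k s : ℝ) : ℝ :=
  p * Real.exp (a * s) - q * Real.exp (-k * s)

lemma T_zero (p q a k : ℝ) : T p q a k 0 = 0 := by simp [T]

lemma Td_zero (p q a k : ℝ) : Td p q a k 0 = p - q := by simp [Td]

lemma hasDerivAt_expc (a s : ℝ) :
    HasDerivAt (fun s : ℝ => Real.exp (a * s)) (a * Real.exp (a * s)) s := by
  simpa [mul_comm] using ((hasDerivAt_id s).const_mul a).exp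

lemma hasDerivAt_T (p q : ℝ) {a k : ℝ} (ha : a ≠ 0) (hk : k ≠ 0) (s : ℝ) :
    HasDerivAt (T p q a k) (Td p q a k s) s := by
  have h1 := ((hasDerivAt_expc a s).sub_const 1).const_mul (p / a)
  have h2 := ((hasDerivAt_expc (-k) s).sub_const 1).const_mul (q / k)
  have h := h1.add h2
  have : T p q a k = fun s =>
      p / a * (Real.exp (a * s) - 1) + q / k * (Real.exp (-k * s) - 1) := rfl
  rw [this]
  refine h.congr_deriv ?_
  unfold Td
  field_simp
  ring

lemma Td_ge {p q a k : ℝ} (hp : 0 ≤ p) (hq : 0 ≤ q) (ha : 0 < a) (hk : 0 < k)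
    {s : ℝ} (hs : 0 ≤ s) : p - q ≤ Td p q a k s := by
  have e1 : (1 : ℝ) ≤ Real.exp (a * s) := Real.one_le_exp (by positivity)
  have e2 : Real.exp (-k * s) ≤ 1 := Real.exp_le_one_iff.2 (by nlinarith)
  unfold Td
  nlinarith

end OT3

namespace OT3

noncomputable def F (p q a k s : ℝ) : ℝ := if s < 0 then (p - q) * s else T p q a k s
noncomputable def Fd (p q a k s : ℝ) : ℝ := if s < 0 then p - q else Td p q a k s

lemma F_zero (p q a k : ℝ) : F p q a k 0 = 0 := by simp [F, T_zero]

lemma Fd_eq_Td {p q a k s : ℝ} (hs : 0 ≤ s) : Fd p q a k s = Td p q a k s :=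
  if_neg (not_lt.2 hs)

lemma Fd_pos {p q a k : ℝ} (hq : 0 ≤ q) (hpq : q < p) (ha : 0 < a) (hk : 0 < k) (s : ℝ) :
    0 < Fd p q a k s := by
  unfold Fd; split
  · linarith
  · have := Td_ge (le_of_lt (hq.trans_lt hpq)) hq ha hk (not_lt.1 ‹_›)
    linarith

lemma hasDerivAt_F {p q a k : ℝ} (ha : 0 < a) (hk : 0 < k) (s : ℝ) :
    HasDerivAt (F p q a k) (Fd p q a k s) s := by
  rcases lt_trichotomy s 0 with hs | rfl | hs
  · have h : HasDerivAt (fun x : ℝ => (p - q) * x) (p - q) s := by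
      simpa using (hasDerivAt_id s).const_mul (p - q)
    rw [Fd, if_pos hs]
    refine h.congr_of_eventuallyEq ?_
    filter_upwards [Iio_mem_nhds hs] with x hx
    exact if_pos hx
  · have h1 : HasDerivWithinAt (F p q a k) (p - q) (Iic 0) 0 := by
      have h : HasDerivAt (fun x : ℝ => (p - q) * x) (p - q) 0 := by
        simpa using (hasDerivAt_id (0 : ℝ)).const_mul (p - q)
      refine h.hasDerivWithinAt.congr (fun x hx => ?_) (by simp [F, T_zero])
      rcases lt_or_eq_of_le (mem_Iic.1 hx) with h' | h'
      · exact if_pos h'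
      · subst h'; simp [F, T_zero]
    have h2 : HasDerivWithinAt (F p q a k) (p - q) (Ici 0) 0 := by
      have h := (hasDerivAt_T p q (ne_of_gt ha) (ne_of_gt hk) 0).hasDerivWithinAt (s := Ici 0)
      rw [Td_zero] at h
      exact h.congr (fun x hx => if_neg (not_lt.2 hx)) (if_neg (lt_irrefl 0))
    have h3 := h1.union h2
    rw [Iic_union_Ici] at h3
    have hFd : Fd p q a k 0 = p - q := by simp [Fd, Td_zero]
    rw [hFd]
    exact hasDerivWithinAt_univ.1 h3
  · rw [Fd_eq_Td hs.le]
    refine (hasDerivAt_T p q (ne_of_gt ha) (ne_of_gt hk) s).congr_of_eventuallyEq ?_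
    filter_upwards [Ioi_mem_nhds hs] with x hx
    exact if_neg (not_lt.2 (le_of_lt hx))

lemma exists_sigma {p q a k : ℝ} (hq : 0 ≤ q) (hpq : q < p) (ha : 0 < a) (hk : 0 < k) :
    ∃ σ : ℝ → ℝ, σ 0 = 0 ∧ (∀ t, 0 ≤ t → 0 ≤ σ t) ∧
      (∀ s, 0 ≤ s → σ (T p q a k s) = s) ∧
      (∀ t, 0 ≤ t → T p q a k (σ t) = t) ∧
      (∀ t, HasDerivAt σ (Fd p q a k (σ t))⁻¹ t) := by
  have hp : 0 < p := hq.trans_lt hpq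
  have hdiff := hasDerivAt_F (p := p) (q := q) ha hk
  have hmono : StrictMono (F p q a k) := by
    apply strictMono_of_deriv_pos
    intro x
    rw [(hdiff x).deriv]
    exact Fd_pos hq hpq ha hk x
  have hcont : Continuous (F p q a k) :=
    continuous_iff_continuousAt.2 fun x => (hdiff x).continuousAt
  have hexp : Tendsto (fun s : ℝ => Real.exp (a * s)) atTop atTop :=
    Real.tendsto_exp_atTop.comp (tendsto_id.const_mul_atTop ha)
  have htop : Tendsto (F p q a k) atTop atTop := by
    have hg : Tendsto (fun s : ℝ => p / a * (Real.exp (a * s) + -1) + -(q / k)) atTop atTop :=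
      tendsto_atTop_add_const_right _ _
        ((tendsto_atTop_add_const_right _ _ hexp).const_mul_atTop (div_pos hp ha))
    refine tendsto_atTop_mono' _ ?_ hg
    filter_upwards [eventually_ge_atTop (0 : ℝ)] with s hs
    have h1 : 0 ≤ q / k * Real.exp (-k * s) :=
      mul_nonneg (div_nonneg hq hk.le) (Real.exp_pos _).le
    have : F p q a k s = T p q a k s := if_neg (not_lt.2 hs)
    rw [this]
    unfold T
    nlinarith
  have hbot : Tendsto (F p q a k) atBot atBot := by
    have hg : Tendsto (fun s : ℝ => (p - q) * s) atBot atBot :=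
      tendsto_id.const_mul_atBot (by linarith)
    refine hg.congr' ?_
    filter_upwards [eventually_lt_atBot (0 : ℝ)] with s hs
    exact (if_pos hs).symm
  have hsurj : Function.Surjective (F p q a k) := hcont.surjective htop hbot
  set e := StrictMono.orderIsoOfSurjective _ hmono hsurj with he
  have hFe : ∀ s, e s = F p q a k s := fun _ => rfl
  have hsymm : ∀ s, e.symm (F p q a k s) = s := fun s =>
    StrictMono.orderIsoOfSurjective_symm_apply_self _ hmono hsurj s
  have h0 : e.symm (0 : ℝ) = 0 := by
    have := hsymm 0; rwa [F_zero] at this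
  have hnn : ∀ t, 0 ≤ t → 0 ≤ e.symm t := by
    intro t ht
    calc (0 : ℝ) = e.symm 0 := h0.symm
      _ ≤ e.symm t := e.symm.monotone ht
  refine ⟨fun t => e.symm t, h0, hnn, ?_, ?_, ?_⟩
  · intro s hs
    have hTF : T p q a k s = F p q a k s := (if_neg (not_lt.2 hs)).symm
    rw [hTF]; exact hsymm s
  · intro t ht
    have h1 := e.apply_symm_apply t
    rw [hFe] at h1
    rw [show T p q a k (e.symm t) = F p q a k (e.symm t) from
      (if_neg (not_lt.2 (hnn t ht))).symm]
    exact h1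
  · intro t
    refine HasDerivAt.of_local_left_inverse (e.symm.continuous.continuousAt)
      (hdiff _) (ne_of_gt (Fd_pos hq hpq ha hk _)) ?_
    filter_upwards with y
    have := e.apply_symm_apply y
    rwa [hFe] at this

end OT3

namespace OT3

lemma eq_init {E : Type*} [NormedAddCommGroup E] [NormedSpace ℝ E] {f : ℝ → E}
    (hf : ∀ t ∈ Set.Ici (0:ℝ), HasDerivWithinAt f 0 (Set.Ici 0) t) {t : ℝ} (ht : 0 ≤ t) :
    f t = f 0 := by
  have hcont : ContinuousOn f (Icc 0 t) := fun x hx =>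
    ((hf x hx.1).continuousWithinAt).mono (fun y hy => hy.1)
  exact constant_of_has_deriv_right_zero hcont
    (fun x hx => (hf x hx.1).mono (Ici_subset_Ici.2 hx.1)) t ⟨ht, le_refl t⟩

lemma nonneg_of_pos_deriv {f d : ℝ → ℝ}
    (hf : ∀ t ∈ Set.Ici (0:ℝ), HasDerivWithinAt f (d t) (Set.Ici 0) t)
    (hd : ∀ t ∈ Set.Ici (0:ℝ), 0 < d t) (hf0 : f 0 = 0) {t : ℝ} (ht : 0 ≤ t) :
    0 ≤ f t := by
  have hmono : StrictMonoOn f (Ici 0) := by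
    apply strictMonoOn_of_deriv_pos (convex_Ici 0)
    · exact fun x hx => (hf x hx).continuousWithinAt
    · intro x hx
      rw [interior_Ici] at hx
      have h := (hf x (mem_Ici.2 (le_of_lt hx))).hasDerivAt (Ici_mem_nhds hx)
      rw [h.deriv]
      exact hd x (mem_Ici.2 (le_of_lt hx))
  rcases eq_or_lt_of_le ht with h | h
  · rw [← h, hf0]
  · have := hmono self_mem_Ici (mem_Ici.2 ht) h
    rw [hf0] at this
    exact this.le

end OT3

lemma OT3.alg1 {A₀ B a e1 e2 u : ℝ} (haB : a = 3 * B / 4)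
    (hDne : A₀ * e1 * B - u * e2 ≠ 0) :
    A₀ * (a * e1) * (A₀ * e1 * B - u * e2)⁻¹
      = 3 / 4 * (1 + u * e2 / (A₀ * e1 * B - u * e2)) := by
  subst haB
  have h : (1:ℝ) + u * e2 / (A₀ * e1 * B - u * e2) = (A₀ * e1 * B) / (A₀ * e1 * B - u * e2) := by
    field_simp; ring
  rw [h, div_eq_mul_inv]
  ring

open OT3 in
/-- For every initial datum `A₀ ∈ ℝ`, `C₀ ∈ ℂ` with `A₀B − |C₀|² > 0`, the
pluriclosed-flow ODE system has a unique solution `(A, C)` on all of `[0,∞)` with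
`A(0) = A₀`, `C(0) = C₀` and `A(t)B − |C(t)|² > 0` for all `t ≥ 0`
(long-time existence of the pluriclosed flow on Oeljeklaus-Toma manifolds). -/
theorem stmt_3 (B c : ℝ) (hB : 0 < B) (A₀ : ℝ) (C₀ : ℂ)
    (h₀ : 0 < A₀ * B - ‖C₀‖ ^ 2) :
    ∃ A : ℝ → ℝ, ∃ C : ℝ → ℂ,
      (A 0 = A₀ ∧ C 0 = C₀ ∧
        (∀ t ∈ Set.Ici (0 : ℝ), 0 < A t * B - ‖C t‖ ^ 2) ∧
        (∀ t ∈ Set.Ici (0 : ℝ), HasDerivWithinAt A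
          ((3 / 4) * (1 + ‖C t‖ ^ 2 / (A t * B - ‖C t‖ ^ 2)))
          (Set.Ici 0) t) ∧
        (∀ t ∈ Set.Ici (0 : ℝ), HasDerivWithinAt C
          (-(3 / 16 + (c : ℂ) ^ 2 / 4 + Complex.I * (c : ℂ) / 4) * (B : ℂ) * C t /
            ((A t * B - ‖C t‖ ^ 2 : ℝ) : ℂ)) (Set.Ici 0) t)) ∧
      (∀ A' : ℝ → ℝ, ∀ C' : ℝ → ℂ,
        (A' 0 = A₀ ∧ C' 0 = C₀ ∧
          (∀ t ∈ Set.Ici (0 : ℝ), 0 < A' t * B - ‖C' t‖ ^ 2) ∧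
          (∀ t ∈ Set.Ici (0 : ℝ), HasDerivWithinAt A'
            ((3 / 4) * (1 + ‖C' t‖ ^ 2 / (A' t * B - ‖C' t‖ ^ 2)))
            (Set.Ici 0) t) ∧
          (∀ t ∈ Set.Ici (0 : ℝ), HasDerivWithinAt C'
            (-(3 / 16 + (c : ℂ) ^ 2 / 4 + Complex.I * (c : ℂ) / 4) * (B : ℂ) * C' t /
              ((A' t * B - ‖C' t‖ ^ 2 : ℝ) : ℂ)) (Set.Ici 0) t)) →
        ∀ t ∈ Set.Ici (0 : ℝ), A' t = A t ∧ C' t = C t) := by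
  obtain ⟨u₀, hu₀⟩ : ∃ x : ℝ, x = ‖C₀‖ ^ 2 := ⟨_, rfl⟩
  obtain ⟨p, hp⟩ : ∃ x : ℝ, x = A₀ * B := ⟨_, rfl⟩
  obtain ⟨a, ha⟩ : ∃ x : ℝ, x = 3 * B / 4 := ⟨_, rfl⟩
  obtain ⟨k, hk⟩ : ∃ x : ℝ, x = (3 / 8 + c ^ 2 / 2) * B := ⟨_, rfl⟩
  obtain ⟨lam, hlam⟩ : ∃ x : ℂ,
      x = (((3 / 16 + c ^ 2 / 4) * B : ℝ) : ℂ) + Complex.I * ((c / 4 * B : ℝ) : ℂ) := ⟨_, rfl⟩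
  have hq : 0 ≤ u₀ := by rw [hu₀]; positivity
  have hpq : u₀ < p := by rw [hu₀, hp]; linarith [h₀]
  have hagt : 0 < a := by rw [ha]; linarith
  have hkgt : 0 < k := by rw [hk]; exact mul_pos (by positivity) hB
  have hA₀ : 0 < A₀ := by nlinarith [sq_nonneg (‖C₀‖)]
  have hlamB : -(3 / 16 + (c : ℂ) ^ 2 / 4 + Complex.I * (c : ℂ) / 4) * (B : ℂ) = -lam := by
    rw [hlam]; push_cast; ring
  have habs : ∀ x : ℝ, ‖C₀ * Complex.exp (-lam * (x : ℂ))‖ ^ 2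
      = u₀ * Real.exp (-k * x) := by
    intro x
    have hre : (-lam * (x : ℂ)).re = -((3 / 16 + c ^ 2 / 4) * B * x) := by
      rw [hlam]
      simp only [neg_mul, Complex.neg_re, Complex.mul_re, Complex.add_re, Complex.ofReal_re,
        Complex.add_im, Complex.ofReal_im, Complex.mul_im, Complex.I_re, Complex.I_im]
      ring
    rw [norm_mul, mul_pow, Complex.norm_exp, hre, sq (Real.exp _), ← Real.exp_add, hu₀, hk]
    congr 1
    ring
  obtain ⟨σ, hσ0, hσnn, hσT, hTσ, hσd⟩ := exists_sigma hq hpq hagt hkgt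
  have hTdpos : ∀ s : ℝ, 0 ≤ s → 0 < Td p u₀ a k s := fun s hs =>
    lt_of_lt_of_le (by linarith) (Td_ge (le_of_lt (hq.trans_lt hpq)) hq hagt hkgt hs)
  have hD2 : ∀ x : ℝ, A₀ * Real.exp (a * x) * B - u₀ * Real.exp (-k * x) = Td p u₀ a k x := by
    intro x; rw [Td, hp]; ring
  refine ⟨fun t => A₀ * Real.exp (a * σ t), fun t => C₀ * Complex.exp (-lam * (σ t : ℂ)),
    ⟨?_, ?_, ?_, ?_, ?_⟩, ?_⟩
  · simp [hσ0]
  · simp [hσ0]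
  · intro t ht
    show 0 < A₀ * Real.exp (a * σ t) * B
        - ‖C₀ * Complex.exp (-lam * (σ t : ℂ))‖ ^ 2
    rw [habs, hD2]
    exact hTdpos _ (hσnn t ht)
  · intro t ht
    have hσd' : HasDerivAt σ (Td p u₀ a k (σ t))⁻¹ t := by
      have h := hσd t; rwa [Fd_eq_Td (hσnn t ht)] at h
    have hg : HasDerivAt (fun s : ℝ => A₀ * Real.exp (a * s)) (A₀ * (a * Real.exp (a * σ t)))
        (σ t) := (hasDerivAt_expc a (σ t)).const_mul A₀
    have hcomp := (hg.comp t hσd').hasDerivWithinAt (s := Set.Ici 0)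
    have heq : A₀ * (a * Real.exp (a * σ t)) * (Td p u₀ a k (σ t))⁻¹
        = 3 / 4 * (1 + u₀ * Real.exp (-k * σ t) / (A₀ * Real.exp (a * σ t) * B
            - u₀ * Real.exp (-k * σ t))) := by
      have hDne : A₀ * Real.exp (a * σ t) * B - u₀ * Real.exp (-k * σ t) ≠ 0 := by
        rw [hD2]; exact ne_of_gt (hTdpos _ (hσnn t ht))
      rw [← hD2]
      exact OT3.alg1 ha hDne
    show HasDerivWithinAt (fun t => A₀ * Real.exp (a * σ t))
      (3 / 4 * (1 + ‖C₀ * Complex.exp (-lam * (σ t : ℂ))‖ ^ 2 /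
        (A₀ * Real.exp (a * σ t) * B - ‖C₀ * Complex.exp (-lam * (σ t : ℂ))‖ ^ 2)))
      (Set.Ici 0) t
    rw [habs, ← heq]
    exact hcomp
  · intro t ht
    have hσd' : HasDerivAt σ (Td p u₀ a k (σ t))⁻¹ t := by
      have h := hσd t; rwa [Fd_eq_Td (hσnn t ht)] at h
    have hgz : HasDerivAt (fun z : ℂ => C₀ * Complex.exp (-lam * z))
        (C₀ * (Complex.exp (-lam * (σ t : ℂ)) * -lam)) ((σ t : ℂ)) := by
      simpa using (((hasDerivAt_id ((σ t : ℂ))).const_mul (-lam)).cexp.const_mul C₀)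
    have hg : HasDerivAt (fun s : ℝ => C₀ * Complex.exp (-lam * (s : ℂ)))
        (C₀ * (Complex.exp (-lam * (σ t : ℂ)) * -lam)) (σ t) := hgz.comp_ofReal
    have hcomp := (hg.scomp t hσd').hasDerivWithinAt (s := Set.Ici 0)
    have heq : ((Td p u₀ a k (σ t))⁻¹ : ℝ) • (C₀ * (Complex.exp (-lam * (σ t : ℂ)) * -lam))
        = -lam * (C₀ * Complex.exp (-lam * (σ t : ℂ))) / ((Td p u₀ a k (σ t) : ℝ) : ℂ) := by
      rw [Complex.real_smul, Complex.ofReal_inv, div_eq_mul_inv]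
      ring
    show HasDerivWithinAt (fun t => C₀ * Complex.exp (-lam * (σ t : ℂ)))
      (-(3 / 16 + (c : ℂ) ^ 2 / 4 + Complex.I * (c : ℂ) / 4) * (B : ℂ)
        * (C₀ * Complex.exp (-lam * (σ t : ℂ))) /
        ((A₀ * Real.exp (a * σ t) * B
          - ‖C₀ * Complex.exp (-lam * (σ t : ℂ))‖ ^ 2 : ℝ) : ℂ))
      (Set.Ici 0) t
    rw [habs, hD2, hlamB, ← heq]
    exact hcomp
  · rintro A' C' ⟨hA'0, hC'0, hD'p, hA'd, hC'd⟩
    have hA'pos : ∀ t ∈ Set.Ici (0 : ℝ), 0 < A' t := by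
      intro t ht
      have h1 := hD'p t ht
      nlinarith [sq_nonneg (‖C' t‖)]
    -- the reparametrization along the given solution
    have hsd : ∀ t ∈ Set.Ici (0 : ℝ), HasDerivWithinAt (fun t => a⁻¹ * Real.log (A' t / A₀))
        ((A' t * B - ‖C' t‖ ^ 2)⁻¹) (Set.Ici 0) t := by
      intro t ht
      have hApos := hA'pos t ht
      have hDpos := hD'p t ht
      have h1 := (hA'd t ht).div_const A₀
      have h2 := (h1.log (ne_of_gt (div_pos hApos hA₀))).const_mul a⁻¹
      refine h2.congr_deriv ?_
      have hDne := ne_of_gt hDpos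
      field_simp [hDne, ne_of_gt hApos, ne_of_gt hA₀]
      rw [ha]
      ring
    have hs0 : a⁻¹ * Real.log (A' 0 / A₀) = 0 := by
      rw [hA'0, div_self (ne_of_gt hA₀), Real.log_one, mul_zero]
    have hexp' : ∀ t ∈ Set.Ici (0 : ℝ),
        A' t = A₀ * Real.exp (a * (a⁻¹ * Real.log (A' t / A₀))) := by
      intro t ht
      have hApos := hA'pos t ht
      have h1 : a * (a⁻¹ * Real.log (A' t / A₀)) = Real.log (A' t / A₀) := by
        field_simp
      rw [h1, Real.exp_log (div_pos hApos hA₀)]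
      field_simp
    have hkey : ∀ t ∈ Set.Ici (0 : ℝ),
        C' t = C₀ * Complex.exp (-lam * ((a⁻¹ * Real.log (A' t / A₀) : ℝ) : ℂ)) := by
      intro t ht
      have hconst : (fun t => C' t
            * Complex.exp (lam * ((a⁻¹ * Real.log (A' t / A₀) : ℝ) : ℂ))) t
          = (fun t => C' t * Complex.exp (lam * ((a⁻¹ * Real.log (A' t / A₀) : ℝ) : ℂ))) 0 := by
        refine eq_init (f := fun t => C' t
            * Complex.exp (lam * ((a⁻¹ * Real.log (A' t / A₀) : ℝ) : ℂ))) (fun x hx => ?_) ht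
        have hDpos := hD'p x hx
        have hDne : ((A' x * B - ‖C' x‖ ^ 2 : ℝ) : ℂ) ≠ 0 :=
          Complex.ofReal_ne_zero.2 (ne_of_gt hDpos)
        have hgz : HasDerivAt (fun z : ℂ => Complex.exp (lam * z))
            (Complex.exp (lam * ((a⁻¹ * Real.log (A' x / A₀) : ℝ) : ℂ)) * lam)
            ((a⁻¹ * Real.log (A' x / A₀) : ℝ) : ℂ) := by
          simpa using ((hasDerivAt_id (((a⁻¹ * Real.log (A' x / A₀) : ℝ) : ℂ))).const_mul
            lam).cexp
        have hscomp := (hgz.comp_ofReal).scomp_hasDerivWithinAt_of_eq x (hsd x hx) rfl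
        have hmul := (hC'd x hx).mul hscomp
        refine hmul.congr_deriv ?_
        simp only [Function.comp_apply]
        rw [hlamB, Complex.real_smul, Complex.ofReal_inv, div_eq_mul_inv]
        ring
      have h0 : C' 0 * Complex.exp (lam * ((a⁻¹ * Real.log (A' 0 / A₀) : ℝ) : ℂ)) = C₀ := by
        rw [hs0, hC'0]; simp
      have hconst' : C' t * Complex.exp (lam * ((a⁻¹ * Real.log (A' t / A₀) : ℝ) : ℂ)) = C₀ :=
        hconst.trans h0
      have hEne : Complex.exp (lam * ((a⁻¹ * Real.log (A' t / A₀) : ℝ) : ℂ)) ≠ 0 :=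
        Complex.exp_ne_zero _
      have h2 : C' t = C₀ * (Complex.exp (lam * ((a⁻¹ * Real.log (A' t / A₀) : ℝ) : ℂ)))⁻¹ := by
        rw [← hconst']
        field_simp
      rw [h2, neg_mul, Complex.exp_neg]
    have habs' : ∀ t ∈ Set.Ici (0 : ℝ), ‖C' t‖ ^ 2
        = u₀ * Real.exp (-k * (a⁻¹ * Real.log (A' t / A₀))) := by
      intro t ht
      rw [hkey t ht]
      exact habs _
    have hDeq : ∀ t ∈ Set.Ici (0 : ℝ), A' t * B - ‖C' t‖ ^ 2
        = Td p u₀ a k (a⁻¹ * Real.log (A' t / A₀)) := by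
      intro t ht
      rw [habs' t ht]
      nth_rewrite 1 [hexp' t ht]
      exact hD2 _
    have hsnn : ∀ t ∈ Set.Ici (0 : ℝ), 0 ≤ a⁻¹ * Real.log (A' t / A₀) := by
      intro t ht
      exact nonneg_of_pos_deriv hsd (fun x hx => inv_pos.2 (hD'p x hx)) hs0 ht
    have hTs : ∀ t ∈ Set.Ici (0 : ℝ), T p u₀ a k (a⁻¹ * Real.log (A' t / A₀)) = t := by
      intro t ht
      have hconst : (fun t => T p u₀ a k (a⁻¹ * Real.log (A' t / A₀)) - t) t
          = (fun t => T p u₀ a k (a⁻¹ * Real.log (A' t / A₀)) - t) 0 := by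
        refine eq_init (f := fun t => T p u₀ a k (a⁻¹ * Real.log (A' t / A₀)) - t)
          (fun x hx => ?_) ht
        have h1 := (hasDerivAt_T p u₀ (ne_of_gt hagt) (ne_of_gt hkgt)
          (a⁻¹ * Real.log (A' x / A₀))).comp_hasDerivWithinAt_of_eq x (hsd x hx) rfl
        have h2 := h1.sub (hasDerivWithinAt_id x (Set.Ici 0))
        refine h2.congr_deriv ?_
        rw [← hDeq x hx]
        field_simp [ne_of_gt (hD'p x hx)]
        norm_num
      have hconst' : T p u₀ a k (a⁻¹ * Real.log (A' t / A₀)) - t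
          = T p u₀ a k (a⁻¹ * Real.log (A' 0 / A₀)) - 0 := hconst
      rw [hs0, T_zero] at hconst'
      linarith [hconst']
    intro t ht
    have hst : a⁻¹ * Real.log (A' t / A₀) = σ t := by
      rw [← hσT (a⁻¹ * Real.log (A' t / A₀)) (hsnn t ht), hTs t ht]
    constructor
    · rw [hexp' t ht, hst]
    · rw [hkey t ht, hst]
end

section
/- If the solution is defined on all of [0,∞) (i.e. T = ∞), then |C(t)|²/(A(t)B − |C(t)|²) → 0 as t → ∞. -/
open Complex Filter

lemma aux_re (c B d : ℝ) (hd : d ≠ 0) (w : ℂ) :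
    w.re * (-(3/16 + (c:ℂ)^2/4 + Complex.I*(c:ℂ)/4) * (B:ℂ) * w / ((d:ℝ):ℂ)).re
    + w.im * (-(3/16 + (c:ℂ)^2/4 + Complex.I*(c:ℂ)/4) * (B:ℂ) * w / ((d:ℝ):ℂ)).im
    = -((3/16 + c^2/4) * B * Complex.normSq w / d) := by
  set v : ℂ := -(3/16 + (c:ℂ)^2/4 + Complex.I*(c:ℂ)/4) * (B:ℂ) * w / ((d:ℝ):ℂ) with hv
  have h1 : w.re * v.re + w.im * v.im = ((starRingEnd ℂ) w * v).re := by
    simp [Complex.mul_re]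
  have hdC : ((d:ℝ):ℂ) ≠ 0 := by exact_mod_cast Complex.ofReal_ne_zero.mpr hd
  have h2 : (starRingEnd ℂ) w * v
      = (((-(3/16 + c^2/4) * B * Complex.normSq w / d : ℝ)):ℂ)
        + Complex.I * (((-(c/4) * B * Complex.normSq w / d : ℝ)):ℂ) := by
    rw [hv]
    rw [show (starRingEnd ℂ) w * (-(3/16 + (c:ℂ)^2/4 + Complex.I*(c:ℂ)/4) * (B:ℂ) * w / ((d:ℝ):ℂ))
      = -(3/16 + (c:ℂ)^2/4 + Complex.I*(c:ℂ)/4) * (B:ℂ) * (w * (starRingEnd ℂ) w) / ((d:ℝ):ℂ)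
      by ring, Complex.mul_conj]
    push_cast
    field_simp
    ring
  rw [h1, h2]
  simp [← Complex.ofReal_pow]
  ring

/-- If the solution of the pluriclosed-flow ODE system is defined on all of
`[0,∞)` (i.e. `T = ∞`), then `|C(t)|²/(A(t)B − |C(t)|²) → 0` as `t → ∞`. -/
theorem stmt_4 (B c : ℝ) (hB : 0 < B)
    (A : ℝ → ℝ) (C : ℝ → ℂ)
    (hpos : ∀ t ∈ Set.Ici (0 : ℝ), 0 < A t * B - ‖C t‖ ^ 2)
    (hA : ∀ t ∈ Set.Ici (0 : ℝ), HasDerivWithinAt A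
      ((3 / 4) * (1 + ‖C t‖ ^ 2 / (A t * B - ‖C t‖ ^ 2)))
      (Set.Ici 0) t)
    (hC : ∀ t ∈ Set.Ici (0 : ℝ), HasDerivWithinAt C
      (-(3 / 16 + (c : ℂ) ^ 2 / 4 + Complex.I * (c : ℂ) / 4) * (B : ℂ) * C t /
        ((A t * B - ‖C t‖ ^ 2 : ℝ) : ℂ)) (Set.Ici 0) t) :
    Tendsto (fun t => ‖C t‖ ^ 2 / (A t * B - ‖C t‖ ^ 2))
      atTop (nhds 0) := by
  set f : ℝ → ℝ := fun t => ‖C t‖ ^ 2 with hfdef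
  set d : ℝ → ℝ := fun t => A t * B - f t with hddef
  have hf_nonneg : ∀ t, 0 ≤ f t := fun t => by positivity
  have hfeq : ∀ t, f t = Complex.normSq (C t) := fun t => Complex.sq_norm (C t)
  have hdeq : ∀ t, d t = A t * B - ‖C t‖ ^ 2 := fun t => rfl
  -- derivative of f
  have hf_deriv : ∀ t ∈ Set.Ici (0:ℝ),
      HasDerivWithinAt f (2 * -((3/16 + c^2/4) * B * f t / d t)) (Set.Ici 0) t := by
    intro t ht
    set v : ℂ := -(3 / 16 + (c : ℂ) ^ 2 / 4 + Complex.I * (c : ℂ) / 4) * (B : ℂ) * C t /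
        ((A t * B - ‖C t‖ ^ 2 : ℝ) : ℂ) with hvdef
    have hre : HasDerivWithinAt (fun s => (C s).re) v.re (Set.Ici 0) t :=
      (Complex.reCLM.hasFDerivAt.comp_hasDerivWithinAt t (hC t ht))
    have him : HasDerivWithinAt (fun s => (C s).im) v.im (Set.Ici 0) t :=
      (Complex.imCLM.hasFDerivAt.comp_hasDerivWithinAt t (hC t ht))
    have key : HasDerivWithinAt (fun s => (C s).re * (C s).re + (C s).im * (C s).im)
        ((v.re * (C t).re + (C t).re * v.re) + (v.im * (C t).im + (C t).im * v.im))
        (Set.Ici 0) t := (hre.mul hre).add (him.mul him)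
    have hfun : f = fun s => (C s).re * (C s).re + (C s).im * (C s).im := by
      funext s; rw [hfeq s, Complex.normSq_apply]
    have hdne : (A t * B - ‖C t‖ ^ 2) ≠ 0 := (hpos t ht).ne'
    have key' : HasDerivWithinAt f
        ((v.re * (C t).re + (C t).re * v.re) + (v.im * (C t).im + (C t).im * v.im))
        (Set.Ici 0) t := by rw [hfun]; exact key
    have hval : (v.re * (C t).re + (C t).re * v.re) + (v.im * (C t).im + (C t).im * v.im)
        = 2 * -((3/16 + c^2/4) * B * f t / d t) := by
      have h := aux_re c B (A t * B - ‖C t‖ ^ 2) hdne (C t)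
      rw [hvdef, hdeq t, hfeq t]
      linear_combination 2 * h
    rw [← hval]
    exact key'
  have hd_pos : ∀ t ∈ Set.Ici (0:ℝ), 0 < d t := hpos
  -- f is antitone on [0,∞)
  have hf_anti : AntitoneOn f (Set.Ici 0) := by
    apply antitoneOn_of_hasDerivWithinAt_nonpos (convex_Ici 0)
    · intro t ht
      exact (hf_deriv t ht).continuousWithinAt
    · intro t ht
      rw [interior_Ici] at ht ⊢
      exact (hf_deriv t (Set.Ioi_subset_Ici_self ht)).mono Set.Ioi_subset_Ici_self
    · intro t ht
      rw [interior_Ici] at ht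
      have h1 : 0 ≤ (3/16 + c^2/4) * B * f t / d t := by
        apply div_nonneg _ (hd_pos t (Set.Ioi_subset_Ici_self ht)).le
        positivity
      linarith
  -- A grows at least linearly
  have hAd : ∀ t ∈ Set.Ici (0:ℝ), HasDerivWithinAt (fun t => A t - 3/4 * t)
      ((3 / 4) * (1 + f t / d t) - 3/4) (Set.Ici 0) t := by
    intro t ht
    have h := (hA t ht).sub (((hasDerivAt_id t).const_mul ((3:ℝ)/4)).hasDerivWithinAt)
    have h2 : (3:ℝ) / 4 * (1 + ‖C t‖ ^ 2 / (A t * B - ‖C t‖ ^ 2))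
        - 3/4 * 1 = (3 / 4) * (1 + f t / d t) - 3/4 := by
      rw [hfeq t, hdeq t, ← hfeq t]; ring
    rw [← h2]
    exact h
  have hA_mono : MonotoneOn (fun t => A t - 3/4 * t) (Set.Ici 0) := by
    apply monotoneOn_of_hasDerivWithinAt_nonneg (convex_Ici 0)
      (f' := fun t => (3 / 4) * (1 + f t / d t) - 3/4)
    · intro t ht
      exact (hAd t ht).continuousWithinAt
    · intro t ht
      rw [interior_Ici] at ht ⊢
      exact (hAd t (Set.Ioi_subset_Ici_self ht)).mono Set.Ioi_subset_Ici_self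
    · intro t ht
      rw [interior_Ici] at ht
      have h1 : 0 ≤ f t / d t := div_nonneg (hf_nonneg t) (hd_pos t (Set.Ioi_subset_Ici_self ht)).le
      nlinarith
  have hA_lb : ∀ t ∈ Set.Ici (0:ℝ), A 0 + 3/4 * t ≤ A t := by
    intro t ht
    have := hA_mono (Set.self_mem_Ici) ht ht
    simp only at this
    linarith
  have hf_ub : ∀ t ∈ Set.Ici (0:ℝ), f t ≤ f 0 := fun t ht =>
    hf_anti Set.self_mem_Ici ht ht
  -- lower bound for d
  set L : ℝ → ℝ := fun t => (A 0 + 3/4 * t) * B - f 0 with hLdef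
  have hL_le : ∀ t ∈ Set.Ici (0:ℝ), L t ≤ d t := by
    intro t ht
    have h1 := hA_lb t ht
    have h2 := hf_ub t ht
    have h3 : (A 0 + 3/4*t) * B ≤ A t * B := by nlinarith
    show (A 0 + 3/4*t) * B - f 0 ≤ A t * B - f t
    linarith
  have hL_top : Tendsto L atTop atTop := by
    have h1 : Tendsto (fun t : ℝ => 3/4 * t) atTop atTop :=
      tendsto_id.const_mul_atTop (by norm_num)
    have h2 : Tendsto (fun t : ℝ => A 0 + 3/4 * t) atTop atTop :=
      tendsto_atTop_add_const_left _ _ h1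
    have h3 : Tendsto (fun t : ℝ => (A 0 + 3/4 * t) * B) atTop atTop :=
      h2.atTop_mul_const hB
    simpa [hLdef, sub_eq_add_neg] using tendsto_atTop_add_const_right atTop (-(f 0)) h3
  -- squeeze
  show Tendsto (fun t => f t / d t) atTop (nhds 0)
  have hL_pos : ∀ᶠ t in atTop, 0 < L t := hL_top.eventually_gt_atTop 0
  apply squeeze_zero'
  · filter_upwards [eventually_ge_atTop (0:ℝ)] with t ht
    exact div_nonneg (hf_nonneg t) (hd_pos t ht).le
  · filter_upwards [eventually_ge_atTop (0:ℝ), hL_pos] with t ht hLt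
    exact div_le_div₀ (hf_nonneg 0) (hf_ub t ht) hLt (hL_le t ht)
  · exact tendsto_const_nhds.div_atTop hL_top
end

section
/- If the solution is defined on all of [0,∞) (i.e. T = ∞), then A(t)/(1+t) → 3/4 and C(t)/(1+t) → 0 as t → ∞; in particular A(t) is asymptotic to (3/4)·t. (This gives the normalized convergence ω_t/(1+t) → 3ω_∞ of the pluriclosed flow on an Oeljeklaus-Toma manifold.) -/
open Complex Filter

private lemma key_calc (c B d : ℝ) (hd : d ≠ 0) (z : ℂ) :
    2 * z.re ^ 1 * ((-(3/16 + (c:ℂ)^2/4 + Complex.I*(c:ℂ)/4) * (B:ℂ) * z / ((d:ℝ):ℂ)).re)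
    + 2 * z.im ^ 1 * ((-(3/16 + (c:ℂ)^2/4 + Complex.I*(c:ℂ)/4) * (B:ℂ) * z / ((d:ℝ):ℂ)).im)
    = -2*(3/16+c^2/4)*B/d*(z.re^2+z.im^2) := by
  simp only [Complex.div_re, Complex.div_im, Complex.normSq_apply, Complex.mul_re,
    Complex.mul_im, Complex.add_re, Complex.add_im, Complex.neg_re, Complex.neg_im,
    Complex.I_re, Complex.I_im, Complex.ofReal_re, Complex.ofReal_im, pow_one,
    Complex.re_ofNat, Complex.im_ofNat,
    ← Complex.ofReal_pow]
  field_simp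
  ring

private lemma aux_tendsto (a b : ℝ) :
    Tendsto (fun t : ℝ => (a + b * t) / (1 + t)) atTop (nhds b) := by
  have h1 : Tendsto (fun t : ℝ => 1 + t) atTop atTop :=
    tendsto_atTop_add_const_left _ _ tendsto_id
  have h2 : Tendsto (fun t : ℝ => b + (a - b) / (1 + t)) atTop (nhds (b + 0)) :=
    tendsto_const_nhds.add (tendsto_const_nhds.div_atTop h1)
  rw [add_zero] at h2
  refine h2.congr' ?_
  filter_upwards [eventually_gt_atTop (0 : ℝ)] with t ht
  have : (1 : ℝ) + t ≠ 0 := by positivity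
  field_simp
  ring

/-- If the solution of the pluriclosed-flow ODE system is defined on all of
`[0,∞)` (i.e. `T = ∞`), then `A(t)/(1+t) → 3/4` and `C(t)/(1+t) → 0` as `t → ∞`; in
particular `A(t)` is asymptotic to `(3/4)·t` (this gives the normalized convergence
`ω_t/(1+t) → 3ω_∞` of the pluriclosed flow on an Oeljeklaus-Toma manifold). -/
theorem stmt_5 (B c : ℝ) (hB : 0 < B)
    (A : ℝ → ℝ) (C : ℝ → ℂ)
    (hpos : ∀ t ∈ Set.Ici (0 : ℝ), 0 < A t * B - ‖C t‖ ^ 2)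
    (hA : ∀ t ∈ Set.Ici (0 : ℝ), HasDerivWithinAt A
      ((3 / 4) * (1 + ‖C t‖ ^ 2 / (A t * B - ‖C t‖ ^ 2)))
      (Set.Ici 0) t)
    (hC : ∀ t ∈ Set.Ici (0 : ℝ), HasDerivWithinAt C
      (-(3 / 16 + (c : ℂ) ^ 2 / 4 + Complex.I * (c : ℂ) / 4) * (B : ℂ) * C t /
        ((A t * B - ‖C t‖ ^ 2 : ℝ) : ℂ)) (Set.Ici 0) t) :
    Tendsto (fun t => A t / (1 + t)) atTop (nhds (3 / 4)) ∧
    Tendsto (fun t : ℝ => C t / ((1 + t : ℝ) : ℂ)) atTop (nhds 0) ∧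
    Tendsto (fun t => A t / t) atTop (nhds (3 / 4)) := by
  -- notation
  set d : ℝ → ℝ := fun t => A t * B - ‖C t‖ ^ 2 with hd_def
  have hd0pos : 0 < d 0 := hpos 0 Set.self_mem_Ici
  set M2 : ℝ := ‖C 0‖ ^ 2 with hM2_def
  have hM2nonneg : 0 ≤ M2 := by positivity
  -- the squared norm function
  set g : ℝ → ℝ := fun t => (C t).re ^ 2 + (C t).im ^ 2 with hg_def
  have hgabs : ∀ t, g t = ‖C t‖ ^ 2 := by
    intro t
    simp only [hg_def]
    rw [Complex.sq_norm, Complex.normSq_apply]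
    ring
  -- derivative of components of C
  have hCre : ∀ t ∈ Set.Ici (0 : ℝ), HasDerivWithinAt (fun t => (C t).re)
      ((-(3 / 16 + (c : ℂ) ^ 2 / 4 + Complex.I * (c : ℂ) / 4) * (B : ℂ) * C t /
        ((d t : ℝ) : ℂ)).re) (Set.Ici 0) t := fun t ht =>
    Complex.reCLM.hasFDerivAt.comp_hasDerivWithinAt t (hC t ht)
  have hCim : ∀ t ∈ Set.Ici (0 : ℝ), HasDerivWithinAt (fun t => (C t).im)
      ((-(3 / 16 + (c : ℂ) ^ 2 / 4 + Complex.I * (c : ℂ) / 4) * (B : ℂ) * C t /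
        ((d t : ℝ) : ℂ)).im) (Set.Ici 0) t := fun t ht =>
    Complex.imCLM.hasFDerivAt.comp_hasDerivWithinAt t (hC t ht)
  -- derivative of g
  set g' : ℝ → ℝ := fun t => -2*(3/16+c^2/4)*B/(d t)*((C t).re^2+(C t).im^2) with hg'_def
  have hg : ∀ t ∈ Set.Ici (0 : ℝ), HasDerivWithinAt g (g' t) (Set.Ici 0) t := by
    intro t ht
    have h := ((hCre t ht).pow 2).add ((hCim t ht).pow 2)
    have heq := key_calc c B (d t) (hpos t ht).ne' (C t)
    rw [show (2:ℕ) - 1 = 1 from rfl] at h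
    convert h using 1
    · rfl
    · rfl
    · rfl
    simp only [hg'_def]
    push_cast
    linarith [heq]
  have hg'nonpos : ∀ t ∈ Set.Ici (0 : ℝ), g' t ≤ 0 := by
    intro t ht
    have hdt : 0 < d t := hpos t ht
    have h1 : (0:ℝ) ≤ 2*(3/16+c^2/4)*B/(d t)*((C t).re^2+(C t).im^2) := by positivity
    have h2 : g' t = -(2*(3/16+c^2/4)*B/(d t)*((C t).re^2+(C t).im^2)) := by
      simp only [hg'_def]; ring
    linarith
  -- g is antitone on Ici 0
  have hganti : AntitoneOn g (Set.Ici (0:ℝ)) := by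
    apply antitoneOn_of_hasDerivWithinAt_nonpos (convex_Ici 0)
      (fun t ht => (hg t ht).continuousWithinAt)
      (fun t ht => ((hg t (interior_subset ht)).mono interior_subset))
    intro t ht
    exact hg'nonpos t (interior_subset ht)
  have hCbound : ∀ t ∈ Set.Ici (0:ℝ), ‖C t‖ ^ 2 ≤ M2 := by
    intro t ht
    have := hganti (Set.self_mem_Ici) ht ht.out
    rw [hgabs, hgabs] at this
    exact this
  -- lower bound for A : A t ≥ A 0 + 3/4 t
  have hAlow : ∀ t ∈ Set.Ici (0:ℝ), A 0 + 3/4 * t ≤ A t := by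
    have hmono : MonotoneOn (fun t => A t - 3/4 * t) (Set.Ici (0:ℝ)) := by
      apply monotoneOn_of_hasDerivWithinAt_nonneg (convex_Ici 0)
        (f' := fun t => (3 / 4) * (1 + ‖C t‖ ^ 2 / (d t)) - 3/4)
      · intro t ht
        exact ((hA t ht).continuousWithinAt.sub
          ((continuous_const.mul continuous_id).continuousWithinAt))
      · intro t ht
        have h34 : HasDerivWithinAt (fun t : ℝ => 3/4 * t) (3/4) (interior (Set.Ici (0:ℝ))) t := by
          simpa using ((hasDerivAt_id t).const_mul (3/4 : ℝ)).hasDerivWithinAt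
        exact ((hA t (interior_subset ht)).mono interior_subset).sub h34
      · intro t ht
        have hdt : 0 < d t := hpos t (interior_subset ht)
        have : (0:ℝ) ≤ ‖C t‖ ^ 2 / (d t) := by positivity
        nlinarith
    intro t ht
    have := hmono Set.self_mem_Ici ht ht.out
    simp only at this
    linarith
  -- lower bound for d
  have hdlow : ∀ t ∈ Set.Ici (0:ℝ), d 0 + 3*B/4 * t ≤ d t := by
    intro t ht
    have h1 := hAlow t ht
    have h2 := hCbound t ht
    have : (A 0 + 3/4 * t) * B ≤ A t * B := by nlinarith
    simp only [hd_def, hM2_def] at *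
    nlinarith
  -- upper bound for A
  set k : ℝ := 3*B/(4*(d 0)) with hk_def
  have hkpos : 0 < k := by positivity
  set Φ : ℝ → ℝ := fun t => A 0 + 3/4 * t + (M2/B) * Real.log (1 + k * t) with hΦ_def
  have hΦderiv : ∀ t ∈ Set.Ici (0:ℝ),
      HasDerivAt Φ (3/4 + (3/4) * M2 / (d 0 + 3*B/4 * t)) t := by
    intro t ht
    have hpos1 : 0 < 1 + k * t := by
      have : 0 ≤ k * t := mul_nonneg hkpos.le ht.out
      linarith
    have haff : HasDerivAt (fun t : ℝ => 1 + k * t) k t := by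
      simpa using ((hasDerivAt_id t).const_mul k).const_add 1
    have hlog : HasDerivAt (fun t : ℝ => Real.log (1 + k * t)) (k / (1 + k * t)) t := by
      have := (Real.hasDerivAt_log hpos1.ne').comp t haff
      simpa [div_eq_inv_mul, Function.comp_def] using this
    have h1 : HasDerivAt Φ (3/4 + (M2/B) * (k / (1 + k * t))) t := by
      simpa [hΦ_def, Pi.add_def] using (((hasDerivAt_id t).const_mul (3/4:ℝ)).const_add (A 0)).add
        (hlog.const_mul (M2/B))
    convert h1 using 1
    have hd0 : (d 0) ≠ 0 := hd0pos.ne'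
    have hB' : B ≠ 0 := hB.ne'
    have h2 : (1:ℝ) + k * t ≠ 0 := hpos1.ne'
    have ht0 : (0:ℝ) ≤ t := Set.mem_Ici.mp ht
    have h3 : (0:ℝ) < d 0 + 3*B/4 * t :=
      add_pos_of_pos_of_nonneg hd0pos (mul_nonneg (by positivity) ht0)
    rw [hk_def]
    rw [hk_def] at h2
    field_simp
  -- A ≤ Φ on Ici 0
  have hAup : ∀ t ∈ Set.Ici (0:ℝ), A t ≤ Φ t := by
    have hmono : MonotoneOn (fun t => Φ t - A t) (Set.Ici (0:ℝ)) := by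
      apply monotoneOn_of_hasDerivWithinAt_nonneg (convex_Ici 0)
        (f' := fun t => (3/4 + (3/4) * M2 / (d 0 + 3*B/4 * t)) -
          (3 / 4) * (1 + ‖C t‖ ^ 2 / (d t)))
      · intro t ht
        exact ((hΦderiv t ht).continuousAt.continuousWithinAt).sub
          (hA t ht).continuousWithinAt
      · intro t ht
        exact ((hΦderiv t (interior_subset ht)).hasDerivWithinAt).sub
          ((hA t (interior_subset ht)).mono interior_subset)
      · intro t ht
        have ht' : t ∈ Set.Ici (0:ℝ) := interior_subset ht
        have hdt : 0 < d t := hpos t ht'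
        have hlow : d 0 + 3*B/4 * t ≤ d t := hdlow t ht'
        have hlowpos : 0 < d 0 + 3*B/4 * t :=
          add_pos_of_pos_of_nonneg hd0pos (mul_nonneg (by positivity) (Set.mem_Ici.mp ht'))
        have hdiv : ‖C t‖ ^ 2 / (d t) ≤ M2 / (d 0 + 3*B/4 * t) :=
          div_le_div₀ hM2nonneg (hCbound t ht') hlowpos hlow
        have e1 : (3:ℝ)/4 * M2 / (d 0 + 3*B/4 * t) = 3/4 * (M2 / (d 0 + 3*B/4 * t)) := by ring
        rw [e1]
        linarith [hdiv]
    intro t ht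
    have h := hmono Set.self_mem_Ici ht ht.out
    have hΦ0 : Φ 0 = A 0 := by simp only [hΦ_def]; simp
    have h' : Φ 0 - A 0 ≤ Φ t - A t := h
    linarith
  -- limit of lower bound
  have hLlow : Tendsto (fun t : ℝ => (A 0 + 3/4 * t) / (1 + t)) atTop (nhds (3/4)) :=
    aux_tendsto (A 0) (3/4)
  -- limit of log term over (1+t)
  have hlogterm : Tendsto (fun t : ℝ => Real.log (1 + k * t) / (1 + t)) atTop (nhds 0) := by
    have h1 : Tendsto (fun t : ℝ => 1 + k * t) atTop atTop := by
      apply tendsto_atTop_add_const_left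
      exact (tendsto_id.const_mul_atTop hkpos)
    have h2 : Tendsto (fun x : ℝ => Real.log x / x) atTop (nhds 0) := by
      have := Real.isLittleO_log_id_atTop
      rw [Asymptotics.isLittleO_iff_tendsto'] at this
      · exact this
      · filter_upwards [eventually_ne_atTop (0:ℝ)] with x hx h; exact absurd h hx
    have h3 : Tendsto (fun t : ℝ => Real.log (1 + k * t) / (1 + k * t)) atTop (nhds 0) :=
      h2.comp h1
    have h4 : Tendsto (fun t : ℝ => (1 + k * t) / (1 + t)) atTop (nhds k) :=
      aux_tendsto 1 k
    have h5 := h3.mul h4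
    rw [zero_mul] at h5
    refine h5.congr' ?_
    filter_upwards [eventually_gt_atTop (0:ℝ)] with t ht
    have h6 : (1:ℝ) + k * t ≠ 0 := by positivity
    have h7 : (1:ℝ) + t ≠ 0 := by positivity
    try simp only [Function.comp_apply]
    field_simp
  -- limit of upper bound
  have hLup : Tendsto (fun t : ℝ => Φ t / (1 + t)) atTop (nhds (3/4)) := by
    have h1 := hLlow.add (hlogterm.const_mul (M2/B))
    rw [mul_zero, add_zero] at h1
    refine h1.congr' ?_
    filter_upwards [eventually_gt_atTop (0:ℝ)] with t ht
    have h7 : (1:ℝ) + t ≠ 0 := by positivity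
    simp only [hΦ_def]
    field_simp
  -- main limit for A/(1+t)
  have hmain : Tendsto (fun t => A t / (1 + t)) atTop (nhds (3/4)) := by
    apply tendsto_of_tendsto_of_tendsto_of_le_of_le' hLlow hLup
    · filter_upwards [eventually_ge_atTop (0:ℝ)] with t ht
      have h7 : (0:ℝ) < 1 + t := by linarith
      exact (div_le_div_iff_of_pos_right h7).mpr (hAlow t ht)
    · filter_upwards [eventually_ge_atTop (0:ℝ)] with t ht
      have h7 : (0:ℝ) < 1 + t := by linarith
      exact (div_le_div_iff_of_pos_right h7).mpr (hAup t ht)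
  refine ⟨hmain, ?_, ?_⟩
  · -- C/(1+t) → 0
    rw [tendsto_zero_iff_norm_tendsto_zero]
    have hM : ∀ t ∈ Set.Ici (0:ℝ), ‖C t‖ ≤ ‖C 0‖ := by
      intro t ht
      have h := hCbound t ht
      nlinarith [norm_nonneg (C t), norm_nonneg (C 0)]
    apply squeeze_zero' (g := fun t : ℝ => ‖C 0‖ / (1 + t))
    · filter_upwards with t; positivity
    · filter_upwards [eventually_ge_atTop (0:ℝ)] with t ht
      have h7 : (0:ℝ) < 1 + t := by linarith
      have : ‖C t / ((1 + t : ℝ) : ℂ)‖ = ‖C t‖ / (1 + t) := by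
        rw [norm_div]
        simp [← Complex.ofReal_one, ← Complex.ofReal_add,
          Complex.norm_real, abs_of_pos h7]
      rw [this]
      exact (div_le_div_iff_of_pos_right h7).mpr (hM t ht)
    · have h1 : Tendsto (fun t : ℝ => 1 + t) atTop atTop :=
        tendsto_atTop_add_const_left _ _ tendsto_id
      exact tendsto_const_nhds.div_atTop h1
  · -- A/t → 3/4
    have h1 : Tendsto (fun t : ℝ => (1 + t) / t) atTop (nhds 1) := by
      have h2 : Tendsto (fun t : ℝ => 1 + 1/t) atTop (nhds (1+0)) :=
        tendsto_const_nhds.add (tendsto_const_nhds.div_atTop tendsto_id)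
      rw [add_zero] at h2
      refine h2.congr' ?_
      filter_upwards [eventually_gt_atTop (0:ℝ)] with t ht
      field_simp
      ring
    have h3 := hmain.mul h1
    rw [mul_one] at h3
    refine h3.congr' ?_
    filter_upwards [eventually_gt_atTop (0:ℝ)] with t ht
    have h7 : (1:ℝ) + t ≠ 0 := by positivity
    field_simp
    try ring
end

section
/- Assume λ_{ki} ≠ √−1/2 for all k, i. Then every ℂ-linear derivation D of 𝔤 with D(𝔤^{1,0}) ⊆ 𝔤^{1,0} and D(𝔤^{0,1}) ⊆ 𝔤^{0,1} vanishes on 𝔥, i.e. D Z_k = 0 and D Z̄_k = 0 for every k = 1, …, r. -/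
open Complex

/-- Let `𝔤` be the complexified Lie algebra of the universal covering of an
Oeljeklaus-Toma manifold of type `(r,s)`, with basis `Z_k, Z̄_k, W_i, W̄_i` and structure
constants `λ_{ki}` with `λ_{ki} ≠ √−1/2`. Then every `ℂ`-linear derivation `D` of `𝔤`
preserving `𝔤^{1,0}` and `𝔤^{0,1}` vanishes on `𝔥`: `D Z_k = 0` and `D Z̄_k = 0` for
every `k`. -/
theorem stmt_7 (r s : ℕ) (hr : 1 ≤ r) (hs : 1 ≤ s)
    (lam : Fin r → Fin s → ℂ) (hlam : ∀ k i, lam k i ≠ I / 2)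
    (L : Type*) [LieRing L] [LieAlgebra ℂ L]
    (bas : Module.Basis ((Fin r ⊕ Fin r) ⊕ (Fin s ⊕ Fin s)) ℂ L)
    (Z Zb : Fin r → L) (W Wb : Fin s → L)
    (hZ : ∀ k, Z k = bas (Sum.inl (Sum.inl k)))
    (hZb : ∀ k, Zb k = bas (Sum.inl (Sum.inr k)))
    (hW : ∀ i, W i = bas (Sum.inr (Sum.inl i)))
    (hWb : ∀ i, Wb i = bas (Sum.inr (Sum.inr i)))
    (hZZb : ∀ k l, ⁅Z k, Zb l⁆ = if k = l then (-(I / 2)) • (Z k + Zb k) else 0)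
    (hZZ : ∀ k l, ⁅Z k, Z l⁆ = 0)
    (hZbZb : ∀ k l, ⁅Zb k, Zb l⁆ = 0)
    (hZW : ∀ k i, ⁅Z k, W i⁆ = (-(lam k i)) • W i)
    (hZbWb : ∀ k i, ⁅Zb k, Wb i⁆ = (-(starRingEnd ℂ (lam k i))) • Wb i)
    (hZWb : ∀ k i, ⁅Z k, Wb i⁆ = (starRingEnd ℂ (lam k i)) • Wb i)
    (hZbW : ∀ k i, ⁅Zb k, W i⁆ = (lam k i) • W i)
    (hWW : ∀ i j, ⁅W i, W j⁆ = 0)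
    (hWbWb : ∀ i j, ⁅Wb i, Wb j⁆ = 0)
    (hWWb : ∀ i j, ⁅W i, Wb j⁆ = 0)
    (D : L →ₗ[ℂ] L)
    (hDer : ∀ x y : L, D ⁅x, y⁆ = ⁅D x, y⁆ + ⁅x, D y⁆)
    (hD10 : ∀ x ∈ Submodule.span ℂ (Set.range Z ∪ Set.range W),
      D x ∈ Submodule.span ℂ (Set.range Z ∪ Set.range W))
    (hD01 : ∀ x ∈ Submodule.span ℂ (Set.range Zb ∪ Set.range Wb),
      D x ∈ Submodule.span ℂ (Set.range Zb ∪ Set.range Wb)) :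
    ∀ k, D (Z k) = 0 ∧ D (Zb k) = 0 := by
  intro k
  have sumlie : ∀ {α : Type} (t : Finset α) (f : α → L) (y : L),
      ⁅∑ i ∈ t, f i, y⁆ = ∑ i ∈ t, ⁅f i, y⁆ := by
    intro α t f y
    induction t using Finset.cons_induction with
    | empty => simp
    | cons a t h ih => rw [Finset.sum_cons, Finset.sum_cons, add_lie, ih]
  have liesum : ∀ {α : Type} (t : Finset α) (y : L) (f : α → L),
      ⁅y, ∑ i ∈ t, f i⁆ = ∑ i ∈ t, ⁅y, f i⁆ := by
    intro α t y f
    induction t using Finset.cons_induction with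
    | empty => simp
    | cons a t h ih => rw [Finset.sum_cons, Finset.sum_cons, lie_add, ih]
  -- representation lemma for the (1,0) span
  have mem10 : ∀ x ∈ Submodule.span ℂ (Set.range Z ∪ Set.range W),
      x = (∑ l, bas.repr x (Sum.inl (Sum.inl l)) • Z l)
        + ∑ i, bas.repr x (Sum.inr (Sum.inl i)) • W i := by
    intro x hx
    have hZ' : Z = fun l => bas (Sum.inl (Sum.inl l)) := funext hZ
    have hW' : W = fun i => bas (Sum.inr (Sum.inl i)) := funext hW
    have himg : Set.range Z ∪ Set.range W
        = bas '' (Set.range (fun l : Fin r => Sum.inl (Sum.inl l))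
            ∪ Set.range (fun i : Fin s => Sum.inr (Sum.inl i))) := by
      rw [Set.image_union, hZ', hW', ← Set.range_comp, ← Set.range_comp]
      rfl
    rw [himg, Module.Basis.mem_span_image] at hx
    have hz : ∀ j, j ∉ (Set.range (fun l : Fin r => (Sum.inl (Sum.inl l) : (Fin r ⊕ Fin r) ⊕ (Fin s ⊕ Fin s)))
        ∪ Set.range (fun i : Fin s => (Sum.inr (Sum.inl i) : (Fin r ⊕ Fin r) ⊕ (Fin s ⊕ Fin s)))) →
        bas.repr x j = 0 := by
      intro j hj
      by_contra h
      exact hj (hx (Finsupp.mem_support_iff.2 h))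
    have h1 : ∀ l : Fin r, bas.repr x (Sum.inl (Sum.inr l)) = 0 := by
      intro l; apply hz; simp
    have h2 : ∀ i : Fin s, bas.repr x (Sum.inr (Sum.inr i)) = 0 := by
      intro i; apply hz; simp
    conv_lhs => rw [← bas.sum_repr x]
    rw [Fintype.sum_sum_type, Fintype.sum_sum_type, Fintype.sum_sum_type]
    simp [h1, h2, ← hZ, ← hW]
  have mem01 : ∀ x ∈ Submodule.span ℂ (Set.range Zb ∪ Set.range Wb),
      x = (∑ l, bas.repr x (Sum.inl (Sum.inr l)) • Zb l)
        + ∑ i, bas.repr x (Sum.inr (Sum.inr i)) • Wb i := by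
    intro x hx
    have hZ' : Zb = fun l => bas (Sum.inl (Sum.inr l)) := funext hZb
    have hW' : Wb = fun i => bas (Sum.inr (Sum.inr i)) := funext hWb
    have himg : Set.range Zb ∪ Set.range Wb
        = bas '' (Set.range (fun l : Fin r => Sum.inl (Sum.inr l))
            ∪ Set.range (fun i : Fin s => Sum.inr (Sum.inr i))) := by
      rw [Set.image_union, hZ', hW', ← Set.range_comp, ← Set.range_comp]
      rfl
    rw [himg, Module.Basis.mem_span_image] at hx
    have hz : ∀ j, j ∉ (Set.range (fun l : Fin r => (Sum.inl (Sum.inr l) : (Fin r ⊕ Fin r) ⊕ (Fin s ⊕ Fin s)))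
        ∪ Set.range (fun i : Fin s => (Sum.inr (Sum.inr i) : (Fin r ⊕ Fin r) ⊕ (Fin s ⊕ Fin s)))) →
        bas.repr x j = 0 := by
      intro j hj
      by_contra h
      exact hj (hx (Finsupp.mem_support_iff.2 h))
    have h1 : ∀ l : Fin r, bas.repr x (Sum.inl (Sum.inl l)) = 0 := by
      intro l; apply hz; simp
    have h2 : ∀ i : Fin s, bas.repr x (Sum.inr (Sum.inl i)) = 0 := by
      intro i; apply hz; simp
    conv_lhs => rw [← bas.sum_repr x]
    rw [Fintype.sum_sum_type, Fintype.sum_sum_type, Fintype.sum_sum_type]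
    simp [h1, h2, ← hZb, ← hWb]
  have hDZ := mem10 _ (hD10 _ (Submodule.subset_span (Or.inl ⟨k, rfl⟩)))
  have hDZb := mem01 _ (hD01 _ (Submodule.subset_span (Or.inl ⟨k, rfl⟩)))
  have hWZb : ∀ i, ⁅W i, Zb k⁆ = -(lam k i • W i) := fun i => by rw [← lie_skew, hZbW]
  have key := hDer (Z k) (Zb k)
  rw [hZZb k k, if_pos rfl, map_smul, map_add] at key
  rw [hDZ, hDZb] at key
  simp only [add_lie, lie_add, sumlie, liesum, smul_lie, lie_smul, hZZb, hWZb, hZZ, hZWb] at key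
  simp only [smul_ite, smul_zero, Finset.sum_ite_eq, Finset.sum_ite_eq',
    Finset.mem_univ, if_true] at key
  replace key := congrArg bas.repr key
  have hc := fun j => DFunLike.congr_fun key j
  clear key hDer hD10 hD01 mem10 mem01 sumlie liesum hZZb hZZ hZbZb hZW hZbWb hZWb hZbW hWW hWbWb hWWb hWZb
  have e1 := hc (Sum.inl (Sum.inl k))
  have e2 := hc (Sum.inl (Sum.inr k))
  have e3 := fun i : Fin s => hc (Sum.inr (Sum.inl i))
  have e4 := fun i : Fin s => hc (Sum.inr (Sum.inr i))
  have e5 := fun l : Fin r => hc (Sum.inl (Sum.inl l))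
  have e6 := fun l : Fin r => hc (Sum.inl (Sum.inr l))
  simp only [Finsupp.neg_apply, neg_zero, mul_neg, neg_mul, hZ, hZb, hW, hWb, map_add, map_smul, map_sum, map_neg, Finsupp.add_apply,
    Finsupp.smul_apply, Finset.sum_apply', Module.Basis.repr_self, Finsupp.single_apply,
    smul_eq_mul, mul_ite, mul_zero, mul_one, Finset.sum_ite_eq, Finset.sum_ite_eq',
    Finset.mem_univ, if_true, Sum.inl.injEq, Sum.inr.injEq, reduceCtorEq, if_false,
    Finset.sum_const_zero, add_zero, zero_add] at e1 e2 e3 e4 e5 e6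
  simp only [Finset.sum_neg_distrib, Finset.sum_ite_eq', Finset.mem_univ, if_true] at e3
  have hfac : ∀ x y : ℂ, x * y = 0 → y ≠ 0 → x = 0 := fun x y h hy =>
    (mul_eq_zero.mp h).resolve_right hy
  have hI2 : (I / 2 : ℂ) ≠ 0 := div_ne_zero I_ne_zero two_ne_zero
  have hA : ∀ l, bas.repr (D (bas (Sum.inl (Sum.inl k)))) (Sum.inl (Sum.inl l)) = 0 := by
    intro l
    rcases eq_or_ne k l with h | h
    · subst h
      exact hfac _ _ (by linear_combination e2) hI2
    · have := e5 l
      simp only [h, if_false, add_zero] at this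
      exact hfac _ _ (by linear_combination -this) hI2
  have hC : ∀ l, bas.repr (D (bas (Sum.inl (Sum.inr k)))) (Sum.inl (Sum.inr l)) = 0 := by
    intro l
    rcases eq_or_ne k l with h | h
    · subst h
      exact hfac _ _ (by linear_combination e1) hI2
    · have := e6 l
      simp only [h, if_false, add_zero] at this
      exact hfac _ _ (by linear_combination -this) hI2
  have hB : ∀ i, bas.repr (D (bas (Sum.inl (Sum.inl k)))) (Sum.inr (Sum.inl i)) = 0 := by
    intro i
    have hne : lam k i - I / 2 ≠ 0 := sub_ne_zero_of_ne (hlam k i)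
    exact hfac _ _ (by linear_combination e3 i) hne
  have hE : ∀ i, bas.repr (D (bas (Sum.inl (Sum.inr k)))) (Sum.inr (Sum.inr i)) = 0 := by
    intro i
    have hne : starRingEnd ℂ (lam k i) + I / 2 ≠ 0 := by
      intro h
      apply hlam k i
      have h' : starRingEnd ℂ (lam k i) = -(I / 2) := by linear_combination h
      have h2 := congrArg (starRingEnd ℂ) h'
      simpa [Complex.conj_conj, map_neg, map_div₀, Complex.conj_I, map_ofNat, neg_div, neg_neg] using h2
    exact hfac _ _ (by linear_combination -(e4 i)) hne
  simp only [hZ, hZb, hW, hWb] at hDZ hDZb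
  constructor
  · rw [hZ k, hDZ]
    simp [hA, hB]
  · rw [hZb k, hDZb]
    simp [hC, hE]
end

section
/- A ℂ-linear endomorphism D of 𝔤 with D(𝔤^{1,0}) ⊆ 𝔤^{1,0} and D(𝔤^{0,1}) ⊆ 𝔤^{0,1} is a derivation of 𝔤 if and only if D vanishes on 𝔥 and there exist complex numbers m_1, …, m_s and r_1, …, r_s with D W_i = m_i·W_i and D W̄_i = r_i·W̄_i for every i = 1, …, s. -/
open Complex

private lemma lie_sum' {L : Type*} [LieRing L] {ι : Type*} (x : L) (t : Finset ι) (f : ι → L) :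
    ⁅x, ∑ i ∈ t, f i⁆ = ∑ i ∈ t, ⁅x, f i⁆ :=
  map_sum (AddMonoidHom.mk' (fun y => ⁅x, y⁆) (fun a b => lie_add x a b)) f t

private lemma sum_lie' {L : Type*} [LieRing L] {ι : Type*} (y : L) (t : Finset ι) (f : ι → L) :
    ⁅∑ i ∈ t, f i, y⁆ = ∑ i ∈ t, ⁅f i, y⁆ :=
  map_sum (AddMonoidHom.mk' (fun x => ⁅x, y⁆) (fun a b => add_lie a b y)) f t

set_option maxHeartbeats 1000000 in
/-- Let `𝔤` be the complexified Lie algebra of the universal covering of an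
Oeljeklaus-Toma manifold admitting pluriclosed metrics (so `λ_{ki} ∈ ℝ` for `k ≠ i` and
`Im λ_{kk} = −1/4`). A `ℂ`-linear endomorphism `D` of `𝔤` preserving `𝔤^{1,0}` and
`𝔤^{0,1}` is a derivation if and only if `D` vanishes on `𝔥` and there are complex numbers
`m_i`, `r_i` with `D W_i = m_i • W_i` and `D W̄_i = r_i • W̄_i` for every `i`. -/
theorem stmt_8 (s : ℕ) (hs : 1 ≤ s)
    (lam : Fin s → Fin s → ℂ)
    (hlam_real : ∀ k i, k ≠ i → (lam k i).im = 0)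
    (hlam_diag : ∀ k, (lam k k).im = -(1 / 4))
    (L : Type*) [LieRing L] [LieAlgebra ℂ L]
    (bas : Module.Basis ((Fin s ⊕ Fin s) ⊕ (Fin s ⊕ Fin s)) ℂ L)
    (Z Zb W Wb : Fin s → L)
    (hZ : ∀ k, Z k = bas (Sum.inl (Sum.inl k)))
    (hZb : ∀ k, Zb k = bas (Sum.inl (Sum.inr k)))
    (hW : ∀ i, W i = bas (Sum.inr (Sum.inl i)))
    (hWb : ∀ i, Wb i = bas (Sum.inr (Sum.inr i)))
    (hZZb : ∀ k l, ⁅Z k, Zb l⁆ = if k = l then (-(I / 2)) • (Z k + Zb k) else 0)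
    (hZZ : ∀ k l, ⁅Z k, Z l⁆ = 0)
    (hZbZb : ∀ k l, ⁅Zb k, Zb l⁆ = 0)
    (hZW : ∀ k i, ⁅Z k, W i⁆ = (-(lam k i)) • W i)
    (hZbWb : ∀ k i, ⁅Zb k, Wb i⁆ = (-(starRingEnd ℂ (lam k i))) • Wb i)
    (hZWb : ∀ k i, ⁅Z k, Wb i⁆ = (starRingEnd ℂ (lam k i)) • Wb i)
    (hZbW : ∀ k i, ⁅Zb k, W i⁆ = (lam k i) • W i)
    (hWW : ∀ i j, ⁅W i, W j⁆ = 0)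
    (hWbWb : ∀ i j, ⁅Wb i, Wb j⁆ = 0)
    (hWWb : ∀ i j, ⁅W i, Wb j⁆ = 0)
    (D : L →ₗ[ℂ] L)
    (hD10 : ∀ x ∈ Submodule.span ℂ (Set.range Z ∪ Set.range W),
      D x ∈ Submodule.span ℂ (Set.range Z ∪ Set.range W))
    (hD01 : ∀ x ∈ Submodule.span ℂ (Set.range Zb ∪ Set.range Wb),
      D x ∈ Submodule.span ℂ (Set.range Zb ∪ Set.range Wb)) :
    (∀ x y : L, D ⁅x, y⁆ = ⁅D x, y⁆ + ⁅x, D y⁆) ↔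
      ((∀ k, D (Z k) = 0 ∧ D (Zb k) = 0) ∧
        ∃ m rr : Fin s → ℂ, ∀ i, D (W i) = m i • W i ∧ D (Wb i) = rr i • Wb i) := by
  -- reversed bracket relations
  have hZbZ : ∀ k l, ⁅Zb k, Z l⁆ = if l = k then (I / 2) • (Z l + Zb l) else 0 := by
    intro k l; rw [← lie_skew, hZZb]; split <;> simp [add_comm]
  have hWZ : ∀ i k, ⁅W i, Z k⁆ = (lam k i) • W i := by
    intro i k; rw [← lie_skew, hZW]; simp
  have hWZb : ∀ i k, ⁅W i, Zb k⁆ = (-(lam k i)) • W i := by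
    intro i k; rw [← lie_skew, hZbW]; simp
  have hWbZ : ∀ i k, ⁅Wb i, Z k⁆ = (-(starRingEnd ℂ (lam k i))) • Wb i := by
    intro i k; rw [← lie_skew, hZWb]; simp
  have hWbZb : ∀ i k, ⁅Wb i, Zb k⁆ = (starRingEnd ℂ (lam k i)) • Wb i := by
    intro i k; rw [← lie_skew, hZbWb]; simp
  have hWbW : ∀ i j, ⁅Wb i, W j⁆ = 0 := by
    intro i j; rw [← lie_skew, hWWb]; simp
  constructor
  · -- forward direction
    intro hder
    -- membership
    have memZ : ∀ k, Z k ∈ Submodule.span ℂ (Set.range Z ∪ Set.range W) := fun k =>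
      Submodule.subset_span (Or.inl ⟨k, rfl⟩)
    have memW : ∀ i, W i ∈ Submodule.span ℂ (Set.range Z ∪ Set.range W) := fun i =>
      Submodule.subset_span (Or.inr ⟨i, rfl⟩)
    have memZb : ∀ k, Zb k ∈ Submodule.span ℂ (Set.range Zb ∪ Set.range Wb) := fun k =>
      Submodule.subset_span (Or.inl ⟨k, rfl⟩)
    have memWb : ∀ i, Wb i ∈ Submodule.span ℂ (Set.range Zb ∪ Set.range Wb) := fun i =>
      Submodule.subset_span (Or.inr ⟨i, rfl⟩)
    -- vanishing of bad coordinates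
    have van10 : ∀ x ∈ Submodule.span ℂ (Set.range Z ∪ Set.range W), ∀ q : Fin s,
        bas.repr x (Sum.inl (Sum.inr q)) = 0 ∧ bas.repr x (Sum.inr (Sum.inr q)) = 0 := by
      intro x hx
      induction hx using Submodule.span_induction with
      | mem x hx =>
          rcases hx with ⟨k, rfl⟩ | ⟨i, rfl⟩ <;> intro q <;>
            constructor <;> simp [hZ, hW, Module.Basis.repr_self, Finsupp.single_apply]
      | zero => simp
      | add x y hx hy h1 h2 =>
          intro q; exact ⟨by simp [(h1 q).1, (h2 q).1], by simp [(h1 q).2, (h2 q).2]⟩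
      | smul c x hx h1 =>
          intro q; exact ⟨by simp [(h1 q).1], by simp [(h1 q).2]⟩
    have van01 : ∀ x ∈ Submodule.span ℂ (Set.range Zb ∪ Set.range Wb), ∀ q : Fin s,
        bas.repr x (Sum.inl (Sum.inl q)) = 0 ∧ bas.repr x (Sum.inr (Sum.inl q)) = 0 := by
      intro x hx
      induction hx using Submodule.span_induction with
      | mem x hx =>
          rcases hx with ⟨k, rfl⟩ | ⟨i, rfl⟩ <;> intro q <;>
            constructor <;> simp [hZb, hWb, Module.Basis.repr_self, Finsupp.single_apply]
      | zero => simp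
      | add x y hx hy h1 h2 =>
          intro q; exact ⟨by simp [(h1 q).1, (h2 q).1], by simp [(h1 q).2, (h2 q).2]⟩
      | smul c x hx h1 =>
          intro q; exact ⟨by simp [(h1 q).1], by simp [(h1 q).2]⟩
    -- expansion of an arbitrary element
    have expand : ∀ x : L, x = (∑ l, bas.repr x (Sum.inl (Sum.inl l)) • Z l)
        + (∑ l, bas.repr x (Sum.inl (Sum.inr l)) • Zb l)
        + (∑ i, bas.repr x (Sum.inr (Sum.inl i)) • W i)
        + (∑ i, bas.repr x (Sum.inr (Sum.inr i)) • Wb i) := by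
      intro x
      conv_lhs => rw [← bas.sum_repr x]
      rw [Fintype.sum_sum_type]
      simp only [Fintype.sum_sum_type, hZ, hZb, hW, hWb]
      abel
    -- nonvanishing scalar facts
    have hne1 : ∀ k i, lam k i - I / 2 ≠ 0 := by
      intro k i h
      have := congrArg Complex.im h
      rcases eq_or_ne k i with rfl | hki
      · rw [Complex.sub_im, hlam_diag k] at this; simp at this; norm_num at this
      · rw [Complex.sub_im, hlam_real k i hki] at this; simp at this
    have hne2 : ∀ k i, starRingEnd ℂ (lam k i) + I / 2 ≠ 0 := by
      intro k i h
      have := congrArg Complex.im h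
      rcases eq_or_ne k i with rfl | hki
      · rw [Complex.add_im, Complex.conj_im, hlam_diag k] at this; simp at this; norm_num at this
      · rw [Complex.add_im, Complex.conj_im, hlam_real k i hki] at this; simp at this
    have hne3 : ∀ k, lam k k ≠ 0 := by
      intro k h
      have := congrArg Complex.im h
      simp [hlam_diag k] at this
    have hne4 : ∀ i q, q ≠ i → lam i q - lam i i ≠ 0 := by
      intro i q hqi h
      have := congrArg Complex.im h
      simp [hlam_real i q (Ne.symm hqi), hlam_diag i] at this
    -- D kills Z and Zb
    have hDZ : ∀ k, D (Z k) = 0 ∧ D (Zb k) = 0 := by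
      intro k
      have h10 := van10 (D (Z k)) (hD10 _ (memZ k))
      have h01 := van01 (D (Zb k)) (hD01 _ (memZb k))
      have eDZ : D (Z k) = (∑ l, bas.repr (D (Z k)) (Sum.inl (Sum.inl l)) • Z l)
          + ∑ i, bas.repr (D (Z k)) (Sum.inr (Sum.inl i)) • W i := by
        conv_lhs => rw [expand (D (Z k))]
        simp [fun q => (h10 q).1, fun q => (h10 q).2]
      have eDZb : D (Zb k) = (∑ l, bas.repr (D (Zb k)) (Sum.inl (Sum.inr l)) • Zb l)
          + ∑ i, bas.repr (D (Zb k)) (Sum.inr (Sum.inr i)) • Wb i := by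
        conv_lhs => rw [expand (D (Zb k))]
        simp [fun q => (h01 q).1, fun q => (h01 q).2]
      have E := hder (Z k) (Zb k)
      rw [hZZb k k, if_pos rfl, map_smul, map_add] at E
      rw [eDZ, eDZb] at E
      -- now expand brackets
      simp only [add_lie, lie_add, sum_lie', lie_sum', smul_lie, lie_smul,
        hZZb, hZZ, hZbZb, hZW, hZbWb, hZWb, hZbW, hWZ, hWZb, hWbZ, hWbZb,
        smul_ite, smul_zero, smul_add] at E
      simp only [Finset.sum_ite_eq', Finset.sum_ite_eq, Finset.mem_univ, if_true] at E
      have e1 : ∀ q : Fin s, q ≠ k → bas.repr (D (Z k)) (Sum.inl (Sum.inl q)) = 0 := by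
        intro q hqk
        have e := congrArg (fun v => (bas.repr v) (Sum.inl (Sum.inl q))) E
        simp [hZ, hZb, hW, hWb, Module.Basis.repr_self, Finsupp.single_apply,
          Finset.sum_ite_eq', hqk, Ne.symm hqk] at e
        simpa [hZ] using e
      have e2 : ∀ q : Fin s, q ≠ k → bas.repr (D (Zb k)) (Sum.inl (Sum.inr q)) = 0 := by
        intro q hqk
        have e := congrArg (fun v => (bas.repr v) (Sum.inl (Sum.inr q))) E
        simp [hZ, hZb, hW, hWb, Module.Basis.repr_self, Finsupp.single_apply,
          Finset.sum_ite_eq', hqk, Ne.symm hqk] at e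
        simpa [hZb] using e
      have ek1 := congrArg (fun v => (bas.repr v) (Sum.inl (Sum.inl k))) E
      have ek2 := congrArg (fun v => (bas.repr v) (Sum.inl (Sum.inr k))) E
      simp [hZ, hZb, hW, hWb, Module.Basis.repr_self, Finsupp.single_apply,
        Finset.sum_ite_eq'] at ek1 ek2
      have hI2 : (I / 2 : ℂ) ≠ 0 := by
        simp [Complex.I_ne_zero]
      have hak' : bas.repr (D (bas (Sum.inl (Sum.inl k)))) (Sum.inl (Sum.inl k)) = 0 := by
        rcases mul_eq_zero.mp (show (bas.repr (D (bas (Sum.inl (Sum.inl k))))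
            (Sum.inl (Sum.inl k))) * (I / 2) = 0 by linear_combination ek2) with h | h
        · exact h
        · exact absurd h hI2
      have hak : bas.repr (D (Z k)) (Sum.inl (Sum.inl k)) = 0 := by rw [hZ]; exact hak'
      have hbk : bas.repr (D (Zb k)) (Sum.inl (Sum.inr k)) = 0 := by
        rw [hZb]
        rcases mul_eq_zero.mp (show (bas.repr (D (bas (Sum.inl (Sum.inr k))))
            (Sum.inl (Sum.inr k))) * (I / 2) = 0 by linear_combination ek1) with h | h
        · exact h
        · exact absurd h hI2
      have e4 : ∀ q : Fin s, bas.repr (D (Z k)) (Sum.inr (Sum.inl q)) = 0 := by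
        intro q
        have e := congrArg (fun v => (bas.repr v) (Sum.inr (Sum.inl q))) E
        simp [hZ, hZb, hW, hWb, Module.Basis.repr_self, Finsupp.single_apply,
          Finset.sum_ite_eq'] at e
        rw [hZ]
        rcases mul_eq_zero.mp (show (lam k q - I / 2) *
            (bas.repr (D (bas (Sum.inl (Sum.inl k)))) (Sum.inr (Sum.inl q))) = 0 by
          linear_combination -e) with h | h
        · exact absurd h (hne1 k q)
        · exact h
      have e5 : ∀ q : Fin s, bas.repr (D (Zb k)) (Sum.inr (Sum.inr q)) = 0 := by
        intro q
        have e := congrArg (fun v => (bas.repr v) (Sum.inr (Sum.inr q))) E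
        simp [hZ, hZb, hW, hWb, Module.Basis.repr_self, Finsupp.single_apply,
          Finset.sum_ite_eq'] at e
        rw [hZb]
        rcases mul_eq_zero.mp (show (starRingEnd ℂ (lam k q) + I / 2) *
            (bas.repr (D (bas (Sum.inl (Sum.inr k)))) (Sum.inr (Sum.inr q))) = 0 by
          linear_combination -e) with h | h
        · exact absurd h (hne2 k q)
        · exact h
      constructor
      · apply bas.ext_elem
        intro idx
        rw [map_zero]
        simp only [Finsupp.coe_zero, Pi.zero_apply]
        rcases idx with (q | q) | (q | q)
        · rcases eq_or_ne q k with rfl | h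
          · exact hak
          · exact e1 q h
        · exact (h10 q).1
        · exact e4 q
        · exact (h10 q).2
      · apply bas.ext_elem
        intro idx
        rw [map_zero]
        simp only [Finsupp.coe_zero, Pi.zero_apply]
        rcases idx with (q | q) | (q | q)
        · exact (h01 q).1
        · rcases eq_or_ne q k with rfl | h
          · exact hbk
          · exact e2 q h
        · exact (h01 q).2
        · exact e5 q
    have hne3' : ∀ i : Fin s, starRingEnd ℂ (lam i i) ≠ 0 := by
      intro i h
      exact hne3 i (by simpa using congrArg (starRingEnd ℂ) h)
    have hne4' : ∀ i q : Fin s, q ≠ i →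
        starRingEnd ℂ (lam i q) - starRingEnd ℂ (lam i i) ≠ 0 := by
      intro i q hqi h
      apply hne4 i q hqi
      have := congrArg (starRingEnd ℂ) h
      simpa [map_sub] using this
    have hDW : ∀ i, D (W i) = (bas.repr (D (W i)) (Sum.inr (Sum.inl i))) • W i := by
      intro i
      have h10 := van10 (D (W i)) (hD10 _ (memW i))
      have eDW : D (W i) = (∑ l, bas.repr (D (W i)) (Sum.inl (Sum.inl l)) • Z l)
          + ∑ j, bas.repr (D (W i)) (Sum.inr (Sum.inl j)) • W j := by
        conv_lhs => rw [expand (D (W i))]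
        simp [fun q => (h10 q).1, fun q => (h10 q).2]
      have E := hder (Z i) (W i)
      rw [hZW i i, map_smul, (hDZ i).1, zero_lie, zero_add] at E
      rw [eDW] at E
      simp only [lie_add, lie_sum', lie_smul, hZZ, hZW, smul_zero,
        Finset.sum_const_zero, zero_add] at E
      have ec : ∀ q : Fin s, bas.repr (D (W i)) (Sum.inl (Sum.inl q)) = 0 := by
        intro q
        have e := congrArg (fun v => (bas.repr v) (Sum.inl (Sum.inl q))) E
        simp [hZ, hZb, hW, hWb, Module.Basis.repr_self, Finsupp.single_apply,
          Finset.sum_ite_eq'] at e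
        rw [hW]
        rcases e with h | h
        · exact absurd h (hne3 i)
        · exact h
      have em : ∀ q : Fin s, q ≠ i → bas.repr (D (W i)) (Sum.inr (Sum.inl q)) = 0 := by
        intro q hqi
        have e := congrArg (fun v => (bas.repr v) (Sum.inr (Sum.inl q))) E
        simp [hZ, hZb, hW, hWb, Module.Basis.repr_self, Finsupp.single_apply,
          Finset.sum_ite_eq'] at e
        rw [hW]
        rcases mul_eq_zero.mp (show (lam i q - lam i i) *
            (bas.repr (D (bas (Sum.inr (Sum.inl i)))) (Sum.inr (Sum.inl q))) = 0 by
          linear_combination -e) with h | h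
        · exact absurd h (hne4 i q hqi)
        · exact h
      apply bas.ext_elem
      intro idx
      rw [map_smul]
      simp only [Finsupp.smul_apply, smul_eq_mul]
      rcases idx with (q | q) | (q | q)
      · rw [ec q, hW, Module.Basis.repr_self, Finsupp.single_apply]; simp
      · rw [(h10 q).1, hW, Module.Basis.repr_self, Finsupp.single_apply]; simp
      · rcases eq_or_ne q i with rfl | h
        · rw [hW, Module.Basis.repr_self, Finsupp.single_apply]; simp
        · rw [em q h, hW, Module.Basis.repr_self, Finsupp.single_apply]
          simp [Ne.symm h]
      · rw [(h10 q).2, hW, Module.Basis.repr_self, Finsupp.single_apply]; simp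
    have hDWb : ∀ i, D (Wb i) = (bas.repr (D (Wb i)) (Sum.inr (Sum.inr i))) • Wb i := by
      intro i
      have h01 := van01 (D (Wb i)) (hD01 _ (memWb i))
      have eDWb : D (Wb i) = (∑ l, bas.repr (D (Wb i)) (Sum.inl (Sum.inr l)) • Zb l)
          + ∑ j, bas.repr (D (Wb i)) (Sum.inr (Sum.inr j)) • Wb j := by
        conv_lhs => rw [expand (D (Wb i))]
        simp [fun q => (h01 q).1, fun q => (h01 q).2]
      have E := hder (Zb i) (Wb i)
      rw [hZbWb i i, map_smul, (hDZ i).2, zero_lie, zero_add] at E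
      rw [eDWb] at E
      simp only [lie_add, lie_sum', lie_smul, hZbZb, hZbWb, smul_zero,
        Finset.sum_const_zero, zero_add] at E
      have ec : ∀ q : Fin s, bas.repr (D (Wb i)) (Sum.inl (Sum.inr q)) = 0 := by
        intro q
        have e := congrArg (fun v => (bas.repr v) (Sum.inl (Sum.inr q))) E
        simp [hZ, hZb, hW, hWb, Module.Basis.repr_self, Finsupp.single_apply,
          Finset.sum_ite_eq'] at e
        rw [hWb]
        rcases e with h | h
        · exact absurd h (hne3 i)
        · exact h
      have em : ∀ q : Fin s, q ≠ i → bas.repr (D (Wb i)) (Sum.inr (Sum.inr q)) = 0 := by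
        intro q hqi
        have e := congrArg (fun v => (bas.repr v) (Sum.inr (Sum.inr q))) E
        simp [hZ, hZb, hW, hWb, Module.Basis.repr_self, Finsupp.single_apply,
          Finset.sum_ite_eq'] at e
        rw [hWb]
        rcases mul_eq_zero.mp (show (starRingEnd ℂ (lam i q) - starRingEnd ℂ (lam i i)) *
            (bas.repr (D (bas (Sum.inr (Sum.inr i)))) (Sum.inr (Sum.inr q))) = 0 by
          linear_combination -e) with h | h
        · exact absurd h (hne4' i q hqi)
        · exact h
      apply bas.ext_elem
      intro idx
      rw [map_smul]
      simp only [Finsupp.smul_apply, smul_eq_mul]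
      rcases idx with (q | q) | (q | q)
      · rw [(h01 q).1, hWb, Module.Basis.repr_self, Finsupp.single_apply]; simp
      · rw [ec q, hWb, Module.Basis.repr_self, Finsupp.single_apply]; simp
      · rw [(h01 q).2, hWb, Module.Basis.repr_self, Finsupp.single_apply]; simp
      · rcases eq_or_ne q i with rfl | h
        · rw [hWb, Module.Basis.repr_self, Finsupp.single_apply]; simp
        · rw [em q h, hWb, Module.Basis.repr_self, Finsupp.single_apply]
          simp [Ne.symm h]
    exact ⟨hDZ, fun i => bas.repr (D (W i)) (Sum.inr (Sum.inl i)),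
      fun i => bas.repr (D (Wb i)) (Sum.inr (Sum.inr i)),
      fun i => ⟨hDW i, hDWb i⟩⟩
  · -- backward direction
    rintro ⟨hZ0, m, rr, hmr⟩
    have key : ∀ j j', D ⁅bas j, bas j'⁆ = ⁅D (bas j), bas j'⁆ + ⁅bas j, D (bas j')⁆ := by
      intro j j'
      rcases j with (k | k) | (i | i) <;> rcases j' with (l | l) | (jj | jj) <;>
        simp only [← hZ, ← hZb, ← hW, ← hWb]
      · rw [hZZ, (hZ0 k).1, (hZ0 l).1]; simp
      · rw [hZZb, (hZ0 k).1, (hZ0 l).2]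
        rcases eq_or_ne k l with rfl | h
        · simp [map_smul, map_add, (hZ0 k).1, (hZ0 k).2]
        · simp [h]
      · rw [hZW, (hZ0 k).1, (hmr jj).1, map_smul, (hmr jj).1]
        simp [lie_smul, hZW, smul_smul, mul_comm]
      · rw [hZWb, (hZ0 k).1, (hmr jj).2, map_smul, (hmr jj).2]
        simp [lie_smul, hZWb, smul_smul, mul_comm]
      · rw [hZbZ, (hZ0 k).2, (hZ0 l).1]
        rcases eq_or_ne l k with rfl | h
        · simp [map_smul, map_add, (hZ0 l).1, (hZ0 l).2]
        · simp [h]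
      · rw [hZbZb, (hZ0 k).2, (hZ0 l).2]; simp
      · rw [hZbW, (hZ0 k).2, (hmr jj).1, map_smul, (hmr jj).1]
        simp [lie_smul, hZbW, smul_smul, mul_comm]
      · rw [hZbWb, (hZ0 k).2, (hmr jj).2, map_smul, (hmr jj).2]
        simp [lie_smul, hZbWb, smul_smul, mul_comm]
      · rw [hWZ, (hZ0 l).1, (hmr i).1, map_smul, (hmr i).1]
        simp [smul_lie, hWZ, smul_smul, mul_comm]
      · rw [hWZb, (hZ0 l).2, (hmr i).1, map_smul, (hmr i).1]
        simp [smul_lie, hWZb, smul_smul, mul_comm]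
      · rw [hWW, (hmr i).1, (hmr jj).1]
        simp [smul_lie, lie_smul, hWW]
      · rw [hWWb, (hmr i).1, (hmr jj).2]
        simp [smul_lie, lie_smul, hWWb]
      · rw [hWbZ, (hZ0 l).1, (hmr i).2, map_smul, (hmr i).2]
        simp [smul_lie, hWbZ, smul_smul, mul_comm]
      · rw [hWbZb, (hZ0 l).2, (hmr i).2, map_smul, (hmr i).2]
        simp [smul_lie, hWbZb, smul_smul, mul_comm]
      · rw [hWbW, (hmr i).2, (hmr jj).1]
        simp [smul_lie, lie_smul, hWbW]
      · rw [hWbWb, (hmr i).2, (hmr jj).2]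
        simp [smul_lie, lie_smul, hWbWb]
    intro x y
    conv_lhs => rw [← bas.sum_repr x, ← bas.sum_repr y]
    conv_rhs => rw [← bas.sum_repr x, ← bas.sum_repr y]
    simp only [lie_sum', sum_lie', map_sum, lie_smul, smul_lie, map_smul, key, smul_add,
      Finset.sum_add_distrib]
end

section
/- Assume Σ_{b=1}^{s} Im λ_{kb} = −1/4 for every k = 1, …, r. Then ρ_C(Z_i, Z̄_j) = −(√−1/4)·δ_{ij}, ρ_C(W_i, W̄_j) = 0 and ρ_C(Z_i, W̄_j) = ρ_C(W_i, Z̄_j) = 0 for all i, j, and ρ_C vanishes on 𝔤^{1,0} × 𝔤^{1,0} and on 𝔤^{0,1} × 𝔤^{0,1}. That is, ρ_C = −ω_∞, where ω_∞ is the alternating form with ω_∞(Z_i, Z̄_j) = (√−1/4)δ_{ij} and all other pairings of basis vectors equal to zero. -/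
open Complex

/-- On the Lie algebra of the universal covering of an Oeljeklaus-Toma
manifold (with `Σ_b Im λ_{kb} = −1/4` for every `k`), the Chern-Ricci form of the canonical
left-invariant metric satisfies `ρ_C(Z_i, Z̄_j) = −(√−1/4)δ_{ij}`, `ρ_C(W_i, W̄_j) = 0`,
`ρ_C(Z_i, W̄_j) = ρ_C(W_i, Z̄_j) = 0`, and it vanishes on `𝔤^{1,0} × 𝔤^{1,0}` and on
`𝔤^{0,1} × 𝔤^{0,1}`; that is, `ρ_C = −ω_∞`. -/
theorem stmt_10 (r s : ℕ) (hr : 1 ≤ r) (hs : 1 ≤ s)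
    (lam : Fin r → Fin s → ℂ)
    (hlam_sum : ∀ k, ∑ b, (lam k b).im = -(1 / 4))
    (L : Type*) [LieRing L] [LieAlgebra ℂ L]
    (bas : Module.Basis ((Fin r ⊕ Fin r) ⊕ (Fin s ⊕ Fin s)) ℂ L)
    (Z Zb : Fin r → L) (W Wb : Fin s → L)
    (hZ : ∀ k, Z k = bas (Sum.inl (Sum.inl k)))
    (hZb : ∀ k, Zb k = bas (Sum.inl (Sum.inr k)))
    (hW : ∀ i, W i = bas (Sum.inr (Sum.inl i)))
    (hWb : ∀ i, Wb i = bas (Sum.inr (Sum.inr i)))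
    (hZZb : ∀ k l, ⁅Z k, Zb l⁆ = if k = l then (-(I / 2)) • (Z k + Zb k) else 0)
    (hZZ : ∀ k l, ⁅Z k, Z l⁆ = 0)
    (hZbZb : ∀ k l, ⁅Zb k, Zb l⁆ = 0)
    (hZW : ∀ k i, ⁅Z k, W i⁆ = (-(lam k i)) • W i)
    (hZbWb : ∀ k i, ⁅Zb k, Wb i⁆ = (-(starRingEnd ℂ (lam k i))) • Wb i)
    (hZWb : ∀ k i, ⁅Z k, Wb i⁆ = (starRingEnd ℂ (lam k i)) • Wb i)
    (hZbW : ∀ k i, ⁅Zb k, W i⁆ = (lam k i) • W i)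
    (hWW : ∀ i j, ⁅W i, W j⁆ = 0)
    (hWbWb : ∀ i j, ⁅Wb i, Wb j⁆ = 0)
    (hWWb : ∀ i j, ⁅W i, Wb j⁆ = 0)
    -- the (1,0)- and (0,1)-projections
    (p10 p01 : L → L)
    (hp : ∀ v : L, p10 v ∈ Submodule.span ℂ (Set.range Z ∪ Set.range W) ∧
      p01 v ∈ Submodule.span ℂ (Set.range Zb ∪ Set.range Wb) ∧ p10 v + p01 v = v)
    -- the canonical left-invariant Hermitian metric `ω`
    (ω : L →ₗ[ℂ] L →ₗ[ℂ] ℂ)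
    (hωalt : ∀ x : L, ω x x = 0)
    (hω10 : ∀ x ∈ Submodule.span ℂ (Set.range Z ∪ Set.range W),
      ∀ y ∈ Submodule.span ℂ (Set.range Z ∪ Set.range W), ω x y = 0)
    (hω01 : ∀ x ∈ Submodule.span ℂ (Set.range Zb ∪ Set.range Wb),
      ∀ y ∈ Submodule.span ℂ (Set.range Zb ∪ Set.range Wb), ω x y = 0)
    (hωZZ : ∀ i j, ω (Z i) (Zb j) = if i = j then I else 0)
    (hωWW : ∀ i j, ω (W i) (Wb j) = if i = j then I else 0)
    (hωZW : ∀ i j, ω (Z i) (Wb j) = 0)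
    (hωWZ : ∀ i j, ω (W i) (Zb j) = 0)
    -- the limit form `ω_∞`
    (ωinf : L →ₗ[ℂ] L →ₗ[ℂ] ℂ)
    (hωinfalt : ∀ x : L, ωinf x x = 0)
    (hωinfZZ : ∀ i j, ωinf (Z i) (Zb j) = if i = j then I / 4 else 0)
    (hωinfZ10 : ∀ i j, ωinf (Z i) (Z j) = 0)
    (hωinfZb : ∀ i j, ωinf (Zb i) (Zb j) = 0)
    (hωinfW : ∀ i j, ωinf (W i) (W j) = 0)
    (hωinfWWb : ∀ i j, ωinf (W i) (Wb j) = 0)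
    (hωinfWb : ∀ i j, ωinf (Wb i) (Wb j) = 0)
    (hωinfZW : ∀ i j, ωinf (Z i) (W j) = 0)
    (hωinfZWb : ∀ i j, ωinf (Z i) (Wb j) = 0)
    (hωinfZbW : ∀ i j, ωinf (Zb i) (W j) = 0)
    (hωinfZbWb : ∀ i j, ωinf (Zb i) (Wb j) = 0)
    -- the Chern-Ricci form
    (ρC : L → L → ℂ)
    (hρ : ∀ X Y : L, ρC X Y =
      -(∑ a : Fin r, (ω ⁅p01 ⁅X, Y⁆, Z a⁆ (Zb a) + ω ⁅p10 ⁅X, Y⁆, Zb a⁆ (Z a)))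
      - ∑ b : Fin s, (ω ⁅p01 ⁅X, Y⁆, W b⁆ (Wb b) + ω ⁅p10 ⁅X, Y⁆, Wb b⁆ (W b))) :
    (∀ i j, ρC (Z i) (Zb j) = if i = j then -(I / 4) else 0) ∧
    (∀ i j, ρC (W i) (Wb j) = 0) ∧
    (∀ i j, ρC (Z i) (Wb j) = 0) ∧
    (∀ i j, ρC (W i) (Zb j) = 0) ∧
    (∀ x ∈ Submodule.span ℂ (Set.range Z ∪ Set.range W),
      ∀ y ∈ Submodule.span ℂ (Set.range Z ∪ Set.range W), ρC x y = 0) ∧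
    (∀ x ∈ Submodule.span ℂ (Set.range Zb ∪ Set.range Wb),
      ∀ y ∈ Submodule.span ℂ (Set.range Zb ∪ Set.range Wb), ρC x y = 0) ∧
    (∀ X Y : L, ρC X Y = -(ωinf X Y)) := by
  classical
  -- basic membership facts
  have hZm : ∀ k, Z k ∈ Submodule.span ℂ (Set.range Z ∪ Set.range W) :=
    fun k => Submodule.subset_span (Or.inl ⟨k, rfl⟩)
  have hWm : ∀ i, W i ∈ Submodule.span ℂ (Set.range Z ∪ Set.range W) :=
    fun i => Submodule.subset_span (Or.inr ⟨i, rfl⟩)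
  have hZbm : ∀ k, Zb k ∈ Submodule.span ℂ (Set.range Zb ∪ Set.range Wb) :=
    fun k => Submodule.subset_span (Or.inl ⟨k, rfl⟩)
  have hWbm : ∀ i, Wb i ∈ Submodule.span ℂ (Set.range Zb ∪ Set.range Wb) :=
    fun i => Submodule.subset_span (Or.inr ⟨i, rfl⟩)
  -- skew-symmetry from alternating
  have skew : ∀ (B : L →ₗ[ℂ] L →ₗ[ℂ] ℂ), (∀ x, B x x = 0) → ∀ x y, B x y = -B y x := by
    intro B hB x y
    have h := hB (x + y)
    simp only [map_add, LinearMap.add_apply, hB] at h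
    linear_combination h
  -- disjointness of the two spans
  have hdisj : Disjoint (Submodule.span ℂ (Set.range Z ∪ Set.range W))
      (Submodule.span ℂ (Set.range Zb ∪ Set.range Wb)) := by
    have h10 : Set.range Z ∪ Set.range W =
        bas '' (Set.range (fun k : Fin r => ((Sum.inl (Sum.inl k)) : (Fin r ⊕ Fin r) ⊕ (Fin s ⊕ Fin s)))
          ∪ Set.range (fun i : Fin s => Sum.inr (Sum.inl i))) := by
      rw [Set.image_union, ← Set.range_comp, ← Set.range_comp]
      congr 1
      · exact congrArg _ (funext hZ)
      · exact congrArg _ (funext hW)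
    have h01 : Set.range Zb ∪ Set.range Wb =
        bas '' (Set.range (fun k : Fin r => ((Sum.inl (Sum.inr k)) : (Fin r ⊕ Fin r) ⊕ (Fin s ⊕ Fin s)))
          ∪ Set.range (fun i : Fin s => Sum.inr (Sum.inr i))) := by
      rw [Set.image_union, ← Set.range_comp, ← Set.range_comp]
      congr 1
      · exact congrArg _ (funext hZb)
      · exact congrArg _ (funext hWb)
    rw [h10, h01]
    refine bas.linearIndependent.disjoint_span_image ?_
    rw [Set.disjoint_left]
    rintro a (⟨k, rfl⟩ | ⟨i, rfl⟩) h <;> rcases h with (⟨l, h⟩ | ⟨j, h⟩) <;> simp at h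
  -- the linear (1,0)-projection
  obtain ⟨f, hf1, hf2, hf3, hf4⟩ : ∃ f : (Fin r ⊕ Fin r) ⊕ (Fin s ⊕ Fin s) → L,
      (∀ k, f (.inl (.inl k)) = Z k) ∧ (∀ k, f (.inl (.inr k)) = 0) ∧
      (∀ i, f (.inr (.inl i)) = W i) ∧ (∀ i, f (.inr (.inr i)) = 0) :=
    ⟨fun i => match i with
      | .inl (.inl k) => Z k
      | .inl (.inr _) => 0
      | .inr (.inl i) => W i
      | .inr (.inr _) => 0, fun _ => rfl, fun _ => rfl, fun _ => rfl, fun _ => rfl⟩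
  obtain ⟨P10, hP10Z, hP10Zb, hP10W, hP10Wb, hP10mem⟩ :
      ∃ P10 : L →ₗ[ℂ] L, (∀ k, P10 (Z k) = Z k) ∧ (∀ k, P10 (Zb k) = 0) ∧
        (∀ i, P10 (W i) = W i) ∧ (∀ i, P10 (Wb i) = 0) ∧
        ∀ v, P10 v ∈ Submodule.span ℂ (Set.range Z ∪ Set.range W) := by
    refine ⟨bas.constr ℕ f, ?_, ?_, ?_, ?_, ?_⟩
    · intro k; conv_lhs => rw [hZ]
      rw [bas.constr_basis, hf1]
    · intro k; conv_lhs => rw [hZb]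
      rw [bas.constr_basis, hf2]
    · intro i; conv_lhs => rw [hW]
      rw [bas.constr_basis, hf3]
    · intro i; conv_lhs => rw [hWb]
      rw [bas.constr_basis, hf4]
    · intro v
      have hv : (bas.constr ℕ f) v ∈ LinearMap.range (bas.constr ℕ f) :=
        LinearMap.mem_range_self _ _
      rw [Module.Basis.constr_range] at hv
      refine Submodule.span_le.mpr ?_ hv
      rintro x ⟨i, rfl⟩
      rcases i with (k | k) | (i | i)
      · rw [hf1]; exact hZm k
      · rw [hf2]; exact Submodule.zero_mem _
      · rw [hf3]; exact hWm i
      · rw [hf4]; exact Submodule.zero_mem _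
  have hDmem : ∀ v : L, v - P10 v ∈ Submodule.span ℂ (Set.range Zb ∪ Set.range Wb) := by
    intro v
    have hv : v ∈ Submodule.span ℂ (Set.range bas) := by rw [bas.span_eq]; trivial
    induction hv using Submodule.span_induction with
    | mem x hx =>
      obtain ⟨i, rfl⟩ := hx
      rcases i with (k | k) | (i | i)
      · rw [← hZ, hP10Z, sub_self]; exact Submodule.zero_mem _
      · rw [← hZb, hP10Zb, sub_zero]; exact hZbm k
      · rw [← hW, hP10W, sub_self]; exact Submodule.zero_mem _
      · rw [← hWb, hP10Wb, sub_zero]; exact hWbm i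
    | zero => simp
    | add x y hx hy ihx ihy =>
      have h : (x + y) - P10 (x + y) = (x - P10 x) + (y - P10 y) := by rw [map_add]; abel
      rw [h]; exact Submodule.add_mem _ ihx ihy
    | smul a x hx ih =>
      have h : (a • x) - P10 (a • x) = a • (x - P10 x) := by rw [map_smul, smul_sub]
      rw [h]; exact Submodule.smul_mem _ _ ih
  -- the abstract projections agree with `P10`
  have hp10eq : ∀ v : L, p10 v = P10 v ∧ p01 v = v - P10 v := by
    intro v
    obtain ⟨h1, h2, h3⟩ := hp v
    have key : p10 v - P10 v = 0 := by
      have m1 : p10 v - P10 v ∈ Submodule.span ℂ (Set.range Z ∪ Set.range W) :=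
        Submodule.sub_mem _ h1 (hP10mem v)
      have m2 : p10 v - P10 v ∈ Submodule.span ℂ (Set.range Zb ∪ Set.range Wb) := by
        have h1' : p10 v = v - p01 v := by rw [eq_sub_iff_add_eq]; exact h3
        have h : p10 v - P10 v = (v - P10 v) - p01 v := by rw [h1']; abel
        rw [h]; exact Submodule.sub_mem _ (hDmem v) h2
      exact Submodule.disjoint_def.mp hdisj _ m1 m2
    have e1 : p10 v = P10 v := sub_eq_zero.mp key
    refine ⟨e1, ?_⟩
    have h2' : p01 v = v - p10 v := by rw [eq_sub_iff_add_eq, add_comm]; exact h3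
    rw [h2', e1]
  -- the two trace functionals
  obtain ⟨A, hAapp⟩ : ∃ A : L →ₗ[ℂ] ℂ,
      ∀ y, A y = (∑ a, ω ⁅y, Z a⁆ (Zb a)) + ∑ b, ω ⁅y, W b⁆ (Wb b) := by
    refine ⟨{ toFun := fun y => (∑ a, ω ⁅y, Z a⁆ (Zb a)) + ∑ b, ω ⁅y, W b⁆ (Wb b)
              map_add' := ?_, map_smul' := ?_ }, fun _ => rfl⟩
    · intro x y
      simp only [add_lie, map_add, LinearMap.add_apply, Finset.sum_add_distrib]
      ring
    · intro c x
      simp only [smul_lie, map_smul, LinearMap.smul_apply, smul_eq_mul, RingHom.id_apply]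
      rw [mul_add, Finset.mul_sum, Finset.mul_sum]
  obtain ⟨B, hBapp⟩ : ∃ B : L →ₗ[ℂ] ℂ,
      ∀ y, B y = (∑ a, ω ⁅y, Zb a⁆ (Z a)) + ∑ b, ω ⁅y, Wb b⁆ (W b) := by
    refine ⟨{ toFun := fun y => (∑ a, ω ⁅y, Zb a⁆ (Z a)) + ∑ b, ω ⁅y, Wb b⁆ (W b)
              map_add' := ?_, map_smul' := ?_ }, fun _ => rfl⟩
    · intro x y
      simp only [add_lie, map_add, LinearMap.add_apply, Finset.sum_add_distrib]
      ring
    · intro c x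
      simp only [smul_lie, map_smul, LinearMap.smul_apply, smul_eq_mul, RingHom.id_apply]
      rw [mul_add, Finset.mul_sum, Finset.mul_sum]
  obtain ⟨Φ, hΦapp⟩ : ∃ Φ : L →ₗ[ℂ] ℂ, ∀ v, Φ v = A (v - P10 v) + B (P10 v) :=
    ⟨A.comp (LinearMap.id - P10) + B.comp P10, fun v => by
      simp [LinearMap.sub_apply, LinearMap.add_apply, LinearMap.comp_apply]⟩
  -- rewrite the Chern-Ricci form through Φ
  have hρ2 : ∀ X Y : L, ρC X Y = -(Φ ⁅X, Y⁆) := by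
    intro X Y
    obtain ⟨e1, e2⟩ := hp10eq ⁅X, Y⁆
    rw [hρ, e1, e2, hΦapp, hAapp, hBapp, Finset.sum_add_distrib, Finset.sum_add_distrib]
    ring
  -- special values of ω
  have hωZbZ : ∀ k, ω (Zb k) (Z k) = -I := by
    intro k
    rw [skew ω hωalt, hωZZ, if_pos rfl]
  have hωWbW : ∀ b, ω (Wb b) (W b) = -I := by
    intro b
    rw [skew ω hωalt, hωWW, if_pos rfl]
  have hωWZ0 : ∀ i a, ω (W i) (Z a) = 0 := fun i a => hω10 _ (hWm i) _ (hZm a)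
  have hωWbZb0 : ∀ i a, ω (Wb i) (Zb a) = 0 := fun i a => hω01 _ (hWbm i) _ (hZbm a)
  -- values of Φ
  have hΦW : ∀ i, Φ (W i) = 0 := by
    intro i
    rw [hΦapp, hP10W, sub_self, map_zero, zero_add, hBapp]
    rw [Finset.sum_eq_zero, Finset.sum_eq_zero, add_zero]
    · intro b _
      rw [hWWb, map_zero, LinearMap.zero_apply]
    · intro a _
      rw [← lie_skew, hZbW, map_neg, map_smul, LinearMap.neg_apply, LinearMap.smul_apply,
        hωWZ0, smul_zero, neg_zero]
  have hΦWb : ∀ i, Φ (Wb i) = 0 := by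
    intro i
    rw [hΦapp, hP10Wb, sub_zero, map_zero, add_zero, hAapp]
    rw [Finset.sum_eq_zero, Finset.sum_eq_zero, add_zero]
    · intro b _
      rw [← lie_skew, hWWb, neg_zero, map_zero, LinearMap.zero_apply]
    · intro a _
      rw [← lie_skew, hZWb, map_neg, map_smul, LinearMap.neg_apply, LinearMap.smul_apply,
        hωWbZb0, smul_zero, neg_zero]
  have hBZ : ∀ k, B (Z k) = -(1/2 : ℂ) + ∑ b, (starRingEnd ℂ (lam k b)) * (-I) := by
    intro k
    rw [hBapp]
    congr 1
    · have he : ∀ a : Fin r, ω ⁅Z k, Zb a⁆ (Z a) =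
          if k = a then -(1/2 : ℂ) else 0 := by
        intro a
        rw [hZZb]
        split_ifs with h
        · subst h
          rw [map_smul, LinearMap.smul_apply, map_add, LinearMap.add_apply, hωalt, hωZbZ,
            smul_eq_mul]
          linear_combination (1/2 : ℂ) * Complex.I_mul_I
        · rw [map_zero, LinearMap.zero_apply]
      rw [Finset.sum_congr rfl (fun a _ => he a), Finset.sum_ite_eq, if_pos (Finset.mem_univ k)]
    · refine Finset.sum_congr rfl fun b _ => ?_
      rw [hZWb, map_smul, LinearMap.smul_apply, hωWbW, smul_eq_mul]
  have hAZb : ∀ k, A (Zb k) = -(1/2 : ℂ) + ∑ b, (lam k b) * I := by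
    intro k
    rw [hAapp]
    congr 1
    · have he : ∀ a : Fin r, ω ⁅Zb k, Z a⁆ (Zb a) =
          if a = k then -(1/2 : ℂ) else 0 := by
        intro a
        rw [← lie_skew, hZZb]
        split_ifs with h
        · subst h
          rw [map_neg, map_smul, LinearMap.neg_apply, LinearMap.smul_apply, map_add,
            LinearMap.add_apply, hωalt, hωZZ, if_pos rfl, smul_eq_mul]
          linear_combination (1/2 : ℂ) * Complex.I_mul_I
        · rw [neg_zero, map_zero, LinearMap.zero_apply]
      rw [Finset.sum_congr rfl (fun a _ => he a)]
      rw [Finset.sum_ite_eq', if_pos (Finset.mem_univ k)]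
    · refine Finset.sum_congr rfl fun b _ => ?_
      rw [hZbW, map_smul, LinearMap.smul_apply, hωWW, if_pos rfl, smul_eq_mul]
  have hΦZZb : ∀ k, Φ (Z k + Zb k) = -(1/2 : ℂ) := by
    intro k
    rw [hΦapp, map_add, hP10Z, hP10Zb, add_zero]
    have h : Z k + Zb k - Z k = Zb k := by abel
    rw [h, hAZb, hBZ]
    have hcomb : (∑ b, (lam k b) * I) + ∑ b, (starRingEnd ℂ (lam k b)) * (-I)
        = (1/2 : ℂ) := by
      rw [← Finset.sum_add_distrib]
      have he : ∀ b : Fin s, (lam k b) * I + (starRingEnd ℂ (lam k b)) * (-I)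
          = -(2 * ((lam k b).im : ℂ)) := by
        intro b
        have h := Complex.sub_conj (lam k b)
        have h2 := Complex.I_mul_I
        push_cast at h ⊢
        linear_combination I * h + 2 * ((lam k b).im : ℂ) * h2
      rw [Finset.sum_congr rfl fun b _ => he b]
      have : ∑ b, -(2 * ((lam k b).im : ℂ)) = -2 * ((∑ b, (lam k b).im : ℝ) : ℂ) := by
        push_cast
        rw [Finset.mul_sum]
        exact Finset.sum_congr rfl fun b _ => by ring
      rw [this, hlam_sum k]
      norm_num
    linear_combination hcomb
  -- the bilinear version of the Chern-Ricci form
  obtain ⟨R, hRapp⟩ : ∃ R : L →ₗ[ℂ] L →ₗ[ℂ] ℂ, ∀ X Y, R X Y = Φ ⁅X, Y⁆ :=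
    ⟨LinearMap.mk₂ ℂ (fun X Y => Φ ⁅X, Y⁆)
      (fun m₁ m₂ n => by simp only [add_lie, map_add])
      (fun c m n => by simp only [smul_lie, map_smul])
      (fun m n₁ n₂ => by simp only [lie_add, map_add])
      (fun c m n => by simp only [lie_smul, map_smul]), fun _ _ => rfl⟩
  have hReq : R = ωinf := by
    refine bas.ext fun i => bas.ext fun j => ?_
    rcases i with (k | k) | (k | k) <;> rcases j with (l | l) | (l | l) <;>
      simp only [← hZ, ← hZb, ← hW, ← hWb]
    · -- Z Z
      rw [hRapp, hZZ, map_zero, hωinfZ10]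
    · -- Z Zb
      rw [hRapp, hZZb, hωinfZZ]
      split_ifs with h
      · rw [map_smul, hΦZZb, smul_eq_mul]
        ring
      · rw [map_zero]
    · -- Z W
      rw [hRapp, hZW, map_smul, hΦW, smul_zero, hωinfZW]
    · -- Z Wb
      rw [hRapp, hZWb, map_smul, hΦWb, smul_zero, hωinfZWb]
    · -- Zb Z
      rw [hRapp, ← lie_skew, hZZb, skew ωinf hωinfalt, hωinfZZ]
      split_ifs with h
      · rw [map_neg, map_smul, hΦZZb, smul_eq_mul]
        ring
      · rw [neg_zero, map_zero, neg_zero]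
    · -- Zb Zb
      rw [hRapp, hZbZb, map_zero, hωinfZb]
    · -- Zb W
      rw [hRapp, hZbW, map_smul, hΦW, smul_zero, hωinfZbW]
    · -- Zb Wb
      rw [hRapp, hZbWb, map_smul, hΦWb, smul_zero, hωinfZbWb]
    · -- W Z
      rw [hRapp, ← lie_skew, hZW, map_neg, map_smul, hΦW, smul_zero, neg_zero,
        skew ωinf hωinfalt, hωinfZW, neg_zero]
    · -- W Zb
      rw [hRapp, ← lie_skew, hZbW, map_neg, map_smul, hΦW, smul_zero, neg_zero,
        skew ωinf hωinfalt, hωinfZbW, neg_zero]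
    · -- W W
      rw [hRapp, hWW, map_zero, hωinfW]
    · -- W Wb
      rw [hRapp, hWWb, map_zero, hωinfWWb]
    · -- Wb Z
      rw [hRapp, ← lie_skew, hZWb, map_neg, map_smul, hΦWb, smul_zero, neg_zero,
        skew ωinf hωinfalt, hωinfZWb, neg_zero]
    · -- Wb Zb
      rw [hRapp, ← lie_skew, hZbWb, map_neg, map_smul, hΦWb, smul_zero, neg_zero,
        skew ωinf hωinfalt, hωinfZbWb, neg_zero]
    · -- Wb W
      rw [hRapp, ← lie_skew, hWWb, neg_zero, map_zero,
        skew ωinf hωinfalt, hωinfWWb, neg_zero]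
    · -- Wb Wb
      rw [hRapp, hWbWb, map_zero, hωinfWb]
  have hmain : ∀ X Y : L, ρC X Y = -(ωinf X Y) := by
    intro X Y
    rw [hρ2, ← hRapp, hReq]
  refine ⟨?_, ?_, ?_, ?_, ?_, ?_, hmain⟩
  · intro i j
    rw [hmain, hωinfZZ]
    split_ifs <;> simp
  · intro i j
    rw [hmain, hωinfWWb, neg_zero]
  · intro i j
    rw [hmain, hωinfZWb, neg_zero]
  · intro i j
    rw [hmain, skew ωinf hωinfalt, hωinfZbW, neg_zero, neg_zero]
  · intro x hx y hy
    rw [hmain]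
    have h0 : ωinf x y = 0 := by
      induction hx, hy using Submodule.span_induction₂ with
      | mem_mem u v hu hv =>
        rcases hu with (⟨k, rfl⟩ | ⟨i, rfl⟩) <;> rcases hv with (⟨l, rfl⟩ | ⟨j, rfl⟩)
        · exact hωinfZ10 k l
        · exact hωinfZW k j
        · rw [skew ωinf hωinfalt, hωinfZW, neg_zero]
        · exact hωinfW i j
      | zero_left v hv => simp
      | zero_right u hu => simp
      | add_left x y z hx hy hz h1 h2 => simp [map_add, h1, h2]
      | add_right x y z hx hy hz h1 h2 => simp [map_add, h1, h2]
      | smul_left r x y hx hy h => simp [map_smul, h]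
      | smul_right r x y hx hy h => simp [map_smul, h]
    rw [h0, neg_zero]
  · intro x hx y hy
    rw [hmain]
    have h0 : ωinf x y = 0 := by
      induction hx, hy using Submodule.span_induction₂ with
      | mem_mem u v hu hv =>
        rcases hu with (⟨k, rfl⟩ | ⟨i, rfl⟩) <;> rcases hv with (⟨l, rfl⟩ | ⟨j, rfl⟩)
        · exact hωinfZb k l
        · exact hωinfZbWb k j
        · rw [skew ωinf hωinfalt, hωinfZbWb, neg_zero]
        · exact hωinfWb i j
      | zero_left v hv => simp
      | zero_right u hu => simp
      | add_left x y z hx hy hz h1 h2 => simp [map_add, h1, h2]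
      | add_right x y z hx hy hz h1 h2 => simp [map_add, h1, h2]
      | smul_left r x y hx hy h => simp [map_smul, h]
      | smul_right r x y hx hy h => simp [map_smul, h]
    rw [h0, neg_zero]
end

section
/- The following are equivalent: (a) there exist a nonzero real number c and a ℂ-linear derivation D of 𝔤 with D(𝔤^{1,0}) ⊆ 𝔤^{1,0} and D(𝔤^{0,1}) ⊆ 𝔤^{0,1} such that P X = c·X + D X for every X ∈ 𝔤^{1,0}; (b) there exists A > 0 such that g_{i j̄} = A·δ_{ij} for all 1 ≤ i, j ≤ r and g_{i,(r+j)‾} = 0 for all 1 ≤ i ≤ r and 1 ≤ j ≤ s. Moreover, when (a) and (b) hold, necessarily c = −1/(4A). (This characterizes the left-invariant Hermitian metrics on an Oeljeklaus-Toma manifold which lift to an expanding algebraic soliton of the Chern-Ricci flow on the universal covering.) -/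
open Complex
open scoped ComplexOrder

set_option maxHeartbeats 1600000 in
/-- On the Lie algebra of the universal covering of an Oeljeklaus-Toma
manifold, for a left-invariant Hermitian metric `(g_{a b̄})` with associated Chern-Ricci
endomorphism `P` (where `ρ_C = −ω_∞` is metric-independent), the following are equivalent:
(a) `P = c·Id + D` on `𝔤^{1,0}` for some nonzero real `c` and a derivation `D` preserving
`𝔤^{1,0}` and `𝔤^{0,1}`; (b) `g_{i j̄} = A·δ_{ij}` on the `Z`-block for some `A > 0` and
`g_{i,(r+j)‾} = 0`. Moreover, in that case `c = −1/(4A)`. -/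
theorem stmt_11 (r s : ℕ) (hr : 1 ≤ r) (hs : 1 ≤ s)
    (lam : Fin r → Fin s → ℂ) (hlam : ∀ k i, lam k i ≠ I / 2)
    (L : Type*) [LieRing L] [LieAlgebra ℂ L]
    (bas : Module.Basis ((Fin r ⊕ Fin r) ⊕ (Fin s ⊕ Fin s)) ℂ L)
    (Z Zb : Fin r → L) (W Wb : Fin s → L)
    (hZ : ∀ k, Z k = bas (Sum.inl (Sum.inl k)))
    (hZb : ∀ k, Zb k = bas (Sum.inl (Sum.inr k)))
    (hW : ∀ i, W i = bas (Sum.inr (Sum.inl i)))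
    (hWb : ∀ i, Wb i = bas (Sum.inr (Sum.inr i)))
    (hZZb : ∀ k l, ⁅Z k, Zb l⁆ = if k = l then (-(I / 2)) • (Z k + Zb k) else 0)
    (hZZ : ∀ k l, ⁅Z k, Z l⁆ = 0)
    (hZbZb : ∀ k l, ⁅Zb k, Zb l⁆ = 0)
    (hZW : ∀ k i, ⁅Z k, W i⁆ = (-(lam k i)) • W i)
    (hZbWb : ∀ k i, ⁅Zb k, Wb i⁆ = (-(starRingEnd ℂ (lam k i))) • Wb i)
    (hZWb : ∀ k i, ⁅Z k, Wb i⁆ = (starRingEnd ℂ (lam k i)) • Wb i)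
    (hZbW : ∀ k i, ⁅Zb k, W i⁆ = (lam k i) • W i)
    (hWW : ∀ i j, ⁅W i, W j⁆ = 0)
    (hWbWb : ∀ i j, ⁅Wb i, Wb j⁆ = 0)
    (hWWb : ∀ i j, ⁅W i, Wb j⁆ = 0)
    -- the frame `{X_1,…,X_{r+s}} = {Z_1,…,Z_r,W_1,…,W_s}` of `𝔤^{1,0}`
    (Xf : Fin r ⊕ Fin s → L)
    (hXf : ∀ k : Fin r, Xf (Sum.inl k) = Z k)
    (hXfW : ∀ i : Fin s, Xf (Sum.inr i) = W i)
    -- a positive-definite Hermitian matrix `g` with inverse `ginv`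
    (g ginv : Fin r ⊕ Fin s → Fin r ⊕ Fin s → ℂ)
    (hherm : ∀ a b, g a b = starRingEnd ℂ (g b a))
    (hposdef : (Matrix.of g).PosDef)
    (hinv : ∀ a b, ∑ cc, g a cc * ginv cc b = if a = b then 1 else 0)
    -- the matrix of the Chern-Ricci form `ρ_C = −ω_∞`
    (ρc : Fin r ⊕ Fin s → Fin r ⊕ Fin s → ℂ)
    (hρc : ∀ a b, ρc a b = match a, b with
      | Sum.inl i, Sum.inl j => if i = j then -(1 / 4) else 0
      | _, _ => 0)
    -- the associated endomorphism `P`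
    (P : L →ₗ[ℂ] L)
    (hP : ∀ a, P (Xf a) = ∑ b, (∑ cc, ρc a cc * ginv cc b) • Xf b) :
    ((∃ c : ℝ, c ≠ 0 ∧ ∃ D : L →ₗ[ℂ] L,
        (∀ x y : L, D ⁅x, y⁆ = ⁅D x, y⁆ + ⁅x, D y⁆) ∧
        (∀ x ∈ Submodule.span ℂ (Set.range Z ∪ Set.range W),
          D x ∈ Submodule.span ℂ (Set.range Z ∪ Set.range W)) ∧
        (∀ x ∈ Submodule.span ℂ (Set.range Zb ∪ Set.range Wb),
          D x ∈ Submodule.span ℂ (Set.range Zb ∪ Set.range Wb)) ∧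
        (∀ v ∈ Submodule.span ℂ (Set.range Z ∪ Set.range W),
          P v = (c : ℂ) • v + D v)) ↔
      (∃ A : ℝ, 0 < A ∧
        (∀ i j : Fin r, g (Sum.inl i) (Sum.inl j) = if i = j then (A : ℂ) else 0) ∧
        (∀ (i : Fin r) (j : Fin s), g (Sum.inl i) (Sum.inr j) = 0))) ∧
    (∀ (c A : ℝ) (D : L →ₗ[ℂ] L), c ≠ 0 →
      (∀ x y : L, D ⁅x, y⁆ = ⁅D x, y⁆ + ⁅x, D y⁆) →
      (∀ x ∈ Submodule.span ℂ (Set.range Z ∪ Set.range W),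
        D x ∈ Submodule.span ℂ (Set.range Z ∪ Set.range W)) →
      (∀ x ∈ Submodule.span ℂ (Set.range Zb ∪ Set.range Wb),
        D x ∈ Submodule.span ℂ (Set.range Zb ∪ Set.range Wb)) →
      (∀ v ∈ Submodule.span ℂ (Set.range Z ∪ Set.range W),
        P v = (c : ℂ) • v + D v) →
      0 < A →
      (∀ i j : Fin r, g (Sum.inl i) (Sum.inl j) = if i = j then (A : ℂ) else 0) →
      (∀ (i : Fin r) (j : Fin s), g (Sum.inl i) (Sum.inr j) = 0) →
      c = -(1 / (4 * A))) := by
  classical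
  -- reversed bracket relations
  have hWZ : ∀ (i : Fin s) (k : Fin r), ⁅W i, Z k⁆ = (lam k i) • W i := by
    intro i k; rw [← lie_skew, hZW]; simp
  have hWbZ : ∀ (i : Fin s) (k : Fin r),
      ⁅Wb i, Z k⁆ = -((starRingEnd ℂ (lam k i)) • Wb i) := by
    intro i k; rw [← lie_skew, hZWb]
  have hWZb : ∀ (i : Fin s) (k : Fin r), ⁅W i, Zb k⁆ = -((lam k i) • W i) := by
    intro i k; rw [← lie_skew, hZbW]
  have hWbZb : ∀ (i : Fin s) (k : Fin r),
      ⁅Wb i, Zb k⁆ = (starRingEnd ℂ (lam k i)) • Wb i := by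
    intro i k; rw [← lie_skew, hZbWb]; simp
  have hWbW : ∀ (i j : Fin s), ⁅Wb j, W i⁆ = 0 := by
    intro i j; rw [← lie_skew, hWWb]; simp
  have hZbZ : ∀ (k l : Fin r),
      ⁅Zb l, Z k⁆ = if k = l then (I / 2) • (Z k + Zb k) else 0 := by
    intro k l; rw [← lie_skew, hZZb]; split <;> simp [smul_add] <;> abel
  -- finite-sum bracket expansions
  have sum_lie : ∀ (f : ((Fin r ⊕ Fin r) ⊕ (Fin s ⊕ Fin s)) → L) (y : L),
      ⁅∑ a, f a, y⁆ = ∑ a, ⁅f a, y⁆ := by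
    intro f y
    exact _root_.sum_lie Finset.univ f y
  have lie_sum : ∀ (f : ((Fin r ⊕ Fin r) ⊕ (Fin s ⊕ Fin s)) → L) (y : L),
      ⁅y, ∑ a, f a⁆ = ∑ a, ⁅y, f a⁆ := by
    intro f y
    have h := map_sum (LieAlgebra.ad ℂ L y) f Finset.univ
    simpa [LieAlgebra.ad_apply] using h
  -- membership facts
  have memZ : ∀ k, Z k ∈ Submodule.span ℂ (Set.range Z ∪ Set.range W) :=
    fun k => Submodule.subset_span (Set.mem_union_left _ ⟨k, rfl⟩)
  have memW : ∀ i, W i ∈ Submodule.span ℂ (Set.range Z ∪ Set.range W) :=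
    fun i => Submodule.subset_span (Set.mem_union_right _ ⟨i, rfl⟩)
  have memZb : ∀ k, Zb k ∈ Submodule.span ℂ (Set.range Zb ∪ Set.range Wb) :=
    fun k => Submodule.subset_span (Set.mem_union_left _ ⟨k, rfl⟩)
  have memWb : ∀ i, Wb i ∈ Submodule.span ℂ (Set.range Zb ∪ Set.range Wb) :=
    fun i => Submodule.subset_span (Set.mem_union_right _ ⟨i, rfl⟩)
  -- coordinate vanishing on the spans
  have coord10 : ∀ (t : (Fin r ⊕ Fin r) ⊕ (Fin s ⊕ Fin s)),
      (∀ l, t ≠ Sum.inl (Sum.inl l)) → (∀ j, t ≠ Sum.inr (Sum.inl j)) →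
      ∀ x ∈ Submodule.span ℂ (Set.range Z ∪ Set.range W), bas.repr x t = 0 := by
    intro t h1 h2 x hx
    induction hx using Submodule.span_induction with
    | mem y hy =>
      simp only [Set.mem_union, Set.mem_range] at hy
      rcases hy with ⟨k, rfl⟩ | ⟨i, rfl⟩
      · simp [hZ, Finsupp.single_apply, Ne.symm (h1 k)]
      · simp [hW, Finsupp.single_apply, Ne.symm (h2 i)]
    | zero => simp
    | add x y hx hy ihx ihy => simp [ihx, ihy]
    | smul a x hx ih => simp [ih]
  have coord01 : ∀ (t : (Fin r ⊕ Fin r) ⊕ (Fin s ⊕ Fin s)),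
      (∀ l, t ≠ Sum.inl (Sum.inr l)) → (∀ j, t ≠ Sum.inr (Sum.inr j)) →
      ∀ x ∈ Submodule.span ℂ (Set.range Zb ∪ Set.range Wb), bas.repr x t = 0 := by
    intro t h1 h2 x hx
    induction hx using Submodule.span_induction with
    | mem y hy =>
      simp only [Set.mem_union, Set.mem_range] at hy
      rcases hy with ⟨k, rfl⟩ | ⟨i, rfl⟩
      · simp [hZb, Finsupp.single_apply, Ne.symm (h1 k)]
      · simp [hWb, Finsupp.single_apply, Ne.symm (h2 i)]
    | zero => simp
    | add x y hx hy ihx ihy => simp [ihx, ihy]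
    | smul a x hx ih => simp [ih]
  -- key fact: a derivation preserving both spans kills the Z's
  have keyD : ∀ D : L →ₗ[ℂ] L,
      (∀ x y : L, D ⁅x, y⁆ = ⁅D x, y⁆ + ⁅x, D y⁆) →
      (∀ x ∈ Submodule.span ℂ (Set.range Z ∪ Set.range W),
        D x ∈ Submodule.span ℂ (Set.range Z ∪ Set.range W)) →
      (∀ x ∈ Submodule.span ℂ (Set.range Zb ∪ Set.range Wb),
        D x ∈ Submodule.span ℂ (Set.range Zb ∪ Set.range Wb)) →
      ∀ k, D (Z k) = 0 := by
    intro D hder h10 h01 k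
    have hu10 := h10 _ (memZ k)
    have hv01 := h01 _ (memZb k)
    set u := D (Z k) with hudef
    set v := D (Zb k) with hvdef
    have hu1 : ∀ l, bas.repr u (Sum.inl (Sum.inr l)) = 0 :=
      fun l => coord10 _ (by simp) (by simp) u hu10
    have hu2 : ∀ j, bas.repr u (Sum.inr (Sum.inr j)) = 0 :=
      fun j => coord10 _ (by simp) (by simp) u hu10
    have hv1 : ∀ l, bas.repr v (Sum.inl (Sum.inl l)) = 0 :=
      fun l => coord01 _ (by simp) (by simp) v hv01
    have hv2 : ∀ j, bas.repr v (Sum.inr (Sum.inl j)) = 0 :=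
      fun j => coord01 _ (by simp) (by simp) v hv01
    have E := hder (Z k) (Zb k)
    rw [hZZb k k, if_pos rfl, map_smul, map_add, ← hudef, ← hvdef] at E
    have hbu : ⁅u, Zb k⁆ =
        (bas.repr u (Sum.inl (Sum.inl k))) • ((-(I / 2)) • (Z k + Zb k))
          + ∑ j, (bas.repr u (Sum.inr (Sum.inl j))) • (-((lam k j) • W j)) := by
      conv_lhs => rw [← bas.sum_repr u]
      rw [sum_lie]
      simp only [smul_lie, Fintype.sum_sum_type, ← hZ, ← hZb, ← hW, ← hWb,
        hZZb, hZbZb, hWZb, hWbZb, hu1, hu2, zero_smul, Finset.sum_const_zero,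
        add_zero, smul_ite, smul_zero]
      rw [Finset.sum_ite_eq' Finset.univ k]
      simp
    have hbv : ⁅Z k, v⁆ =
        (bas.repr v (Sum.inl (Sum.inr k))) • ((-(I / 2)) • (Z k + Zb k))
          + ∑ j, (bas.repr v (Sum.inr (Sum.inr j))) • ((starRingEnd ℂ (lam k j)) • Wb j) := by
      conv_lhs => rw [← bas.sum_repr v]
      rw [lie_sum]
      simp only [lie_smul, Fintype.sum_sum_type, ← hZ, ← hZb, ← hW, ← hWb,
        hZZb, hZZ, hZW, hZWb, hv1, hv2, zero_smul, Finset.sum_const_zero,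
        add_zero, zero_add, smul_ite, smul_zero]
      rw [Finset.sum_ite_eq Finset.univ k]
      simp
    rw [hbu, hbv] at E
    set cu := bas.repr u (Sum.inl (Sum.inl k)) with hcud
    set cv := bas.repr v (Sum.inl (Sum.inr k)) with hcvd
    -- coefficient extraction
    have h4 : ∀ j0, bas.repr u (Sum.inr (Sum.inl j0)) = 0 := by
      intro j0
      have h := congrArg (fun w => bas.repr w (Sum.inr (Sum.inl j0))) E
      simp [hZ, hZb, hW, hWb, Finsupp.single_apply, hv2 j0] at h
      have h5 : bas.repr u (Sum.inr (Sum.inl j0)) * (lam k j0 - I / 2) = 0 := by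
        linear_combination -h
      rcases mul_eq_zero.mp h5 with h6 | h6
      · exact h6
      · exact absurd (sub_eq_zero.mp h6) (hlam k j0)
    have hI : (I / 2 : ℂ) ≠ 0 := by simp [I_ne_zero]
    have h1 := congrArg (fun w => bas.repr w (Sum.inl (Sum.inl k))) E
    have h2 := congrArg (fun w => bas.repr w (Sum.inl (Sum.inr k))) E
    simp [hZ, hZb, hW, hWb, Finsupp.single_apply, hv1 k, hu1 k, ← hcud, ← hcvd] at h1 h2
    have hcv0 : cv = 0 := by
      have hx : cv * (I / 2) = 0 := by linear_combination h1
      exact (mul_eq_zero.mp hx).resolve_right hI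
    have hcu0 : cu = 0 := by
      have hx : cu * (I / 2) = 0 := by linear_combination h2
      exact (mul_eq_zero.mp hx).resolve_right hI
    have h3 : ∀ l, bas.repr u (Sum.inl (Sum.inl l)) = 0 := by
      intro l
      have h := congrArg (fun w => bas.repr w (Sum.inl (Sum.inl l))) E
      simpa [hZ, hZb, hW, hWb, Finsupp.single_apply, hv1 l, ← hcud, ← hcvd, hcv0, hcu0] using h
    have hrepr0 : bas.repr u = 0 := by
      ext t
      rcases t with (l | l) | (j | j)
      · simpa using h3 l
      · simpa using hu1 l
      · simpa using h4 j
      · simpa using hu2 j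
    exact bas.repr.map_eq_zero_iff.mp (by simpa using hrepr0)
  -- the value of P on the frame
  have hPZ : ∀ k : Fin r, P (Z k) = ∑ b, (-(1/4) * ginv (Sum.inl k) b) • Xf b := by
    intro k
    rw [← hXf k, hP]
    refine Finset.sum_congr rfl fun b _ => ?_
    congr 1
    rw [Fintype.sum_sum_type]
    simp [hρc, ite_mul, Finset.sum_ite_eq]
  have hPW : ∀ i : Fin s, P (W i) = 0 := by
    intro i
    rw [← hXfW i, hP]
    have : ∀ b, (∑ cc, ρc (Sum.inr i) cc * ginv cc b) = 0 := by
      intro b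
      refine Finset.sum_eq_zero fun cc _ => ?_
      rcases cc with a | a <;> simp [hρc]
    simp [this]
  -- extraction of the inverse-metric row from an eigenvalue equation for P
  have extractGinv : ∀ (k : Fin r) (d : ℂ), P (Z k) = d • Z k →
      ∀ b, ginv (Sum.inl k) b = if b = Sum.inl k then -4 * d else 0 := by
    intro k d hPk b
    have E : ∑ b, (-(1/4) * ginv (Sum.inl k) b) • Xf b = d • Z k := by
      rw [← hPZ k, hPk]
    rw [Fintype.sum_sum_type] at E
    simp only [hXf, hXfW, hZ, hW] at E
    rcases b with l | j
    · have h := congrArg (fun w => bas.repr w (Sum.inl (Sum.inl l))) E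
      simp [Finsupp.single_apply] at h
      rcases eq_or_ne l k with rfl | hlk
      · rw [if_pos rfl]
        simp at h
        linear_combination -4 * h
      · rw [if_neg (by simpa using hlk)]
        rw [if_neg (Ne.symm (by simpa using hlk))] at h
        linear_combination -4 * h
    · have h := congrArg (fun w => bas.repr w (Sum.inr (Sum.inl j))) E
      simp [Finsupp.single_apply] at h
      rw [if_neg (by simp)]
      exact h
  -- rows of `ginv` when the metric has the special block form
  have ginvRow : ∀ (A : ℝ), 0 < A →
      (∀ i j : Fin r, g (Sum.inl i) (Sum.inl j) = if i = j then (A : ℂ) else 0) →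
      (∀ (i : Fin r) (j : Fin s), g (Sum.inl i) (Sum.inr j) = 0) →
      ∀ (k : Fin r) (b : Fin r ⊕ Fin s),
        ginv (Sum.inl k) b = if Sum.inl k = b then ((A : ℂ))⁻¹ else 0 := by
    intro A hA hgZ hgW k b
    have hA0 : (A : ℂ) ≠ 0 := by exact_mod_cast hA.ne'
    have h := hinv (Sum.inl k) b
    rw [Fintype.sum_sum_type] at h
    simp only [hgZ, hgW, ite_mul, zero_mul, Finset.sum_ite_eq, Finset.mem_univ,
      if_true, Finset.sum_const_zero, add_zero] at h
    rcases eq_or_ne (Sum.inl k : Fin r ⊕ Fin s) b with rfl | hne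
    · rw [if_pos rfl] at h ⊢
      field_simp at h ⊢
      linear_combination h
    · rw [if_neg hne] at h ⊢
      exact (mul_eq_zero.mp h).resolve_left hA0
  -- value of P on Z when the metric has the special block form
  have hPZofA : ∀ (A : ℝ), 0 < A →
      (∀ i j : Fin r, g (Sum.inl i) (Sum.inl j) = if i = j then (A : ℂ) else 0) →
      (∀ (i : Fin r) (j : Fin s), g (Sum.inl i) (Sum.inr j) = 0) →
      ∀ k : Fin r, P (Z k) = (-(1/4) * ((A : ℂ))⁻¹) • Z k := by
    intro A hA hgZ hgW k
    rw [hPZ k, Fintype.sum_sum_type]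
    simp only [ginvRow A hA hgZ hgW k, hXf, hXfW]
    simp [Finset.sum_ite_eq, mul_ite, Sum.inl.injEq]
  -- ginv * g = 1
  have hGinvG : ∀ (aa bb : Fin r ⊕ Fin s),
      ∑ cc, ginv aa cc * g cc bb = if aa = bb then 1 else 0 := by
    have h1 : (Matrix.of g) * (Matrix.of ginv) = 1 := by
      ext aa bb
      simpa [Matrix.mul_apply, Matrix.one_apply] using hinv aa bb
    have h2 := mul_eq_one_comm.mp h1
    intro aa bb
    have h3 := congrFun (congrFun h2 aa) bb
    simpa [Matrix.mul_apply, Matrix.one_apply] using h3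
  -- positivity of the diagonal of g
  have hdiag : ∀ aa : Fin r ⊕ Fin s, 0 < g aa aa := by
    intro aa
    have hx : (Pi.single aa 1 : Fin r ⊕ Fin s → ℂ) ≠ 0 := by
      intro hcon
      have := congrFun hcon aa
      simp at this
    have h := hposdef.diag_pos (i := aa)
    simpa [Matrix.mulVec_single, dotProduct, Pi.star_apply, Pi.single_apply,
      apply_ite, star_one, star_zero, ite_mul, Finset.sum_ite_eq'] using h
  refine ⟨⟨?_, ?_⟩, ?_⟩
  · -- (a) → (b)
    rintro ⟨c, hc, D, hder, h10, h01, hPc⟩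
    have hDZ := keyD D hder h10 h01
    have hPZc : ∀ k, P (Z k) = (c : ℂ) • Z k := fun k => by
      rw [hPc (Z k) (memZ k), hDZ, add_zero]
    have hginv := fun k => extractGinv k (c : ℂ) (hPZc k)
    have hgrow : ∀ (k : Fin r) (bb : Fin r ⊕ Fin s),
        (-4 * (c:ℂ)) * g (Sum.inl k) bb = if Sum.inl k = bb then 1 else 0 := by
      intro k bb
      have h := hGinvG (Sum.inl k) bb
      simp only [hginv k, ite_mul, zero_mul, Finset.sum_ite_eq', Finset.mem_univ,
        if_true] at h
      exact h
    have hc4 : (-4 * (c:ℂ)) ≠ 0 := by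
      simp [Complex.ofReal_ne_zero, hc]
    set A : ℝ := (-(4*c))⁻¹ with hAdef
    have hAC : ((A : ℝ) : ℂ) = (-4 * (c:ℂ))⁻¹ := by
      rw [hAdef]; push_cast; ring_nf
    have hgkkA : ∀ k : Fin r, g (Sum.inl k) (Sum.inl k) = (A : ℂ) := by
      intro k
      have h := hgrow k (Sum.inl k)
      rw [if_pos rfl] at h
      rw [hAC]
      exact eq_inv_of_mul_eq_one_right h
    have hApos : 0 < A := by
      have h0 := hdiag (Sum.inl ⟨0, hr⟩)
      rw [hgkkA ⟨0, hr⟩] at h0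
      exact Complex.zero_lt_real.mp h0
    refine ⟨A, hApos, ?_, ?_⟩
    · intro i j
      have h := hgrow i (Sum.inl j)
      rcases eq_or_ne i j with rfl | hij
      · rw [if_pos rfl]; exact hgkkA i
      · rw [if_neg hij]
        rw [if_neg (by simpa using hij)] at h
        exact (mul_eq_zero.mp h).resolve_left hc4
    · intro i j
      have h := hgrow i (Sum.inr j)
      rw [if_neg (by simp)] at h
      exact (mul_eq_zero.mp h).resolve_left hc4
  · -- (b) → (a)
    rintro ⟨A, hA, hgZ, hgW⟩
    have hA0 : (A:ℝ) ≠ 0 := hA.ne'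
    have hc : (-(1/(4*A)) : ℝ) ≠ 0 := by
      have h1 : (0:ℝ) < 1/(4*A) := by positivity
      exact neg_ne_zero.mpr h1.ne'
    set μ : ℂ := (4 * (A:ℂ))⁻¹ with hμdef
    set D : L →ₗ[ℂ] L := Module.Basis.constr bas ℂ
      (Sum.elim (fun _ => (0:L))
        (Sum.elim (fun j => μ • W j) (fun j => μ • Wb j))) with hDdef
    have hDZ : ∀ k, D (Z k) = 0 := by
      intro k; rw [hZ, hDdef, Module.Basis.constr_basis]; simp
    have hDZb : ∀ k, D (Zb k) = 0 := by
      intro k; rw [hZb, hDdef, Module.Basis.constr_basis]; simp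
    have hDW : ∀ i, D (W i) = μ • W i := by
      intro i; rw [hW, hDdef, Module.Basis.constr_basis]; simp [← hW]
    have hDWb : ∀ i, D (Wb i) = μ • Wb i := by
      intro i; rw [hWb, hDdef, Module.Basis.constr_basis]; simp [← hWb]
    have hb : ∀ t t', D ⁅bas t, bas t'⁆ = ⁅D (bas t), bas t'⁆ + ⁅bas t, D (bas t')⁆ := by
      intro t t'
      rcases t with (k | k) | (i | i) <;> rcases t' with (l | l) | (j | j) <;>
        simp only [← hZ, ← hZb, ← hW, ← hWb] <;>
        simp only [hZZb, hZZ, hZbZb, hZW, hZbWb, hZWb, hZbW, hWW, hWbWb, hWWb,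
          hWZ, hWbZ, hWZb, hWbZb, hZbZ, hWbW] <;>
        ((try split_ifs) <;>
        simp [hZZb, hZZ, hZbZb, hZW, hZbWb, hZWb, hZbW, hWW, hWbWb, hWWb,
          hWZ, hWbZ, hWZb, hWbZb, hZbZ, hWbW,
          hDZ, hDZb, hDW, hDWb, smul_smul, mul_comm, smul_add, lie_smul, smul_lie,
          map_smul, map_add])
    have hder : ∀ x y : L, D ⁅x, y⁆ = ⁅D x, y⁆ + ⁅x, D y⁆ := by
      intro x y
      have hx : x ∈ Submodule.span ℂ (Set.range bas) := by
        rw [Module.Basis.span_eq]; trivial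
      have hy : y ∈ Submodule.span ℂ (Set.range bas) := by
        rw [Module.Basis.span_eq]; trivial
      induction hx, hy using Submodule.span_induction₂ with
      | mem_mem x y hx hy =>
        obtain ⟨t, rfl⟩ := hx; obtain ⟨t', rfl⟩ := hy; exact hb t t'
      | zero_left y hy => simp
      | zero_right x hx => simp
      | add_left x y z hx hy hz ih1 ih2 =>
        simp only [add_lie, map_add, ih1, ih2]; abel
      | add_right x y z hx hy hz ih1 ih2 =>
        simp only [lie_add, map_add, ih1, ih2]; abel
      | smul_left a x y hx hy ih =>
        simp only [smul_lie, map_smul, ih, smul_add]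
      | smul_right a x y hx hy ih =>
        simp only [lie_smul, map_smul, ih, smul_add]
    have h10 : ∀ x ∈ Submodule.span ℂ (Set.range Z ∪ Set.range W),
        D x ∈ Submodule.span ℂ (Set.range Z ∪ Set.range W) := by
      intro x hx
      induction hx using Submodule.span_induction with
      | mem y hy =>
        simp only [Set.mem_union, Set.mem_range] at hy
        rcases hy with ⟨k, rfl⟩ | ⟨i, rfl⟩
        · rw [hDZ]; exact Submodule.zero_mem _
        · rw [hDW]; exact Submodule.smul_mem _ _ (memW i)
      | zero => simp
      | add x y hx hy ihx ihy => rw [map_add]; exact Submodule.add_mem _ ihx ihy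
      | smul a x hx ih => rw [map_smul]; exact Submodule.smul_mem _ _ ih
    have h01 : ∀ x ∈ Submodule.span ℂ (Set.range Zb ∪ Set.range Wb),
        D x ∈ Submodule.span ℂ (Set.range Zb ∪ Set.range Wb) := by
      intro x hx
      induction hx using Submodule.span_induction with
      | mem y hy =>
        simp only [Set.mem_union, Set.mem_range] at hy
        rcases hy with ⟨k, rfl⟩ | ⟨i, rfl⟩
        · rw [hDZb]; exact Submodule.zero_mem _
        · rw [hDWb]; exact Submodule.smul_mem _ _ (memWb i)
      | zero => simp
      | add x y hx hy ihx ihy => rw [map_add]; exact Submodule.add_mem _ ihx ihy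
      | smul a x hx ih => rw [map_smul]; exact Submodule.smul_mem _ _ ih
    have hcoef : ((-(1/(4*A)) : ℝ) : ℂ) = -(1/4) * ((A:ℂ))⁻¹ := by
      push_cast; field_simp
    refine ⟨-(1/(4*A)), hc, D, hder, h10, h01, ?_⟩
    intro v hv
    induction hv using Submodule.span_induction with
    | mem y hy =>
      simp only [Set.mem_union, Set.mem_range] at hy
      rcases hy with ⟨k, rfl⟩ | ⟨i, rfl⟩
      · rw [hPZofA A hA hgZ hgW k, hDZ, add_zero, hcoef]
      · rw [hPW i, hDW, hcoef]
        rw [← add_smul]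
        have : -(1/4) * ((A:ℂ))⁻¹ + μ = 0 := by
          rw [hμdef]; field_simp; ring
        rw [this, zero_smul]
    | zero => simp
    | add x y hx hy ihx ihy =>
      rw [map_add, map_add, ihx, ihy, smul_add]; abel
    | smul a x hx ih =>
      rw [map_smul, map_smul, ih, smul_add, smul_comm a]
  · -- moreover: c = -(1/(4A))
    intro c A D hc hder h10 h01 hPc hA hgZ hgW
    have hDZ := keyD D hder h10 h01 ⟨0, hr⟩
    have h1 : P (Z ⟨0, hr⟩) = (c:ℂ) • Z ⟨0, hr⟩ := by
      rw [hPc _ (memZ _), hDZ, add_zero]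
    have h2 := hPZofA A hA hgZ hgW ⟨0, hr⟩
    have h3 := h1.symm.trans h2
    have h4 := congrArg (fun w => bas.repr w (Sum.inl (Sum.inl ⟨0, hr⟩))) h3
    simp only [hZ, map_smul, Finsupp.smul_apply, smul_eq_mul, Module.Basis.repr_self,
      Finsupp.single_apply, if_pos rfl, if_true, mul_one] at h4
    have hA0 : (A:ℝ) ≠ 0 := hA.ne'
    have h5 : ((c:ℝ):ℂ) = ((-(1/(4*A)) : ℝ) : ℂ) := by
      push_cast
      rw [h4]
      ring
    exact_mod_cast h5
end

section
/- The Bismut-Ricci form satisfies: ρ_B(Z_i, Z̄_j) = 0 for all i ≠ j; ρ_B(Z_{p_t}, Z̄_{p_t}) = −(3·√−1/4)·(1 + |C_t|²/(A_{p_t}B_{p_t} − |C_t|²)) for every t = 1,…,m; ρ_B(Z_i, Z̄_i) = −3·√−1/4 for every i ∉ {p_1,…,p_m}; ρ_B(W_i, W̄_j) = 0 for all i, j; ρ_B(Z_i, W̄_j) = 0 unless i = j = p_t for some t; and ρ_B(Z_{p_t}, W̄_{p_t}) = −√−1·(−3/16 − c_{p_t p_t}²/4 − √−1·c_{p_t p_t}/4)·B_{p_t}·C_t/(A_{p_t}B_{p_t}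 − |C_t|²) for every t = 1,…,m. -/
set_option maxHeartbeats 4000000

open Complex

/-- For the general left-invariant pluriclosed Hermitian metric `ω` on an
Oeljeklaus-Toma manifold of type `(s,s)`, the (1,1)-part of the Bismut-Ricci form is:
`ρ_B(Z_i, Z̄_j) = 0` for `i ≠ j`;
`ρ_B(Z_{p_t}, Z̄_{p_t}) = −(3√−1/4)(1 + |C_t|²/(A_{p_t}B_{p_t} − |C_t|²))`;
`ρ_B(Z_i, Z̄_i) = −3√−1/4` for `i ∉ {p_1,…,p_m}`; `ρ_B(W_i, W̄_j) = 0`;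
`ρ_B(Z_i, W̄_j) = 0` unless `i = j = p_t`; and
`ρ_B(Z_{p_t}, W̄_{p_t}) = −√−1·(−3/16 − c²/4 − √−1·c/4)·B_{p_t}C_t/(A_{p_t}B_{p_t} − |C_t|²)`. -/
theorem stmt_12
    (s : ℕ) (hs : 0 < s)
    (cmat : Fin s → Fin s → ℝ) (lam : Fin s → Fin s → ℂ)
    (hlamdef : ∀ k i, lam k i =
      if i = k then -(cmat k k : ℂ) / 2 - I / 4 else (-(cmat k i : ℂ) / 2))
    (L : Type*) [LieRing L] [LieAlgebra ℂ L]
    (bas : Module.Basis ((Fin s ⊕ Fin s) ⊕ (Fin s ⊕ Fin s)) ℂ L)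
    (Z Zb W Wb : Fin s → L)
    (hZ : ∀ k, Z k = bas (Sum.inl (Sum.inl k)))
    (hZb : ∀ k, Zb k = bas (Sum.inl (Sum.inr k)))
    (hW : ∀ i, W i = bas (Sum.inr (Sum.inl i)))
    (hWb : ∀ i, Wb i = bas (Sum.inr (Sum.inr i)))
    (hZZb : ∀ k l, ⁅Z k, Zb l⁆ = if k = l then (-(I / 2)) • (Z k + Zb k) else 0)
    (hZZ : ∀ k l, ⁅Z k, Z l⁆ = 0)
    (hZbZb : ∀ k l, ⁅Zb k, Zb l⁆ = 0)
    (hZW : ∀ k i, ⁅Z k, W i⁆ = (-(lam k i)) • W i)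
    (hZbWb : ∀ k i, ⁅Zb k, Wb i⁆ = (-(starRingEnd ℂ (lam k i))) • Wb i)
    (hZWb : ∀ k i, ⁅Z k, Wb i⁆ = (starRingEnd ℂ (lam k i)) • Wb i)
    (hZbW : ∀ k i, ⁅Zb k, W i⁆ = (lam k i) • W i)
    (hWW : ∀ i j, ⁅W i, W j⁆ = 0)
    (hWbWb : ∀ i j, ⁅Wb i, Wb j⁆ = 0)
    (hWWb : ∀ i j, ⁅W i, Wb j⁆ = 0)
    -- the distinguished indices `p_1, …, p_m`
    (m : ℕ) (p : Fin m → Fin s) (hpinj : Function.Injective p)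
    (hpj : ∀ (t : Fin m) (j : Fin s), j ≠ p t → lam j (p t) = 0)
    -- the coefficients of the metric
    (A B : Fin s → ℝ) (C : Fin m → ℂ)
    (hA : ∀ i, 0 < A i) (hB : ∀ i, 0 < B i)
    (hAB : ∀ t, 0 < A (p t) * B (p t) - ‖C t‖ ^ 2)
    -- the (1,0)- and (0,1)-projections
    (p10 p01 : L → L)
    (hp : ∀ v : L, p10 v ∈ Submodule.span ℂ (Set.range Z ∪ Set.range W) ∧
      p01 v ∈ Submodule.span ℂ (Set.range Zb ∪ Set.range Wb) ∧ p10 v + p01 v = v)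
    -- the complex structure `J`
    (Jmap : L → L) (hJmap : ∀ v, Jmap v = I • p10 v - I • p01 v)
    -- the left-invariant pluriclosed Hermitian metric `ω`
    (ω : L →ₗ[ℂ] L →ₗ[ℂ] ℂ)
    (hωalt : ∀ x : L, ω x x = 0)
    (hω10 : ∀ x ∈ Submodule.span ℂ (Set.range Z ∪ Set.range W),
      ∀ y ∈ Submodule.span ℂ (Set.range Z ∪ Set.range W), ω x y = 0)
    (hω01 : ∀ x ∈ Submodule.span ℂ (Set.range Zb ∪ Set.range Wb),
      ∀ y ∈ Submodule.span ℂ (Set.range Zb ∪ Set.range Wb), ω x y = 0)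
    (hωZZ : ∀ i j, ω (Z i) (Zb j) = if i = j then I * (A i : ℂ) else 0)
    (hωWW : ∀ i j, ω (W i) (Wb j) = if i = j then I * (B i : ℂ) else 0)
    (hωZWb0 : ∀ i j, (¬ ∃ t, i = p t ∧ j = p t) → ω (Z i) (Wb j) = 0)
    (hωZWbC : ∀ t, ω (Z (p t)) (Wb (p t)) = I * C t)
    (hωWZb0 : ∀ i j, (¬ ∃ t, i = p t ∧ j = p t) → ω (W i) (Zb j) = 0)
    (hωWZbC : ∀ t, ω (W (p t)) (Zb (p t)) = I * starRingEnd ℂ (C t))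
    -- the frame `{X_1,…,X_{2s}} = {Z_1,…,Z_s,W_1,…,W_s}` and its conjugate
    (Xf Xb : Fin s ⊕ Fin s → L)
    (hXfZ : ∀ k : Fin s, Xf (Sum.inl k) = Z k)
    (hXfW : ∀ i : Fin s, Xf (Sum.inr i) = W i)
    (hXbZ : ∀ k : Fin s, Xb (Sum.inl k) = Zb k)
    (hXbW : ∀ i : Fin s, Xb (Sum.inr i) = Wb i)
    -- the matrix `g_{a b̄}` of the metric and its inverse `(g^{b̄ a})`
    (g ginv : Fin s ⊕ Fin s → Fin s ⊕ Fin s → ℂ)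
    (hg : ∀ a b, ω (Xf a) (Xb b) = I * g a b)
    (hinv : ∀ a b, ∑ cc, g a cc * ginv cc b = if a = b then 1 else 0)
    -- the Bismut-Ricci form
    (ρB : L → L → ℂ)
    (hρ : ∀ X Y : L, ρB X Y =
      -(∑ a, ∑ b, (starRingEnd ℂ (ginv a b) * ω ⁅p10 ⁅X, Y⁆, Xf a⁆ (Xb b)
          + ginv a b * ω ⁅p01 ⁅X, Y⁆, Xb a⁆ (Xf b)))
      + I * ∑ a, ∑ b, starRingEnd ℂ (ginv a b) * ω ⁅X, Y⁆ (Jmap ⁅Xf a, Xb b⁆))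
    :
    (∀ i j, i ≠ j → ρB (Z i) (Zb j) = 0) ∧
    (∀ t : Fin m, ρB (Z (p t)) (Zb (p t)) =
      -(3 * I / 4) * (1 + ((‖C t‖ ^ 2 : ℝ) : ℂ) /
        ((A (p t) * B (p t) - ‖C t‖ ^ 2 : ℝ) : ℂ))) ∧
    (∀ i, (∀ t : Fin m, i ≠ p t) → ρB (Z i) (Zb i) = -(3 * I / 4)) ∧
    (∀ i j, ρB (W i) (Wb j) = 0) ∧
    (∀ i j, (¬ ∃ t, i = p t ∧ j = p t) → ρB (Z i) (Wb j) = 0) ∧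
    (∀ t : Fin m, ρB (Z (p t)) (Wb (p t)) =
      -I * (-(3 / 16) - (cmat (p t) (p t) : ℂ) ^ 2 / 4 - I * (cmat (p t) (p t) : ℂ) / 4) *
        (B (p t) : ℂ) * C t /
        ((A (p t) * B (p t) - ‖C t‖ ^ 2 : ℝ) : ℂ)) := by

  -- abbreviations
  have hI : (I:ℂ) ≠ 0 := I_ne_zero
  -- skew-symmetry of ω
  have hskew : ∀ x y : L, ω x y = -(ω y x) := by
    intro x y
    have h := hωalt (x + y)
    simp only [map_add, LinearMap.add_apply, hωalt, zero_add, add_zero] at h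
    linear_combination h
  -- memberships
  have hZmem : ∀ k, Z k ∈ Submodule.span ℂ (Set.range Z ∪ Set.range W) :=
    fun k => Submodule.subset_span (Or.inl ⟨k, rfl⟩)
  have hWmem : ∀ k, W k ∈ Submodule.span ℂ (Set.range Z ∪ Set.range W) :=
    fun k => Submodule.subset_span (Or.inr ⟨k, rfl⟩)
  have hZbmem : ∀ k, Zb k ∈ Submodule.span ℂ (Set.range Zb ∪ Set.range Wb) :=
    fun k => Submodule.subset_span (Or.inl ⟨k, rfl⟩)
  have hWbmem : ∀ k, Wb k ∈ Submodule.span ℂ (Set.range Zb ∪ Set.range Wb) :=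
    fun k => Submodule.subset_span (Or.inr ⟨k, rfl⟩)
  -- disjointness of the two spans
  have hdisj : Disjoint (Submodule.span ℂ (Set.range Z ∪ Set.range W))
      (Submodule.span ℂ (Set.range Zb ∪ Set.range Wb)) := by
    have h1 : Set.range Z ∪ Set.range W =
        ⇑bas '' ((Set.range fun k : Fin s => Sum.inl (Sum.inl k)) ∪
          (Set.range fun k : Fin s => Sum.inr (Sum.inl k))) := by
      rw [Set.image_union, ← Set.range_comp, ← Set.range_comp]
      congr 1
      · exact congrArg _ (funext hZ)
      · exact congrArg _ (funext hW)
    have h2 : Set.range Zb ∪ Set.range Wb =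
        ⇑bas '' ((Set.range fun k : Fin s => Sum.inl (Sum.inr k)) ∪
          (Set.range fun k : Fin s => Sum.inr (Sum.inr k))) := by
      rw [Set.image_union, ← Set.range_comp, ← Set.range_comp]
      congr 1
      · exact congrArg _ (funext hZb)
      · exact congrArg _ (funext hWb)
    rw [h1, h2]
    refine bas.linearIndependent.disjoint_span_image ?_
    rw [Set.disjoint_left]
    rintro x (⟨k, rfl⟩ | ⟨k, rfl⟩) (⟨l, h⟩ | ⟨l, h⟩) <;> simp at h
  -- unique decomposition
  have hdec : ∀ (v x y : L), x ∈ Submodule.span ℂ (Set.range Z ∪ Set.range W) →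
      y ∈ Submodule.span ℂ (Set.range Zb ∪ Set.range Wb) → x + y = v →
      p10 v = x ∧ p01 v = y := by
    intro v x y hx hy hxy
    obtain ⟨h1, h2, h3⟩ := hp v
    have key : p10 v - x = y - p01 v := by
      have h4 : p10 v + p01 v = x + y := by rw [h3, hxy]
      linear_combination (norm := module) h4
    have m1 : p10 v - x ∈ Submodule.span ℂ (Set.range Z ∪ Set.range W) :=
      sub_mem h1 hx
    have m2 : p10 v - x ∈ Submodule.span ℂ (Set.range Zb ∪ Set.range Wb) := by
      rw [key]; exact sub_mem hy h2
    have h0 : p10 v - x = 0 := by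
      have := hdisj.le_bot (Submodule.mem_inf.mpr ⟨m1, m2⟩)
      simpa using this
    have hx' : p10 v = x := by linear_combination (norm := module) h0
    refine ⟨hx', ?_⟩
    have h5 := h3.trans hxy.symm
    rw [hx'] at h5
    exact add_left_cancel h5

  -- extended coefficient function
  have hCCex : ∃ CC : Fin s → ℂ, (∀ t, CC (p t) = C t) ∧ (∀ i, (∀ t, i ≠ p t) → CC i = 0) := by
    refine ⟨fun i => if h : ∃ t, p t = i then C h.choose else 0, ?_, ?_⟩
    · intro t
      have hex : ∃ t', p t' = p t := ⟨t, rfl⟩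
      simp only [dif_pos hex]
      congr 1
      exact hpinj hex.choose_spec
    · intro i hi
      have hnex : ¬ ∃ t, p t = i := by rintro ⟨t, rfl⟩; exact hi t rfl
      simp only [dif_neg hnex]
  obtain ⟨CC, hCCp, hCC0⟩ := hCCex
  -- the determinant function
  obtain ⟨D, hDdef⟩ : ∃ D : Fin s → ℝ, D = fun i => A i * B i - Complex.normSq (CC i) :=
    ⟨_, rfl⟩
  have hDpos : ∀ i, 0 < D i := by
    intro i
    by_cases hex : ∃ t, p t = i
    · obtain ⟨t, rfl⟩ := hex
      have h1 := hAB t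
      have h2 : D (p t) = A (p t) * B (p t) - ‖C t‖ ^ 2 := by
        rw [hDdef]; simp only [hCCp t, ← Complex.sq_norm]
      rw [h2]; exact h1
    · have h0 : CC i = 0 := hCC0 i (fun t ht => hex ⟨t, ht.symm⟩)
      have h2 : D i = A i * B i := by rw [hDdef]; simp [h0]
      rw [h2]; exact mul_pos (hA i) (hB i)
  have hDne : ∀ i, ((D i : ℝ) : ℂ) ≠ 0 := fun i => Complex.ofReal_ne_zero.mpr (ne_of_gt (hDpos i))
  have hDC : ∀ i, ((D i : ℝ) : ℂ) = (A i : ℂ) * (B i : ℂ) - CC i * starRingEnd ℂ (CC i) := by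
    intro i
    rw [hDdef]; push_cast [Complex.mul_conj]; ring
  have hDt : ∀ t, ((A (p t) * B (p t) - ‖C t‖ ^ 2 : ℝ) : ℂ) = ((D (p t) : ℝ) : ℂ) := by
    intro t
    congr 1
    rw [hDdef]; simp only [hCCp t, ← Complex.sq_norm]
  -- full ω table
  have oZZ : ∀ i j, ω (Z i) (Z j) = 0 := fun i j => hω10 _ (hZmem i) _ (hZmem j)
  have oZW : ∀ i j, ω (Z i) (W j) = 0 := fun i j => hω10 _ (hZmem i) _ (hWmem j)
  have oWZ : ∀ i j, ω (W i) (Z j) = 0 := fun i j => hω10 _ (hWmem i) _ (hZmem j)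
  have oWWf : ∀ i j, ω (W i) (W j) = 0 := fun i j => hω10 _ (hWmem i) _ (hWmem j)
  have oZbZb : ∀ i j, ω (Zb i) (Zb j) = 0 := fun i j => hω01 _ (hZbmem i) _ (hZbmem j)
  have oZbWb : ∀ i j, ω (Zb i) (Wb j) = 0 := fun i j => hω01 _ (hZbmem i) _ (hWbmem j)
  have oWbZb : ∀ i j, ω (Wb i) (Zb j) = 0 := fun i j => hω01 _ (hWbmem i) _ (hZbmem j)
  have oWbWb : ∀ i j, ω (Wb i) (Wb j) = 0 := fun i j => hω01 _ (hWbmem i) _ (hWbmem j)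
  have oZWb : ∀ i j, ω (Z i) (Wb j) = if i = j then I * CC i else 0 := by
    intro i j
    by_cases h : ∃ t, i = p t ∧ j = p t
    · obtain ⟨t, rfl, rfl⟩ := h
      rw [hωZWbC t, if_pos rfl, hCCp]
    · rw [hωZWb0 i j h]
      by_cases hij : i = j
      · subst hij
        have hnp : ∀ t, i ≠ p t := fun t ht => h ⟨t, ht, ht⟩
        rw [if_pos rfl, hCC0 i hnp, mul_zero]
      · rw [if_neg hij]
  have oWZb : ∀ i j, ω (W i) (Zb j) = if i = j then I * starRingEnd ℂ (CC i) else 0 := by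
    intro i j
    by_cases h : ∃ t, i = p t ∧ j = p t
    · obtain ⟨t, rfl, rfl⟩ := h
      rw [hωWZbC t, if_pos rfl, hCCp]
    · rw [hωWZb0 i j h]
      by_cases hij : i = j
      · subst hij
        have hnp : ∀ t, i ≠ p t := fun t ht => h ⟨t, ht, ht⟩
        rw [if_pos rfl, hCC0 i hnp, map_zero, mul_zero]
      · rw [if_neg hij]
  have oZbZ : ∀ j i, ω (Zb j) (Z i) = -(if i = j then I * (A i : ℂ) else 0) := by
    intro j i; rw [hskew, hωZZ]
  have oWbW : ∀ j i, ω (Wb j) (W i) = -(if i = j then I * (B i : ℂ) else 0) := by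
    intro j i; rw [hskew, hωWW]
  have oWbZ : ∀ j i, ω (Wb j) (Z i) = -(if i = j then I * CC i else 0) := by
    intro j i; rw [hskew, oZWb]
  have oZbW : ∀ j i, ω (Zb j) (W i) = -(if i = j then I * starRingEnd ℂ (CC i) else 0) := by
    intro j i; rw [hskew, oWZb]
  -- values of g
  have gLL : ∀ i j, g (Sum.inl i) (Sum.inl j) = if i = j then (A i : ℂ) else 0 := by
    intro i j
    have h := hg (Sum.inl i) (Sum.inl j)
    rw [hXfZ, hXbZ, hωZZ] at h
    apply mul_left_cancel₀ hI
    rw [← h]; split <;> simp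
  have gLR : ∀ i j, g (Sum.inl i) (Sum.inr j) = if i = j then CC i else 0 := by
    intro i j
    have h := hg (Sum.inl i) (Sum.inr j)
    rw [hXfZ, hXbW, oZWb] at h
    apply mul_left_cancel₀ hI
    rw [← h]; split <;> simp
  have gRL : ∀ i j, g (Sum.inr i) (Sum.inl j) = if i = j then starRingEnd ℂ (CC i) else 0 := by
    intro i j
    have h := hg (Sum.inr i) (Sum.inl j)
    rw [hXfW, hXbZ, oWZb] at h
    apply mul_left_cancel₀ hI
    rw [← h]; split <;> simp
  have gRR : ∀ i j, g (Sum.inr i) (Sum.inr j) = if i = j then (B i : ℂ) else 0 := by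
    intro i j
    have h := hg (Sum.inr i) (Sum.inr j)
    rw [hXfW, hXbW, hωWW] at h
    apply mul_left_cancel₀ hI
    rw [← h]; split <;> simp
  -- the two linear equations per column
  have hcol1 : ∀ (i : Fin s) (b : Fin s ⊕ Fin s),
      (A i : ℂ) * ginv (Sum.inl i) b + CC i * ginv (Sum.inr i) b
        = (if Sum.inl i = b then 1 else 0) := by
    intro i b
    have h := hinv (Sum.inl i) b
    rw [Fintype.sum_sum_type] at h
    simp only [gLL, gLR, ite_mul, zero_mul, Finset.sum_ite_eq, Finset.mem_univ, if_true] at h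
    exact h
  have hcol2 : ∀ (i : Fin s) (b : Fin s ⊕ Fin s),
      starRingEnd ℂ (CC i) * ginv (Sum.inl i) b + (B i : ℂ) * ginv (Sum.inr i) b
        = (if Sum.inr i = b then 1 else 0) := by
    intro i b
    have h := hinv (Sum.inr i) b
    rw [Fintype.sum_sum_type] at h
    simp only [gRL, gRR, ite_mul, zero_mul, Finset.sum_ite_eq, Finset.mem_univ, if_true] at h
    exact h
  -- explicit inverse
  have hginvL : ∀ (i : Fin s) (b : Fin s ⊕ Fin s), ginv (Sum.inl i) b =
      ((B i : ℂ) * (if Sum.inl i = b then 1 else 0) - CC i * (if Sum.inr i = b then 1 else 0))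
        / ((D i : ℝ) : ℂ) := by
    intro i b
    rw [eq_div_iff (hDne i)]
    linear_combination (B i : ℂ) * hcol1 i b - CC i * hcol2 i b + ginv (Sum.inl i) b * hDC i
  have hginvR : ∀ (i : Fin s) (b : Fin s ⊕ Fin s), ginv (Sum.inr i) b =
      ((A i : ℂ) * (if Sum.inr i = b then 1 else 0)
        - starRingEnd ℂ (CC i) * (if Sum.inl i = b then 1 else 0)) / ((D i : ℝ) : ℂ) := by
    intro i b
    rw [eq_div_iff (hDne i)]
    linear_combination (A i : ℂ) * hcol2 i b - starRingEnd ℂ (CC i) * hcol1 i b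
      + ginv (Sum.inr i) b * hDC i
  have giLL : ∀ i j, ginv (Sum.inl i) (Sum.inl j) = if i = j then (B i : ℂ) / ((D i : ℝ) : ℂ) else 0 := by
    intro i j; rw [hginvL]; by_cases h : i = j <;> simp [h]
  have giLR : ∀ i j, ginv (Sum.inl i) (Sum.inr j) = if i = j then -(CC i) / ((D i : ℝ) : ℂ) else 0 := by
    intro i j; rw [hginvL]; by_cases h : i = j <;> simp [h, neg_div]
  have giRL : ∀ i j, ginv (Sum.inr i) (Sum.inl j) =
      if i = j then -(starRingEnd ℂ (CC i)) / ((D i : ℝ) : ℂ) else 0 := by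
    intro i j; rw [hginvR]; by_cases h : i = j <;> simp [h, neg_div]
  have giRR : ∀ i j, ginv (Sum.inr i) (Sum.inr j) = if i = j then (A i : ℂ) / ((D i : ℝ) : ℂ) else 0 := by
    intro i j; rw [hginvR]; by_cases h : i = j <;> simp [h]
  -- conjugated inverse entries
  have giLLc : ∀ i j, starRingEnd ℂ (ginv (Sum.inl i) (Sum.inl j)) =
      if i = j then (B i : ℂ) / ((D i : ℝ) : ℂ) else 0 := by
    intro i j; rw [giLL]; split <;> simp [map_div₀, Complex.conj_ofReal]
  have giLRc : ∀ i j, starRingEnd ℂ (ginv (Sum.inl i) (Sum.inr j)) =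
      if i = j then -(starRingEnd ℂ (CC i)) / ((D i : ℝ) : ℂ) else 0 := by
    intro i j; rw [giLR]; split <;> simp [map_div₀, Complex.conj_ofReal]
  have giRLc : ∀ i j, starRingEnd ℂ (ginv (Sum.inr i) (Sum.inl j)) =
      if i = j then -(CC i) / ((D i : ℝ) : ℂ) else 0 := by
    intro i j; rw [giRL]; split <;> simp [map_div₀, Complex.conj_ofReal]
  have giRRc : ∀ i j, starRingEnd ℂ (ginv (Sum.inr i) (Sum.inr j)) =
      if i = j then (A i : ℂ) / ((D i : ℝ) : ℂ) else 0 := by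
    intro i j; rw [giRR]; split <;> simp [map_div₀, Complex.conj_ofReal]
  -- projections
  have p10_0 : p10 (0 : L) = 0 := (hdec 0 0 0 (zero_mem _) (zero_mem _) (by simp)).1
  have p01_0 : p01 (0 : L) = 0 := (hdec 0 0 0 (zero_mem _) (zero_mem _) (by simp)).2
  have hd10 : ∀ v ∈ Submodule.span ℂ (Set.range Z ∪ Set.range W), p10 v = v ∧ p01 v = 0 :=
    fun v hv => hdec v v 0 hv (zero_mem _) (add_zero v)
  have hd01 : ∀ v ∈ Submodule.span ℂ (Set.range Zb ∪ Set.range Wb), p10 v = 0 ∧ p01 v = v :=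
    fun v hv => hdec v 0 v (zero_mem _) hv (zero_add v)
  have hdZZ : ∀ i : Fin s, p10 ⁅Z i, Zb i⁆ = (-(I/2)) • Z i ∧ p01 ⁅Z i, Zb i⁆ = (-(I/2)) • Zb i := by
    intro i
    apply hdec
    · exact Submodule.smul_mem _ _ (hZmem i)
    · exact Submodule.smul_mem _ _ (hZbmem i)
    · rw [hZZb, if_pos rfl, smul_add]
  -- J values
  have hJ0 : Jmap 0 = 0 := by rw [hJmap, p10_0, p01_0]; simp
  have hJZZb : ∀ k l, Jmap ⁅Z k, Zb l⁆ =
      if k = l then (1/2 : ℂ) • Z k - (1/2 : ℂ) • Zb k else 0 := by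
    intro k l
    by_cases h : k = l
    · subst h
      rw [if_pos rfl, hJmap, (hdZZ k).1, (hdZZ k).2, smul_smul, smul_smul]
      have hs2 : I * -(I/2) = (1/2 : ℂ) := by linear_combination (-1/2 : ℂ) * Complex.I_sq
      rw [hs2]
    · rw [hZZb, if_neg h, if_neg h, hJ0]
  have hJZWb : ∀ k i, Jmap ⁅Z k, Wb i⁆ = (-(I * starRingEnd ℂ (lam k i))) • Wb i := by
    intro k i
    have hmem : (starRingEnd ℂ (lam k i)) • Wb i ∈ Submodule.span ℂ (Set.range Zb ∪ Set.range Wb) :=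
      Submodule.smul_mem _ _ (hWbmem i)
    rw [hZWb, hJmap, (hd01 _ hmem).1, (hd01 _ hmem).2, smul_smul, smul_zero]
    module
  have hbrWZb : ∀ (i k : Fin s), ⁅W i, Zb k⁆ = (-(lam k i)) • W i := by
    intro i k
    rw [← lie_skew, hZbW, neg_smul]
  have hJWZb : ∀ i k, Jmap ⁅W i, Zb k⁆ = (-(I * lam k i)) • W i := by
    intro i k
    have hmem : (-(lam k i)) • W i ∈ Submodule.span ℂ (Set.range Z ∪ Set.range W) :=
      Submodule.smul_mem _ _ (hWmem i)
    rw [hbrWZb, hJmap, (hd10 _ hmem).1, (hd10 _ hmem).2, smul_smul, smul_zero]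
    module
  have hJWWb : ∀ i j, Jmap ⁅W i, Wb j⁆ = 0 := by
    intro i j; rw [hWWb, hJ0]

  have hbrWbZb : ∀ (j k : Fin s), ⁅Wb j, Zb k⁆ = (starRingEnd ℂ (lam k j)) • Wb j := by
    intro j k
    rw [← lie_skew, hZbWb, neg_smul, neg_neg]
  refine ⟨?_, ?_, ?_, ?_, ?_, ?_⟩
  · -- ρB (Z i) (Zb j) = 0 for i ≠ j
    intro i j hij
    rw [hρ, hZZb i j, if_neg hij]
    simp [p10_0, p01_0, hJ0]
  · -- ρB (Z (p t)) (Zb (p t))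
    intro t
    rw [hρ, (hdZZ (p t)).1, (hdZZ (p t)).2, hZZb, if_pos rfl]
    simp only [Fintype.sum_sum_type, hXfZ, hXfW, hXbZ, hXbW, hJZZb, hJZWb, hJWZb, hJWWb]
    simp only [smul_lie, zero_lie, lie_zero,
      hZZ, hZbZb, hZW, hZbWb, hZWb, hZbW, hWWb, hWW, hWbWb, hbrWbZb, hbrWZb,
      map_smul, map_add, map_sub, map_zero, LinearMap.smul_apply, LinearMap.add_apply,
      LinearMap.sub_apply, LinearMap.zero_apply, smul_eq_mul,
      oZZ, oZW, oWZ, oWWf, oZbZb, oZbWb, oWbZb, oWbWb, oZWb, oWZb, hωZZ, hωWW,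
      oZbZ, oWbW, oWbZ, oZbW,
      giLL, giLR, giRL, giRR, apply_ite (starRingEnd ℂ), map_div₀, Complex.conj_ofReal,
      map_neg, Complex.conj_conj, Complex.conj_I,
      mul_ite, ite_mul, mul_zero, zero_mul, mul_neg, neg_mul, mul_one, one_mul,
      neg_zero, add_zero, zero_add, neg_neg, smul_zero, zero_smul,
      Finset.sum_const_zero, Finset.sum_ite_eq, Finset.sum_ite_eq', Finset.mem_univ,
      if_true, map_zero, zero_div, div_zero, Finset.sum_neg_distrib, sub_zero,
      Finset.sum_ite_irrel, Finset.sum_add_distrib]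
    rw [← Finset.sum_neg_distrib, ← Finset.sum_neg_distrib, ← Finset.sum_add_distrib,
      ← Finset.sum_add_distrib, ← Finset.sum_add_distrib]
    have hkey : ∀ x : Fin s,
        -CC x / ((D x : ℝ) : ℂ) * (Complex.I / 2 * (lam (p t) x * (Complex.I * starRingEnd ℂ (CC x)))) +
          -(-(starRingEnd ℂ) (CC x) / ((D x : ℝ) : ℂ) *
            (Complex.I / 2 * ((starRingEnd ℂ) (lam (p t) x) * (Complex.I * CC x)))) +
          (((A x : ℝ) : ℂ) / ((D x : ℝ) : ℂ) * (Complex.I / 2 * (lam (p t) x * (Complex.I * ((B x : ℝ) : ℂ)))) +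
            -(((A x : ℝ) : ℂ) / ((D x : ℝ) : ℂ) *
              (Complex.I / 2 * ((starRingEnd ℂ) (lam (p t) x) * (Complex.I * ((B x : ℝ) : ℂ)))))) =
        if x = p t then Complex.I / 4 else 0 := by
      intro x
      by_cases hx : x = p t
      · subst hx
        rw [if_pos rfl, hlamdef, if_pos rfl]
        have hD' := hDne (p t)
        rw [hDC (p t)] at hD' ⊢
        simp only [map_sub, map_div₀, map_neg, Complex.conj_ofReal, Complex.conj_I, map_ofNat,
          map_zero]
        field_simp
        ring_nf
        rw [Complex.I_sq]
        ring
      · rw [if_neg hx, hlamdef, if_neg hx]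
        simp only [map_div₀, map_neg, Complex.conj_ofReal, map_ofNat]
        ring
    rw [Finset.sum_congr rfl (fun x _ => hkey x), Finset.sum_ite_eq',
      if_pos (Finset.mem_univ (p t))]
    simp only [mul_add, mul_sub, mul_zero, zero_sub, mul_neg, mul_ite, ite_mul, zero_mul,
      Finset.sum_neg_distrib, Finset.sum_add_distrib, Finset.sum_sub_distrib,
      Finset.sum_ite_eq, Finset.sum_ite_eq', Finset.mem_univ, if_true, neg_neg, neg_zero,
      add_zero, zero_add]
    rw [hDt t]
    simp only [hCCp, hlamdef, eq_self_iff_true, if_true]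
    simp only [map_sub, map_div₀, map_neg, Complex.conj_ofReal, Complex.conj_I, map_ofNat]
    have hDC' : ((D (p t) : ℝ) : ℂ) = (A (p t) : ℂ) * (B (p t) : ℂ)
        - C t * starRingEnd ℂ (C t) := by rw [hDC (p t), hCCp t]
    have habs : ((‖C t‖ ^ 2 : ℝ) : ℂ) = C t * starRingEnd ℂ (C t) := by
      rw [Complex.sq_norm]; exact (Complex.mul_conj _).symm
    rw [habs]
    have hD' := hDne (p t)
    clear * - hD' hDC' habs
    have h3 : (Complex.I:ℂ)^3 = -Complex.I := by rw [pow_succ, Complex.I_sq]; ring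
    have h5 : (Complex.I:ℂ)^5 = Complex.I := by
      rw [show (5:ℕ)=2+3 from rfl, pow_add, Complex.I_sq, h3]; ring
    field_simp
    ring_nf
    have h4 : (Complex.I:ℂ)^4 = 1 := by rw [show (4:ℕ)=2+2 from rfl, pow_add, Complex.I_sq]; ring
    rw [Complex.I_sq, h4]
    linear_combination (8:ℂ) * hDC'
  · -- ρB (Z i) (Zb i) = -(3I/4) for i outside range p
    intro i hni
    have hCCi : CC i = 0 := hCC0 i hni
    rw [hρ, (hdZZ i).1, (hdZZ i).2, hZZb, if_pos rfl]
    simp only [Fintype.sum_sum_type, hXfZ, hXfW, hXbZ, hXbW, hJZZb, hJZWb, hJWZb, hJWWb]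
    simp only [smul_lie, zero_lie, lie_zero,
      hZZ, hZbZb, hZW, hZbWb, hZWb, hZbW, hWWb, hWW, hWbWb, hbrWbZb, hbrWZb,
      map_smul, map_add, map_sub, map_zero, LinearMap.smul_apply, LinearMap.add_apply,
      LinearMap.sub_apply, LinearMap.zero_apply, smul_eq_mul,
      oZZ, oZW, oWZ, oWWf, oZbZb, oZbWb, oWbZb, oWbWb, oZWb, oWZb, hωZZ, hωWW,
      oZbZ, oWbW, oWbZ, oZbW,
      giLL, giLR, giRL, giRR, apply_ite (starRingEnd ℂ), map_div₀, Complex.conj_ofReal,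
      map_neg, Complex.conj_conj, Complex.conj_I,
      mul_ite, ite_mul, mul_zero, zero_mul, mul_neg, neg_mul, mul_one, one_mul,
      neg_zero, add_zero, zero_add, neg_neg, smul_zero, zero_smul,
      Finset.sum_const_zero, Finset.sum_ite_eq, Finset.sum_ite_eq', Finset.mem_univ,
      if_true, map_zero, zero_div, div_zero, Finset.sum_neg_distrib, sub_zero,
      Finset.sum_ite_irrel, Finset.sum_add_distrib, hCCi]
    rw [← Finset.sum_neg_distrib, ← Finset.sum_neg_distrib, ← Finset.sum_add_distrib,
      ← Finset.sum_add_distrib, ← Finset.sum_add_distrib]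
    have hkey : ∀ x : Fin s,
        -CC x / ((D x : ℝ) : ℂ) * (Complex.I / 2 * (lam i x * (Complex.I * starRingEnd ℂ (CC x)))) +
          -(-(starRingEnd ℂ) (CC x) / ((D x : ℝ) : ℂ) *
            (Complex.I / 2 * ((starRingEnd ℂ) (lam i x) * (Complex.I * CC x)))) +
          (((A x : ℝ) : ℂ) / ((D x : ℝ) : ℂ) * (Complex.I / 2 * (lam i x * (Complex.I * ((B x : ℝ) : ℂ)))) +
            -(((A x : ℝ) : ℂ) / ((D x : ℝ) : ℂ) *
              (Complex.I / 2 * ((starRingEnd ℂ) (lam i x) * (Complex.I * ((B x : ℝ) : ℂ)))))) =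
        if x = i then Complex.I / 4 else 0 := by
      intro x
      by_cases hx : x = i
      · subst hx
        rw [if_pos rfl, hlamdef, if_pos rfl, hCCi]
        have hDi : ((D x : ℝ) : ℂ) = (A x : ℂ) * (B x : ℂ) := by
          rw [hDC x, hCCi]; ring
        rw [hDi]
        have hAx : ((A x : ℝ) : ℂ) ≠ 0 := Complex.ofReal_ne_zero.mpr (ne_of_gt (hA x))
        have hBx : ((B x : ℝ) : ℂ) ≠ 0 := Complex.ofReal_ne_zero.mpr (ne_of_gt (hB x))
        simp only [map_sub, map_div₀, map_neg, Complex.conj_ofReal, Complex.conj_I, map_ofNat,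
          map_zero]
        field_simp
        ring_nf
        rw [Complex.I_sq]
        ring
      · rw [if_neg hx, hlamdef, if_neg hx]
        simp only [map_div₀, map_neg, Complex.conj_ofReal, map_ofNat]
        ring
    rw [Finset.sum_congr rfl (fun x _ => hkey x), Finset.sum_ite_eq', if_pos (Finset.mem_univ i)]
    -- now the J part
    simp only [mul_add, mul_sub, mul_zero, zero_sub, mul_neg, mul_ite, ite_mul, zero_mul,
      Finset.sum_neg_distrib, Finset.sum_add_distrib, Finset.sum_sub_distrib,
      Finset.sum_ite_eq, Finset.sum_ite_eq', Finset.mem_univ, if_true, neg_neg, neg_zero,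
      add_zero, zero_add]
    have hDi : ((D i : ℝ) : ℂ) = (A i : ℂ) * (B i : ℂ) := by rw [hDC i, hCCi]; ring
    rw [hDi]
    have hAx : ((A i : ℝ) : ℂ) ≠ 0 := Complex.ofReal_ne_zero.mpr (ne_of_gt (hA i))
    have hBx : ((B i : ℝ) : ℂ) ≠ 0 := Complex.ofReal_ne_zero.mpr (ne_of_gt (hB i))
    clear * - hAx hBx
    have h2 : (Complex.I:ℂ)^2 = -1 := Complex.I_sq
    have h3 : (Complex.I:ℂ)^3 = -Complex.I := by rw [pow_succ, h2]; ring
    have h4 : (Complex.I:ℂ)^4 = 1 := by rw [show (4:ℕ)=2+2 from rfl, pow_add, h2]; ring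
    have h5 : (Complex.I:ℂ)^5 = Complex.I := by rw [show (5:ℕ)=2+3 from rfl, pow_add, h2, h3]; ring
    field_simp
    ring_nf
    simp only [h2, h3, h4, h5]
    ring_nf
  · -- ρB (W i) (Wb j) = 0
    intro i j
    rw [hρ, hWWb i j]
    simp [p10_0, p01_0, hJ0]
  · -- ρB (Z i) (Wb j) = 0 unless i = j = p t
    intro i j hno
    by_cases hex : ∃ t, j = p t
    · obtain ⟨t, rfl⟩ := hex
      have hij : i ≠ p t := fun h => hno ⟨t, h, rfl⟩
      have h0 : lam i (p t) = 0 := hpj t i hij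
      rw [hρ, hZWb, h0, map_zero, zero_smul]
      simp [p10_0, p01_0, hJ0]
    · have hCCj : CC j = 0 := hCC0 j (fun t ht => hex ⟨t, ht⟩)
      have hm : (starRingEnd ℂ (lam i j)) • Wb j ∈
          Submodule.span ℂ (Set.range Zb ∪ Set.range Wb) :=
        Submodule.smul_mem _ _ (hWbmem j)
      rw [hρ]
      rw [show p10 ⁅Z i, Wb j⁆ = 0 by rw [hZWb]; exact (hd01 _ hm).1,
          show p01 ⁅Z i, Wb j⁆ = (starRingEnd ℂ (lam i j)) • Wb j by
            rw [hZWb]; exact (hd01 _ hm).2,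
          hZWb]
      simp only [Fintype.sum_sum_type, hXfZ, hXfW, hXbZ, hXbW, hJZZb, hJZWb, hJWZb, hJWWb]
      simp only [smul_lie, zero_lie, lie_zero,
        hZZ, hZbZb, hZW, hZbWb, hZWb, hZbW, hWWb, hWW, hWbWb, hbrWbZb, hbrWZb,
        map_smul, map_add, map_sub, map_zero, LinearMap.smul_apply, LinearMap.add_apply,
        LinearMap.sub_apply, LinearMap.zero_apply, smul_eq_mul,
        oZZ, oZW, oWZ, oWWf, oZbZb, oZbWb, oWbZb, oWbWb, oZWb, oWZb, hωZZ, hωWW,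
        oZbZ, oWbW, oWbZ, oZbW,
        giLL, giLR, giRL, giRR, apply_ite (starRingEnd ℂ), map_div₀, Complex.conj_ofReal,
        map_neg, Complex.conj_conj, Complex.conj_I,
        mul_ite, ite_mul, mul_zero, zero_mul, mul_neg, neg_mul, mul_one, one_mul,
        neg_zero, add_zero, zero_add, neg_neg, smul_zero, zero_smul,
        Finset.sum_const_zero, Finset.sum_ite_eq, Finset.sum_ite_eq', Finset.mem_univ,
        if_true, hCCj, map_zero, zero_div, div_zero]
      simp [hCCj]
  · -- ρB (Z (p t)) (Wb (p t))
    intro t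
    have hm : (starRingEnd ℂ (lam (p t) (p t))) • Wb (p t) ∈
        Submodule.span ℂ (Set.range Zb ∪ Set.range Wb) :=
      Submodule.smul_mem _ _ (hWbmem _)
    rw [hρ]
    rw [show p10 ⁅Z (p t), Wb (p t)⁆ = 0 by rw [hZWb]; exact (hd01 _ hm).1,
        show p01 ⁅Z (p t), Wb (p t)⁆ = (starRingEnd ℂ (lam (p t) (p t))) • Wb (p t) by
          rw [hZWb]; exact (hd01 _ hm).2,
        hZWb]
    simp only [Fintype.sum_sum_type, hXfZ, hXfW, hXbZ, hXbW, hJZZb, hJZWb, hJWZb, hJWWb]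
    simp only [smul_lie, zero_lie, lie_zero,
      hZZ, hZbZb, hZW, hZbWb, hZWb, hZbW, hWWb, hWW, hWbWb, hbrWbZb, hbrWZb,
      map_smul, map_add, map_sub, map_zero, LinearMap.smul_apply, LinearMap.add_apply,
      LinearMap.sub_apply, LinearMap.zero_apply, smul_eq_mul,
      oZZ, oZW, oWZ, oWWf, oZbZb, oZbWb, oWbZb, oWbWb, oZWb, oWZb, hωZZ, hωWW,
      oZbZ, oWbW, oWbZ, oZbW,
      giLL, giLR, giRL, giRR, apply_ite (starRingEnd ℂ), map_div₀, Complex.conj_ofReal,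
      map_neg, Complex.conj_conj, Complex.conj_I,
      mul_ite, ite_mul, mul_zero, zero_mul, mul_neg, neg_mul, mul_one, one_mul,
      neg_zero, add_zero, zero_add, neg_neg, smul_zero, zero_smul,
      Finset.sum_const_zero, Finset.sum_ite_eq, Finset.sum_ite_eq', Finset.mem_univ,
      if_true, map_zero, zero_div, div_zero, Finset.sum_neg_distrib, sub_zero]
    rw [hDt t]
    simp only [hCCp, hlamdef, if_pos rfl, map_sub, map_div₀, map_neg, Complex.conj_ofReal,
      Complex.conj_I, map_ofNat]
    simp only [if_true, Finset.sum_ite_irrel, Finset.sum_neg_distrib, Finset.sum_add_distrib,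
      Finset.sum_const_zero, Finset.sum_ite_eq, Finset.sum_ite_eq', Finset.mem_univ,
      if_pos rfl, neg_zero, add_zero, zero_add, hCCp]
    simp only [map_sub, map_div₀, map_neg, Complex.conj_ofReal, Complex.conj_I, map_ofNat]
    have hD' := hDne (p t)
    clear * - hD'
    have h2 : (Complex.I:ℂ)^2 = -1 := Complex.I_sq
    have h3 : (Complex.I:ℂ)^3 = -Complex.I := by rw [pow_succ, h2]; ring
    have h4 : (Complex.I:ℂ)^4 = 1 := by rw [show (4:ℕ)=2+2 from rfl, pow_add, h2]; ring
    have h5 : (Complex.I:ℂ)^5 = Complex.I := by rw [show (5:ℕ)=2+3 from rfl, pow_add, h2, h3]; ring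
    field_simp
    ring_nf
    simp only [h2, h3, h4, h5]
    ring_nf
end
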